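/- arXiv:1408.5559 — 13 statements merged into one kernel-verified Lean document; each statement's English description precedes it below -/
import Mathlib

section
/- For any solution x of the EigenAnt dynamics with positive initial conditions, every component stays positive for all time; more precisely, for every i = 1,…,n and every t ≥ 0 one has x_i(t) ≥ x_i(0) e^{−αt} > 0. In particular S(t) := Σ_{j=1}^n x_j(t) > 0 for all t ≥ 0. -/
open Filter MeasureTheory Set Real

theorem stmt0
    (n : ℕ) (hn : 0 < n) (α β : ℝ) (hα : 0 < α) (hβ : 0 < β)
    (d : Fin n → ℝ) (hd : ∀ i j : Fin n, i ≤ j → d j ≤ d i) (hdpos : ∀ i, 0 < d i)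
    (x : ℝ → Fin n → ℝ)
    (hS : ∀ t : ℝ, 0 ≤ t → (∑ j, x t j) ≠ 0)
    (hode : ∀ (i : Fin n) (t : ℝ), 0 ≤ t →
      HasDerivAt (fun s => x s i) ((-α + β * d i / (∑ j, x t j)) * x t i) t)
    (hx0 : ∀ i, 0 < x 0 i)
    :
    (∀ (i : Fin n) (t : ℝ), 0 ≤ t →
        x 0 i * Real.exp (-α * t) ≤ x t i ∧ 0 < x 0 i * Real.exp (-α * t)) ∧
    (∀ t : ℝ, 0 ≤ t → 0 < ∑ j, x t j) := by
  have : Nonempty (Fin n) := ⟨⟨0, hn⟩⟩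
  set S : ℝ → ℝ := fun t => ∑ j, x t j with hSdef
  have hxc : ∀ (i : Fin n) (t : ℝ), 0 ≤ t → ContinuousAt (fun s => x s i) t :=
    fun i t ht => (hode i t ht).continuousAt
  have hSc : ∀ t : ℝ, 0 ≤ t → ContinuousAt S t := by
    intro t ht
    have : HasDerivAt S (∑ j, (-α + β * d j / (∑ k, x t k)) * x t j) t :=
      HasDerivAt.fun_sum (fun j _ => hode j t ht)
    exact this.continuousAt
  set Sm : ℝ → ℝ := fun s => S (max s 0) with hSmdef
  have hSm_ne : ∀ s, Sm s ≠ 0 := fun s => hS _ (le_max_right _ _)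
  have hSm_cont : Continuous Sm := by
    rw [continuous_iff_continuousAt]
    intro s
    have hm : ContinuousAt (fun u : ℝ => max u 0) s :=
      (continuous_id.max continuous_const).continuousAt
    show ContinuousAt (S ∘ fun u : ℝ => max u 0) s
    exact ContinuousAt.comp (f := fun u : ℝ => max u 0) (x := s)
      (hSc _ (le_max_right s 0)) hm
  set h : Fin n → ℝ → ℝ := fun i s => -α + β * d i / Sm s with hhdef
  have hcont : ∀ i, Continuous (h i) :=
    fun i => continuous_const.add (continuous_const.div hSm_cont hSm_ne)
  set H : Fin n → ℝ → ℝ := fun i t => ∫ s in (0:ℝ)..t, h i s with hHdef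
  have hH : ∀ i t, HasDerivAt (H i) (h i t) t :=
    fun i t => ((hcont i).integral_hasStrictDerivAt 0 t).hasDerivAt
  have key : ∀ (i : Fin n) (t : ℝ), 0 ≤ t → x t i = x 0 i * Real.exp (H i t) := by
    intro i T hT
    have hconst := constant_of_has_deriv_right_zero
      (f := fun s => x s i * Real.exp (-(H i s))) (a := 0) (b := T)
      (by
        intro s hs
        have hHc : Continuous (H i) :=
          continuous_iff_continuousAt.mpr (fun u => (hH i u).continuousAt)
        exact ((hxc i s hs.1).mul
          (Real.continuous_exp.comp hHc.neg).continuousAt).continuousWithinAt)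
      (by
        intro s hs
        have hx' := hode i s hs.1
        have hmax : max s 0 = s := max_eq_left hs.1
        have hcoef : (-α + β * d i / (∑ j, x s j)) = h i s := by
          simp only [hhdef, hSmdef, hSdef, hmax]
        rw [hcoef] at hx'
        have hE : HasDerivAt (fun u => Real.exp (-(H i u)))
            (Real.exp (-(H i s)) * (-(h i s))) s := ((hH i s).neg).exp
        have hmul := hx'.mul hE
        have : h i s * x s i * Real.exp (-(H i s)) +
            x s i * (Real.exp (-(H i s)) * -(h i s)) = 0 := by ring
        rw [this] at hmul
        exact hmul.hasDerivWithinAt)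
    have hend : x T i * Real.exp (-(H i T)) = x 0 i * Real.exp (-(H i 0)) :=
      hconst T ⟨hT, le_refl T⟩
    have hH0 : H i 0 = 0 := intervalIntegral.integral_same
    rw [hH0] at hend
    simp only [neg_zero, Real.exp_zero, mul_one] at hend
    have := congrArg (fun y => y * Real.exp (H i T)) hend
    rw [mul_assoc, ← Real.exp_add, neg_add_cancel, Real.exp_zero, mul_one] at this
    exact this
  have pos : ∀ (i : Fin n) (t : ℝ), 0 ≤ t → 0 < x t i := by
    intro i t ht
    rw [key i t ht]
    exact mul_pos (hx0 i) (Real.exp_pos _)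
  have Spos : ∀ t : ℝ, 0 ≤ t → 0 < S t := by
    intro t ht
    exact Finset.sum_pos (fun j _ => pos j t ht) Finset.univ_nonempty
  have hbound : ∀ (i : Fin n) (t : ℝ), 0 ≤ t → -α * t ≤ H i t := by
    intro i t ht
    have hle : ∀ s ∈ Icc (0:ℝ) t, -α ≤ h i s := by
      intro s hs
      have hSmpos : 0 < Sm s := Spos _ (le_max_right s 0)
      have : 0 < β * d i / Sm s := div_pos (mul_pos hβ (hdpos i)) hSmpos
      simp only [hhdef]
      linarith
    have := intervalIntegral.integral_mono_on ht
      (intervalIntegrable_const (μ := volume) (c := -α)) ((hcont i).intervalIntegrable 0 t) hle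
    rwa [intervalIntegral.integral_const, sub_zero, smul_eq_mul, mul_comm] at this
  refine ⟨fun i t ht => ⟨?_, mul_pos (hx0 i) (Real.exp_pos _)⟩, fun t ht => Spos t ht⟩
  rw [key i t ht]
  exact mul_le_mul_of_nonneg_left (Real.exp_le_exp.mpr (hbound i t ht)) (hx0 i).le
end

section
/- For any solution x of the EigenAnt dynamics with positive initial conditions, the sum S(t) := Σ_{j=1}^n x_j(t) satisfies the differential inequalities β d_n ≤ Ṡ(t) + α S(t) ≤ β d_1 for all t ≥ 0. -/
open Filter MeasureTheory Set Real

theorem stmt2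
    (n : ℕ) (hn : 0 < n) (α β : ℝ) (hα : 0 < α) (hβ : 0 < β)
    (d : Fin n → ℝ) (hd : ∀ i j : Fin n, i ≤ j → d j ≤ d i) (hdpos : ∀ i, 0 < d i)
    (x : ℝ → Fin n → ℝ)
    (hS : ∀ t : ℝ, 0 ≤ t → (∑ j, x t j) ≠ 0)
    (hode : ∀ (i : Fin n) (t : ℝ), 0 ≤ t →
      HasDerivAt (fun s => x s i) ((-α + β * d i / (∑ j, x t j)) * x t i) t)
    (hx0 : ∀ i, 0 < x 0 i)
    :
    ∀ t : ℝ, 0 ≤ t →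
      β * d ⟨n - 1, by omega⟩ ≤ deriv (fun s => ∑ j, x s j) t + α * ∑ j, x t j ∧
      deriv (fun s => ∑ j, x s j) t + α * ∑ j, x t j ≤ β * d ⟨0, hn⟩ := by
  have hSder : ∀ t : ℝ, 0 ≤ t →
      HasDerivAt (fun s => ∑ j, x s j)
        (∑ j, (-α + β * d j / (∑ k, x t k)) * x t j) t := by
    intro t ht
    exact HasDerivAt.fun_sum fun j _ => hode j t ht
  have hScont : ∀ t : ℝ, 0 ≤ t → ContinuousAt (fun s => ∑ j, x s j) t :=
    fun t ht => (hSder t ht).continuousAt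
  have hxcont : ∀ i, ∀ t : ℝ, 0 ≤ t → ContinuousAt (fun s => x s i) t :=
    fun i t ht => (hode i t ht).continuousAt
  -- positivity of each coordinate for t ≥ 0
  have hpos : ∀ t : ℝ, 0 ≤ t → ∀ i, 0 < x t i := by
    intro t0 ht0 i
    by_contra h
    push_neg at h
    have hcont0 : ContinuousOn (fun s => x s i) (Icc 0 t0) :=
      fun s hs => (hxcont i s hs.1).continuousWithinAt
    have h0mem : (0 : ℝ) ∈ Icc (x t0 i) (x 0 i) := ⟨h, (hx0 i).le⟩
    obtain ⟨t1, ht1mem, ht1⟩ := intermediate_value_Icc' ht0 hcont0 h0mem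
    have ht1nn : 0 ≤ t1 := ht1mem.1
    set c : ℝ → ℝ := fun s => -α + β * d i / (∑ k, x s k) with hc
    have hccont : ContinuousOn c (Icc 0 t1) :=
      continuousOn_const.add
        (continuousOn_const.div (fun s hs => (hScont s hs.1).continuousWithinAt)
          (fun s hs => hS s hs.1))
    obtain ⟨C, hC⟩ := isCompact_Icc.exists_bound_of_continuousOn hccont
    set g : ℝ → ℝ := fun s => x (t1 - s) i with hg
    set g' : ℝ → ℝ := fun s => (c (t1 - s) * x (t1 - s) i) * (-1) with hg'
    have hgcont : ContinuousOn g (Icc 0 t1) := by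
      intro s hs
      have hmem : 0 ≤ t1 - s := by
        have := hs.2; linarith
      exact ((hxcont i (t1 - s) hmem).comp
        ((continuous_const.sub continuous_id).continuousAt)).continuousWithinAt
    have hgderiv : ∀ s ∈ Ico 0 t1, HasDerivWithinAt g (g' s) (Ici s) s := by
      intro s hs
      have hmem : 0 ≤ t1 - s := by
        have := hs.2; linarith
      have h1 : HasDerivAt (fun u : ℝ => t1 - u) (-1) s := by
        simpa using (hasDerivAt_id s).const_sub t1
      have h2 := (hode i (t1 - s) hmem).comp s h1
      exact h2.hasDerivWithinAt
    have hbound : ∀ s ∈ Ico 0 t1, ‖g' s‖ ≤ C * ‖g s‖ + 0 := by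
      intro s hs
      have hmem : t1 - s ∈ Icc (0 : ℝ) t1 := ⟨by linarith [hs.2], by linarith [hs.1]⟩
      have hCc : ‖c (t1 - s)‖ ≤ C := hC _ hmem
      have : ‖g' s‖ = ‖c (t1 - s)‖ * ‖g s‖ := by
        simp [hg', hg, abs_mul, Real.norm_eq_abs, mul_comm]
      rw [this, add_zero]
      exact mul_le_mul_of_nonneg_right hCc (norm_nonneg _)
    have hga : ‖g 0‖ ≤ 0 := by simp [hg, ht1]
    have := norm_le_gronwallBound_of_norm_deriv_right_le hgcont hgderiv hga hbound
      t1 ⟨ht1nn, le_refl _⟩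
    rw [gronwallBound_ε0] at this
    simp only [zero_mul] at this
    have hx0i := hx0 i
    have : x 0 i = 0 := by
      have h0 : ‖g t1‖ = 0 := le_antisymm this (norm_nonneg _)
      simpa [hg] using h0
    linarith
  -- main computation
  intro t ht
  have hxpos := hpos t ht
  set S := ∑ j, x t j with hSdef
  have hSpos : 0 < S := Finset.sum_pos (fun j _ => hxpos j) ⟨⟨0, hn⟩, Finset.mem_univ _⟩
  have hderiv : deriv (fun s => ∑ j, x s j) t
      = ∑ j, (-α + β * d j / S) * x t j := (hSder t ht).deriv
  have hkey : deriv (fun s => ∑ j, x s j) t + α * S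
      = ∑ j, (β * d j / S) * x t j := by
    rw [hderiv, hSdef, Finset.mul_sum, ← Finset.sum_add_distrib]
    exact Finset.sum_congr rfl fun j _ => by ring
  have hsum : ∀ e : ℝ, ∑ j, (β * e / S) * x t j = β * e := by
    intro e
    rw [← Finset.mul_sum, ← hSdef]
    field_simp
  constructor
  · rw [hkey, ← hsum (d ⟨n - 1, by omega⟩)]
    apply Finset.sum_le_sum
    intro j _
    have hdle : d ⟨n - 1, by omega⟩ ≤ d j := by
      apply hd
      rw [Fin.le_def]
      have := j.isLt
      simp only []
      omega
    gcongr
    exact (hxpos j).le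
  · rw [hkey, ← hsum (d ⟨0, hn⟩)]
    apply Finset.sum_le_sum
    intro j _
    have hdle : d j ≤ d ⟨0, hn⟩ := by
      apply hd
      rw [Fin.le_def]
      simp
    gcongr
    exact (hxpos j).le
end

section
/- For any solution x of the EigenAnt dynamics with positive initial conditions, the function 1/S is locally integrable on [0,∞) and ∫₀^t ds/S(s) → +∞ as t → +∞, where S(t) := Σ_{j=1}^n x_j(t). -/
open Filter MeasureTheory Set Real

theorem stmt5
    (n : ℕ) (hn : 0 < n) (α β : ℝ) (hα : 0 < α) (hβ : 0 < β)
    (d : Fin n → ℝ) (hd : ∀ i j : Fin n, i ≤ j → d j ≤ d i) (hdpos : ∀ i, 0 < d i)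
    (x : ℝ → Fin n → ℝ)
    (hS : ∀ t : ℝ, 0 ≤ t → (∑ j, x t j) ≠ 0)
    (hode : ∀ (i : Fin n) (t : ℝ), 0 ≤ t →
      HasDerivAt (fun s => x s i) ((-α + β * d i / (∑ j, x t j)) * x t i) t)
    (hx0 : ∀ i, 0 < x 0 i)
    :
    MeasureTheory.LocallyIntegrableOn (fun s => (∑ j, x s j)⁻¹) (Set.Ici (0:ℝ)) ∧
    Tendsto (fun t : ℝ => ∫ s in (0:ℝ)..t, (∑ j, x s j)⁻¹) atTop atTop := by
  set S : ℝ → ℝ := fun t => ∑ j, x t j with hSdef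
  have hS0 : 0 < S 0 := Finset.sum_pos (fun i _ => hx0 i) (Finset.univ_nonempty_iff.2 ⟨⟨0, hn⟩⟩)
  have hSderiv : ∀ t : ℝ, 0 ≤ t →
      HasDerivAt S (∑ i, (-α + β * d i / S t) * x t i) t := by
    intro t ht
    exact HasDerivAt.fun_sum (fun i _ => hode i t ht)
  have hScont : ContinuousOn S (Ici 0) := fun t ht =>
    ((hSderiv t ht).continuousAt).continuousWithinAt
  -- positivity of S
  have hSpos : ∀ t : ℝ, 0 ≤ t → 0 < S t := by
    intro t ht
    by_contra h
    push_neg at h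
    have hlt : S t < 0 := lt_of_le_of_ne h (hS t ht)
    have h0 : (0:ℝ) ∈ S '' Icc 0 t := by
      apply intermediate_value_Icc' ht (hScont.mono Icc_subset_Ici_self)
      exact ⟨hlt.le, hS0.le⟩
    obtain ⟨s, hs, hs0⟩ := h0
    exact hS s hs.1 hs0
  -- positivity of each coordinate
  have hxpos : ∀ t : ℝ, 0 ≤ t → ∀ i, 0 < x t i := by
    intro t ht i
    set c : ℝ → ℝ := fun s => -α + β * d i / S (max s 0) with hc_def
    have hmax : Continuous fun s : ℝ => S (max s 0) := by
      have hm : Continuous fun s : ℝ => max s 0 := Continuous.max (continuous_id : Continuous fun s : ℝ => s) continuous_const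
      apply hScont.comp_continuous hm
      intro s
      simp only [mem_Ici]
      exact le_max_right s 0
    have hc : Continuous c := by
      apply continuous_const.add
      exact (continuous_const.mul continuous_const).div hmax
        (fun s => (hSpos _ (le_max_right _ _)).ne')
    set E : ℝ → ℝ := fun u => ∫ s in (0:ℝ)..u, c s with hE_def
    have hE : ∀ u : ℝ, HasDerivAt E (c u) u := by
      intro u
      exact intervalIntegral.integral_hasDerivAt_right (hc.intervalIntegrable 0 u)
        (hc.stronglyMeasurableAtFilter _ _) hc.continuousAt
    set w : ℝ → ℝ := fun u => x u i * exp (-E u) with hw_def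
    have hw : ∀ u : ℝ, 0 ≤ u → HasDerivAt w 0 u := by
      intro u hu
      have h1 := hode i u hu
      have h2 : HasDerivAt (fun v => exp (-E v)) (-c u * exp (-E u)) u := by
        have := ((hE u).neg).exp
        convert this using 1
        all_goals simp only [Pi.neg_apply]
        ring
      have h3 : HasDerivAt w ((-α + β * d i / ∑ j, x u j) * x u i * exp (-E u) + x u i * (-c u * exp (-E u))) u := h1.fun_mul h2
      convert h3 using 1
      have hcu : c u = -α + β * d i / S u := by
        simp only [hc_def, max_eq_left hu]
      rw [hcu]
      simp only [hSdef]
      ring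
    have hconst : w t = w 0 := by
      have := constant_of_has_deriv_right_zero
        (f := w) (a := 0) (b := t)
        (fun u hu => (hw u hu.1).continuousAt.continuousWithinAt)
        (fun u hu => (hw u hu.1).hasDerivWithinAt)
      exact this t ⟨ht, le_rfl⟩
    have hw0 : w 0 = x 0 i := by
      simp [hw_def, hE_def, intervalIntegral.integral_same]
    have hwt : 0 < w t := by rw [hconst, hw0]; exact hx0 i
    have := mul_pos hwt (exp_pos (E t))
    have hxe : x t i = w t * exp (E t) := by
      simp only [hw_def]
      rw [mul_assoc, ← Real.exp_add]
      simp
    rw [hxe]; exact this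
  -- uniform bound on S
  set k : ℝ := β * d ⟨0, hn⟩ / α with hk_def
  have hk_pos : 0 < k := div_pos (mul_pos hβ (hdpos _)) hα
  set M : ℝ := max (S 0) k with hM_def
  have hM_pos : 0 < M := lt_of_lt_of_le hS0 (le_max_left _ _)
  have hd0 : ∀ i : Fin n, d i ≤ d ⟨0, hn⟩ := by
    intro i
    exact hd ⟨0, hn⟩ i (by simp [Fin.le_def])
  set g : ℝ → ℝ := fun u => (S u - k) * exp (α * u) with hg_def
  have hganti : AntitoneOn g (Ici 0) := by
    apply antitoneOn_of_deriv_nonpos (convex_Ici 0)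
    · exact ((hScont.sub continuousOn_const).mul
        (continuous_exp.comp (continuous_const.mul continuous_id)).continuousOn)
    · intro u hu
      rw [interior_Ici] at hu
      have h1 : HasDerivAt (fun v => S v - k) (∑ j, (-α + β * d j / S u) * x u j) u :=
        (hSderiv u (le_of_lt hu)).sub_const _
      have h2 : HasDerivAt (fun v => exp (α * v)) (exp (α * u) * (α * 1)) u :=
        ((hasDerivAt_id u).const_mul α).exp
      exact (h1.mul h2).differentiableAt.differentiableWithinAt
    · intro u hu
      rw [interior_Ici] at hu
      have hu' : (0:ℝ) ≤ u := le_of_lt hu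
      have h1 : HasDerivAt (fun v => S v - k) (∑ j, (-α + β * d j / S u) * x u j) u :=
        (hSderiv u hu').sub_const _
      have h2 : HasDerivAt (fun v => exp (α * v)) (exp (α * u) * (α * 1)) u :=
        ((hasDerivAt_id u).const_mul α).exp
      have hg' := (h1.fun_mul h2).deriv
      rw [hg']
      have hSu := hSpos u hu'
      have hA : (∑ j, (-α + β * d j / S u) * x u j) ≤ -α * S u + β * d ⟨0, hn⟩ := by
        calc (∑ j, (-α + β * d j / S u) * x u j)
            ≤ ∑ j, (-α + β * d ⟨0, hn⟩ / S u) * x u j := by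
              apply Finset.sum_le_sum
              intro j _
              have hx := (hxpos u hu' j).le
              gcongr
              exact hd0 j
          _ = (-α + β * d ⟨0, hn⟩ / S u) * S u := by
              rw [← Finset.mul_sum]
          _ = -α * S u + β * d ⟨0, hn⟩ := by
              field_simp
      have hexp : 0 < exp (α * u) := exp_pos _
      have hfac : (∑ j, (-α + β * d j / S u) * x u j) + (S u - k) * α ≤ 0 := by
        have hkα : k * α = β * d ⟨0, hn⟩ := by
          rw [hk_def]; field_simp
        nlinarith
      nlinarith
  have hSbound : ∀ t : ℝ, 0 ≤ t → S t ≤ M := by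
    intro t ht
    have hgt : g t ≤ g 0 := hganti self_mem_Ici ht ht
    have hg0 : g 0 = S 0 - k := by simp [hg_def]
    have hE1 : 1 ≤ exp (α * t) := by
      rw [← Real.exp_zero]
      exact exp_le_exp.2 (by positivity)
    rw [hg0] at hgt
    simp only [hg_def] at hgt
    have hSM : S 0 ≤ M := le_max_left _ _
    have hkM : k ≤ M := le_max_right _ _
    by_contra h
    push_neg at h
    have h1 : 0 < S t - k := by linarith
    nlinarith [mul_le_mul_of_nonneg_left hE1 h1.le]
  -- local integrability
  have hinvcont : ContinuousOn (fun s => (S s)⁻¹) (Ici 0) :=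
    hScont.inv₀ (fun s hs => hS s hs)
  have hloc : MeasureTheory.LocallyIntegrableOn (fun s => (S s)⁻¹) (Ici (0:ℝ)) :=
    hinvcont.locallyIntegrableOn measurableSet_Ici
  refine ⟨hloc, ?_⟩
  -- divergence
  have hkey : ∀ t : ℝ, 0 ≤ t → t * M⁻¹ ≤ ∫ s in (0:ℝ)..t, (S s)⁻¹ := by
    intro t ht
    have hint : IntervalIntegrable (fun s => (S s)⁻¹) volume 0 t := by
      apply ContinuousOn.intervalIntegrable
      rw [uIcc_of_le ht]
      exact hinvcont.mono (fun s hs => hs.1)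
    have hconst : (∫ s in (0:ℝ)..t, (M:ℝ)⁻¹) = t * M⁻¹ := by
      simp [intervalIntegral.integral_const, smul_eq_mul]
    rw [← hconst]
    apply intervalIntegral.integral_mono_on ht intervalIntegrable_const hint
    intro s hs
    exact inv_anti₀ (hSpos s hs.1) (hSbound s hs.1)
  have hlim : Tendsto (fun t : ℝ => t * M⁻¹) atTop atTop :=
    Tendsto.atTop_mul_const (inv_pos.2 hM_pos) tendsto_id
  exact tendsto_atTop_mono' atTop
    ((eventually_ge_atTop (0:ℝ)).mono (fun t ht => hkey t ht)) hlim
end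

section
/- For any solution x of the EigenAnt dynamics with positive initial conditions, defining F(u) := Σ_{i=1}^n (x_i(0)/(β d_i)) e^{β d_i u}, one has for every t ≥ 0 the identity S(t) = e^{−αt} F′( ∫₀^t ds/S(s) ), i.e. S(t) = e^{−αt} Σ_{i=1}^n x_i(0) e^{β d_i ∫₀^t ds/S(s)}, where S(t) := Σ_{j=1}^n x_j(t). -/
open Filter MeasureTheory Set Real

theorem stmt8
    (n : ℕ) (hn : 0 < n) (α β : ℝ) (hα : 0 < α) (hβ : 0 < β)
    (d : Fin n → ℝ) (hd : ∀ i j : Fin n, i ≤ j → d j ≤ d i) (hdpos : ∀ i, 0 < d i)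
    (x : ℝ → Fin n → ℝ)
    (hS : ∀ t : ℝ, 0 ≤ t → (∑ j, x t j) ≠ 0)
    (hode : ∀ (i : Fin n) (t : ℝ), 0 ≤ t →
      HasDerivAt (fun s => x s i) ((-α + β * d i / (∑ j, x t j)) * x t i) t)
    (hx0 : ∀ i, 0 < x 0 i)
    :
    ∀ t : ℝ, 0 ≤ t →
      ∑ j, x t j =
        Real.exp (-α * t) * ∑ i, x 0 i * Real.exp (β * d i * (∫ s in (0:ℝ)..t, (∑ j, x s j)⁻¹)) := by
  intro t ht
  set f : ℝ → ℝ := fun s => (∑ j, x s j)⁻¹ with hfdef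
  set T : ℝ → ℝ := fun u => ∫ s in (0:ℝ)..u, f s with hTdef
  -- continuity of S at points ≥ 0
  have hScont : ∀ u : ℝ, 0 ≤ u → ContinuousAt (fun s => ∑ j, x s j) u := by
    intro u hu
    exact (HasDerivAt.fun_sum fun i _ => hode i u hu).continuousAt
  have hfcont : ContinuousOn f (Ici 0) := fun u hu =>
    ((hScont u hu).continuousWithinAt).inv₀ (hS u hu)
  have hint : ∀ u ∈ Icc (0:ℝ) t, IntervalIntegrable f volume 0 u := by
    intro u hu
    apply ContinuousOn.intervalIntegrable
    refine hfcont.mono ?_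
    rw [uIcc_of_le hu.1]
    exact fun v hv => hv.1
  have key : ∀ i : Fin n, x t i = x 0 i * Real.exp (-α * t) * Real.exp (β * d i * T t) := by
    intro i
    set g : ℝ → ℝ := fun u => x u i * Real.exp (α * u - β * d i * T u) with hg
    -- right derivative of T
    have hTd : ∀ u ∈ Ico (0:ℝ) t, HasDerivWithinAt T (f u) (Ici u) u := by
      intro u hu
      have hmono : Ici u ⊆ Ici (0:ℝ) := Ici_subset_Ici.2 hu.1
      exact intervalIntegral.integral_hasDerivWithinAt_right (hint u ⟨hu.1, hu.2.le⟩)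
        ⟨Ici u, mem_of_superset self_mem_nhdsWithin Ioi_subset_Ici_self,
          (hfcont.mono hmono).aestronglyMeasurable measurableSet_Ici⟩
        (((hfcont.mono hmono).continuousWithinAt self_mem_Ici).mono Ioi_subset_Ici_self)
    have hgd : ∀ u ∈ Ico (0:ℝ) t, HasDerivWithinAt g 0 (Ici u) u := by
      intro u hu
      have hx' : HasDerivWithinAt (fun s => x s i)
          ((-α + β * d i / (∑ j, x u j)) * x u i) (Ici u) u :=
        (hode i u hu.1).hasDerivWithinAt
      have hexp : HasDerivWithinAt (fun s => Real.exp (α * s - β * d i * T s))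
          (Real.exp (α * u - β * d i * T u) * (α * 1 - β * d i * f u)) (Ici u) u := by
        exact (((hasDerivWithinAt_id u (Ici u)).const_mul α).sub
          ((hTd u hu).const_mul (β * d i))).exp
      have := hx'.mul hexp
      have h0 : (-α + β * d i / (∑ j, x u j)) * x u i * Real.exp (α * u - β * d i * T u)
          + x u i * (Real.exp (α * u - β * d i * T u) * (α * 1 - β * d i * f u)) = 0 := by
        simp only [hfdef, div_eq_mul_inv]
        ring
      rwa [h0] at this
    -- continuity of g on Icc 0 t
    have hTcont : ContinuousOn T (Icc 0 t) := by
      have : IntegrableOn f (uIcc (0:ℝ) t) volume := by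
        rw [uIcc_of_le ht]
        exact (hfcont.mono (fun v hv => hv.1)).integrableOn_compact isCompact_Icc
      have := intervalIntegral.continuousOn_primitive_interval this
      rwa [uIcc_of_le ht] at this
    have hgcont : ContinuousOn g (Icc 0 t) := by
      refine ContinuousOn.mul (fun u hu => ((hode i u hu.1).continuousAt).continuousWithinAt) ?_
      exact (((continuousOn_const.mul continuousOn_id).sub
        (continuousOn_const.mul hTcont))).rexp
    have hconst := constant_of_has_deriv_right_zero hgcont hgd t ⟨ht, le_refl t⟩
    have hT0 : T 0 = 0 := intervalIntegral.integral_same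
    simp only [hg, hT0, mul_zero, sub_zero, Real.exp_zero, mul_one] at hconst
    rw [← hconst, mul_assoc, mul_assoc, ← Real.exp_add, ← Real.exp_add]
    have h0 : α * t - β * d i * T t + (-α * t + β * d i * T t) = 0 := by ring
    rw [h0, Real.exp_zero, mul_one]
  calc ∑ j, x t j = ∑ i, x 0 i * Real.exp (-α * t) * Real.exp (β * d i * T t) :=
        Finset.sum_congr rfl fun i _ => key i
    _ = Real.exp (-α * t) * ∑ i, x 0 i * Real.exp (β * d i * T t) := by
        rw [Finset.mul_sum]; exact Finset.sum_congr rfl fun i _ => by ring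
end

section
/- For any solution x of the EigenAnt dynamics with positive initial conditions, defining F(u) := Σ_{i=1}^n (x_i(0)/(β d_i)) e^{β d_i u}, one has for every t ≥ 0 the identity F( ∫₀^t ds/S(s) ) = F(0) + (1/α)(e^{αt} − 1); equivalently ∫₀^t ds/S(s) = F^{−1}( F(0) + (1/α)(e^{αt} − 1) ), where S(t) := Σ_{j=1}^n x_j(t) and F^{−1} is the inverse of the strictly increasing function F on [0,∞). -/
open Filter MeasureTheory Set Real
open scoped Topology

theorem stmt9
    (n : ℕ) (hn : 0 < n) (α β : ℝ) (hα : 0 < α) (hβ : 0 < β)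
    (d : Fin n → ℝ) (hd : ∀ i j : Fin n, i ≤ j → d j ≤ d i) (hdpos : ∀ i, 0 < d i)
    (x : ℝ → Fin n → ℝ)
    (hS : ∀ t : ℝ, 0 ≤ t → (∑ j, x t j) ≠ 0)
    (hode : ∀ (i : Fin n) (t : ℝ), 0 ≤ t →
      HasDerivAt (fun s => x s i) ((-α + β * d i / (∑ j, x t j)) * x t i) t)
    (hx0 : ∀ i, 0 < x 0 i)
    (F : ℝ → ℝ)
    (hF : ∀ u, F u = ∑ i, x 0 i / (β * d i) * Real.exp (β * d i * u)) :
    ∀ t : ℝ, 0 ≤ t →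
      F (∫ s in (0:ℝ)..t, (∑ j, x s j)⁻¹) = F 0 + (Real.exp (α * t) - 1) / α ∧
      0 ≤ ∫ s in (0:ℝ)..t, (∑ j, x s j)⁻¹ ∧
      ∀ u : ℝ, 0 ≤ u → F u = F 0 + (Real.exp (α * t) - 1) / α →
        u = ∫ s in (0:ℝ)..t, (∑ j, x s j)⁻¹ := by
  -- F is strictly monotone
  have hβd : ∀ i : Fin n, 0 < β * d i := fun i => mul_pos hβ (hdpos i)
  have hFmono : StrictMono F := by
    intro u v huv
    rw [hF, hF]
    refine Finset.sum_lt_sum_of_nonempty (Finset.univ_nonempty_iff.2 ?_) ?_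
    · exact Fin.pos_iff_nonempty.mp hn
    · intro i _
      exact mul_lt_mul_of_pos_left
        (Real.exp_lt_exp.2 (by nlinarith [hβd i])) (div_pos (hx0 i) (hβd i))
  intro T hT
  set S : ℝ → ℝ := fun t => ∑ j, x t j with hSdef
  set τ : ℝ → ℝ := fun u => ∫ s in (0:ℝ)..u, (S s)⁻¹ with hτdef
  have hτ0 : τ 0 = 0 := intervalIntegral.integral_same
  have hSne : ∀ s ∈ Icc (0:ℝ) T, S s ≠ 0 := fun s hs => hS s hs.1
  have hxcont : ∀ (i : Fin n) (s : ℝ), 0 ≤ s → ContinuousAt (fun t => x t i) s :=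
    fun i s hs => (hode i s hs).continuousAt
  have hScont : ContinuousOn S (Icc 0 T) := by
    intro s hs
    exact ((HasDerivAt.fun_sum (fun i _ => hode i s hs.1)).continuousAt).continuousWithinAt
  have hSinvcont : ContinuousOn (fun s => (S s)⁻¹) (Icc 0 T) := hScont.inv₀ hSne
  have hint : ∀ u ∈ Icc (0:ℝ) T, IntervalIntegrable (fun s => (S s)⁻¹) volume 0 u := by
    intro u hu
    exact (hSinvcont.mono (Icc_subset_Icc_right hu.2)).intervalIntegrable_of_Icc hu.1
  have hτcont : ContinuousOn τ (Icc 0 T) := by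
    have := intervalIntegral.continuousOn_primitive_interval'
      (μ := volume) (f := fun s => (S s)⁻¹) (hint T ⟨hT, le_rfl⟩) left_mem_uIcc
    rwa [uIcc_of_le hT] at this
  have hτderiv : ∀ u ∈ Ico (0:ℝ) T, HasDerivWithinAt τ ((S u)⁻¹) (Ici u) u := by
    intro u hu
    have hmemIoc : Ioc u T ∈ 𝓝[>] u := Ioc_mem_nhdsGT_of_mem ⟨le_rfl, hu.2⟩
    have hsub : Ioc u T ⊆ Icc 0 T := fun s hs => ⟨le_trans hu.1 hs.1.le, hs.2⟩
    refine intervalIntegral.integral_hasDerivWithinAt_right (hint u ⟨hu.1, hu.2.le⟩)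
      (t := Ioi u) ⟨Ioc u T, hmemIoc, ((hSinvcont.mono hsub).aestronglyMeasurable measurableSet_Ioc)⟩ ?_
    exact (hSinvcont u ⟨hu.1, hu.2.le⟩).mono_of_mem_nhdsWithin (mem_of_superset hmemIoc hsub)
  -- the functions x t i * exp (α t - β d i τ t) are constant
  have hφ : ∀ (i : Fin n), ∀ u ∈ Icc (0:ℝ) T,
      x u i * Real.exp (α * u - β * d i * τ u) = x 0 i := by
    intro i
    have key := constant_of_has_deriv_right_zero
      (f := fun t => x t i * Real.exp (α * t - β * d i * τ t)) (a := 0) (b := T)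
      ?_ ?_
    · intro u hu
      have := key u hu
      simpa [hτ0] using this
    · -- continuity
      apply ContinuousOn.mul
      · exact fun s hs => (hxcont i s hs.1).continuousWithinAt
      · apply ContinuousOn.rexp
        exact (continuousOn_const.mul continuousOn_id).sub (continuousOn_const.mul hτcont)
    · -- derivative zero
      intro u hu
      have huIcc : u ∈ Icc (0:ℝ) T := ⟨hu.1, hu.2.le⟩
      have hx' : HasDerivWithinAt (fun s => x s i)
          ((-α + β * d i / S u) * x u i) (Ici u) u := (hode i u hu.1).hasDerivWithinAt
      have hin : HasDerivWithinAt (fun s => α * s - β * d i * τ s)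
          (α - β * d i * (S u)⁻¹) (Ici u) u := by
        have h1 : HasDerivWithinAt (fun s : ℝ => α * s) (α * 1) (Ici u) u :=
          (hasDerivWithinAt_id u (Ici u)).const_mul α
        have h2 := (hτderiv u hu).const_mul (β * d i)
        simpa [mul_one] using h1.fun_sub h2
      have hexp := hin.exp
      have := hx'.fun_mul hexp
      convert this using 1
      have hSu : S u ≠ 0 := hSne u huIcc
      · rfl
      · ring
  have hxform : ∀ u ∈ Icc (0:ℝ) T, ∀ i : Fin n,
      x u i = x 0 i * Real.exp (β * d i * τ u) * Real.exp (-(α * u)) := by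
    intro u hu i
    have h := hφ i u hu
    have key : Real.exp (α * u - β * d i * τ u) *
        (Real.exp (β * d i * τ u) * Real.exp (-(α * u))) = 1 := by
      rw [← Real.exp_add, ← Real.exp_add,
        show α * u - β * d i * τ u + (β * d i * τ u + -(α * u)) = 0 by ring, Real.exp_zero]
    rw [← h]
    linear_combination (-(x u i)) * key
  have hSval : ∀ u ∈ Icc (0:ℝ) T,
      S u = (∑ i, x 0 i * Real.exp (β * d i * τ u)) * Real.exp (-(α * u)) := by
    intro u hu
    rw [hSdef]
    simp only [hxform u hu, Finset.sum_mul]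
  have hSpos : ∀ u ∈ Icc (0:ℝ) T, 0 < S u := by
    intro u hu
    rw [hSval u hu]
    refine mul_pos (Finset.sum_pos (fun i _ => mul_pos (hx0 i) (Real.exp_pos _)) ?_) (Real.exp_pos _)
    exact Finset.univ_nonempty_iff.2 (Fin.pos_iff_nonempty.mp hn)
  have hτT_nonneg : 0 ≤ τ T := by
    apply intervalIntegral.integral_nonneg hT
    intro s hs
    exact inv_nonneg.2 (hSpos s hs).le
  -- the main identity, via constancy of G
  set G : ℝ → ℝ := fun u =>
    (∑ i, x 0 i / (β * d i) * Real.exp (β * d i * τ u)) - (Real.exp (α * u) - 1) / α with hGdef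
  have hGconst : ∀ u ∈ Icc (0:ℝ) T, G u = G 0 := by
    apply constant_of_has_deriv_right_zero
    · apply ContinuousOn.sub
      · apply continuousOn_finset_sum
        intro i _
        exact continuousOn_const.mul (ContinuousOn.rexp (continuousOn_const.mul hτcont))
      · exact ((Real.continuous_exp.comp (continuous_const.mul continuous_id)).continuousOn.sub
          continuousOn_const).div_const α
    · intro u hu
      have huIcc : u ∈ Icc (0:ℝ) T := ⟨hu.1, hu.2.le⟩
      have hSu := hSpos u huIcc
      have hsum : HasDerivWithinAt (fun s => ∑ i, x 0 i / (β * d i) * Real.exp (β * d i * τ s))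
          (∑ i, x 0 i / (β * d i) * (Real.exp (β * d i * τ u) * (β * d i * (S u)⁻¹)))
          (Ici u) u := by
        apply HasDerivWithinAt.fun_sum
        intro i _
        exact (((hτderiv u hu).const_mul (β * d i)).exp).const_mul _
      have hrhs : HasDerivWithinAt (fun s => (Real.exp (α * s) - 1) / α)
          ((Real.exp (α * u) * α) / α) (Ici u) u := by
        have : HasDerivWithinAt (fun s : ℝ => Real.exp (α * s))
            (Real.exp (α * u) * (α * 1)) (Ici u) u :=
          ((hasDerivWithinAt_id u (Ici u)).const_mul α).exp
        simpa [mul_one] using (this.sub_const 1).div_const α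
      have := hsum.fun_sub hrhs
      convert this using 1
      have hterm : ∀ i : Fin n,
          x 0 i / (β * d i) * (Real.exp (β * d i * τ u) * (β * d i * (S u)⁻¹))
            = x 0 i * Real.exp (β * d i * τ u) * (S u)⁻¹ := by
        intro i
        have := (hβd i).ne'
        have := (hdpos i).ne'
        field_simp
      have hsum' : (∑ i, x 0 i * Real.exp (β * d i * τ u)) = S u * Real.exp (α * u) := by
        rw [hSval u huIcc]
        rw [mul_assoc, ← Real.exp_add]
        simp
      rw [Finset.sum_congr rfl (fun i _ => hterm i), ← Finset.sum_mul, hsum',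
        mul_div_assoc, div_self hα.ne', mul_one, mul_comm (S u), mul_assoc,
        mul_inv_cancel₀ hSu.ne', mul_one, sub_self]
    all_goals try rfl
  have hmain : F (τ T) = F 0 + (Real.exp (α * T) - 1) / α := by
    have h := hGconst T ⟨hT, le_rfl⟩
    rw [hGdef] at h
    simp only [hτ0, mul_zero, Real.exp_zero, mul_one, sub_self, zero_div, sub_zero] at h
    rw [hF (τ T), hF 0]
    simp only [mul_zero, Real.exp_zero, mul_one]
    linarith [h]
  refine ⟨hmain, hτT_nonneg, ?_⟩
  intro u _ hu2
  exact hFmono.injective (by rw [hu2, ← hmain])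
end

section
/- For any solution x of the EigenAnt dynamics with positive initial conditions, the sum S(t) := Σ_{j=1}^n x_j(t) admits a positive finite limit as t → +∞. -/
open Filter MeasureTheory Set Real


lemma mono_aux {f f' : ℝ → ℝ} {a b : ℝ} (hab : a ≤ b)
    (hf : ∀ t ∈ Set.Icc a b, HasDerivAt f (f' t) t)
    (h0 : ∀ t ∈ Set.Icc a b, 0 ≤ f' t) : f a ≤ f b := by
  have hmono : MonotoneOn f (Set.Icc a b) := by
    apply monotoneOn_of_deriv_nonneg (convex_Icc a b)
    · exact fun t ht => (hf t ht).continuousAt.continuousWithinAt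
    · intro t ht
      rw [interior_Icc] at ht
      exact ((hf t (Set.mem_Icc_of_Ioo ht)).differentiableAt).differentiableWithinAt
    · intro t ht
      rw [interior_Icc] at ht
      rw [(hf t (Set.mem_Icc_of_Ioo ht)).deriv]
      exact h0 t (Set.mem_Icc_of_Ioo ht)
  exact hmono (Set.left_mem_Icc.2 hab) (Set.right_mem_Icc.2 hab) hab

lemma ode_upper {S S' : ℝ → ℝ} {α C T t : ℝ} (hα : 0 < α) (hT : T ≤ t)
    (hSd : ∀ s ∈ Set.Icc T t, HasDerivAt S (S' s) s)
    (hb : ∀ s ∈ Set.Icc T t, S' s ≤ C - α * S s) :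
    S t ≤ C/α + (S T - C/α) * Real.exp (-α * (t - T)) := by
  have key : (fun s => C/α * Real.exp (α*s) - S s * Real.exp (α*s)) T ≤
      (fun s => C/α * Real.exp (α*s) - S s * Real.exp (α*s)) t := by
    apply mono_aux (f' := fun s => (C - α * S s - S' s) * Real.exp (α*s)) hT
    · intro s hs
      have he : HasDerivAt (fun s => Real.exp (α*s)) (α * Real.exp (α*s)) s := by
        simpa [mul_comm] using ((hasDerivAt_id s).const_mul α).exp
      have h1 := (he.const_mul (C/α)).fun_sub ((hSd s hs).fun_mul he)
      convert h1 using 1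
      · rfl
      · rfl
      field_simp
      ring
    · intro s hs
      have := hb s hs
      have := Real.exp_pos (α*s)
      nlinarith
  simp only at key
  have hE : Real.exp (-α*(t-T)) * Real.exp (α*t) = Real.exp (α*T) := by
    rw [← Real.exp_add]; ring_nf
  have h1 := Real.exp_pos (α*t)
  have h2 := Real.exp_pos (α*T)
  rw [← mul_le_mul_iff_left₀ h1]
  have h3 : (S T - C/α) * (Real.exp (-α*(t-T)) * Real.exp (α*t)) = (S T - C/α) * Real.exp (α*T) := by
    rw [hE]
  nlinarith [key, h3]

lemma ode_lower {S S' : ℝ → ℝ} {α C T t : ℝ} (hα : 0 < α) (hT : T ≤ t)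
    (hSd : ∀ s ∈ Set.Icc T t, HasDerivAt S (S' s) s)
    (hb : ∀ s ∈ Set.Icc T t, C - α * S s ≤ S' s) :
    C/α + (S T - C/α) * Real.exp (-α * (t - T)) ≤ S t := by
  have := ode_upper (S := fun s => -S s) (S' := fun s => -S' s) (C := -C) hα hT
    (fun s hs => (hSd s hs).neg)
    (fun s hs => by have := hb s hs; linarith)
  simp only [neg_div] at this
  linarith

theorem stmt10
    (n : ℕ) (hn : 0 < n) (α β : ℝ) (hα : 0 < α) (hβ : 0 < β)
    (d : Fin n → ℝ) (hd : ∀ i j : Fin n, i ≤ j → d j ≤ d i) (hdpos : ∀ i, 0 < d i)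
    (x : ℝ → Fin n → ℝ)
    (hS : ∀ t : ℝ, 0 ≤ t → (∑ j, x t j) ≠ 0)
    (hode : ∀ (i : Fin n) (t : ℝ), 0 ≤ t →
      HasDerivAt (fun s => x s i) ((-α + β * d i / (∑ j, x t j)) * x t i) t)
    (hx0 : ∀ i, 0 < x 0 i)
    :
    ∃ L : ℝ, 0 < L ∧ Tendsto (fun t => ∑ j, x t j) atTop (nhds L) := by
  set S : ℝ → ℝ := fun t => ∑ j, x t j with hSdef
  have hS0 : 0 < S 0 := Finset.sum_pos (fun i _ => hx0 i) (Finset.univ_nonempty_iff.2 (Fin.pos_iff_nonempty.mp hn))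
  have hSder : ∀ t : ℝ, 0 ≤ t → HasDerivAt S (∑ j, (-α + β * d j / S t) * x t j) t := by
    intro t ht
    exact HasDerivAt.fun_sum (fun i _ => hode i t ht)
  have hScont : ∀ t : ℝ, 0 ≤ t → ContinuousAt S t :=
    fun t ht => (hSder t ht).continuousAt
  have hSpos : ∀ t : ℝ, 0 ≤ t → 0 < S t := by
    intro t ht
    rcases lt_trichotomy (S t) 0 with h | h | h
    · exfalso
      have hcont : ContinuousOn S (Set.Icc 0 t) :=
        fun s hs => (hScont s hs.1).continuousWithinAt
      have : (0:ℝ) ∈ Set.Icc (S t) (S 0) := ⟨le_of_lt h, le_of_lt hS0⟩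
      obtain ⟨s, hs, hs0⟩ := intermediate_value_Icc' ht hcont this
      exact hS s hs.1 hs0
    · exact absurd h (hS t ht)
    · exact h
  -- extended sum and integrating factor
  have hStpos : ∀ t : ℝ, 0 < S (max t 0) := fun t => hSpos _ (le_max_right t 0)
  have hStcont : Continuous (fun t => S (max t 0)) := by
    rw [continuous_iff_continuousAt]
    intro t
    have h1 : ContinuousAt (fun s : ℝ => max s 0) t := continuousAt_id.max continuousAt_const
    have h2 := Filter.Tendsto.comp (g := S) (f := fun s : ℝ => max s 0)
      (y := nhds (max t 0)) (hScont (max t 0) (le_max_right t 0)) h1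
    exact h2
  have hinvcont : Continuous (fun t => 1 / S (max t 0)) :=
    continuous_const.div hStcont (fun t => (hStpos t).ne')
  set u : ℝ → ℝ := fun t => ∫ τ in (0:ℝ)..t, 1 / S (max τ 0) with hudef
  have hu' : ∀ t : ℝ, HasDerivAt u (1 / S (max t 0)) t := by
    intro t
    exact intervalIntegral.integral_hasDerivAt_right
      (hinvcont.intervalIntegrable 0 t)
      (hinvcont.stronglyMeasurable.stronglyMeasurableAtFilter)
      hinvcont.continuousAt
  have hu0 : u 0 = 0 := intervalIntegral.integral_same
  -- explicit formula for x
  have hxf : ∀ (i : Fin n) (t : ℝ), 0 ≤ t →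
      x t i = x 0 i * Real.exp (β * d i * u t - α * t) := by
    intro i t ht
    have hg : ∀ s ∈ Set.Icc 0 t, HasDerivAt (fun s => x s i * Real.exp (α * s - β * d i * u s))
        ((0:ℝ)) s := by
      intro s hs
      have hs0 : (0:ℝ) ≤ s := hs.1
      have he : HasDerivAt (fun s => Real.exp (α * s - β * d i * u s))
          ((α - β * d i * (1 / S (max s 0))) * Real.exp (α * s - β * d i * u s)) s := by
        have h1 : HasDerivAt (fun s : ℝ => α * s - β * d i * u s)
            (α - β * d i * (1 / S (max s 0))) s := by
          simpa using (((hasDerivAt_id s).const_mul α).fun_sub ((hu' s).const_mul (β * d i)))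
        simpa [mul_comm] using h1.exp
      have h2 := (hode i s hs0).fun_mul he
      have hmax : max s 0 = s := max_eq_left hs0
      rw [hmax] at h2
      convert h2 using 1
      have hSne : S s ≠ 0 := (hSpos s hs0).ne'
      · rfl
      · rfl
      field_simp
      ring
    have hcst : x t i * Real.exp (α * t - β * d i * u t) = x 0 i * Real.exp (α * 0 - β * d i * u 0) := by
      have h1 := mono_aux (f' := fun _ => (0:ℝ)) ht hg (fun s _ => le_refl 0)
      have h2 := mono_aux (f := fun s => -(x s i * Real.exp (α * s - β * d i * u s)))
        (f' := fun _ => (0:ℝ)) ht (fun s hs => by simpa using (hg s hs).fun_neg)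
        (fun s _ => le_refl 0)
      linarith
    rw [hu0] at hcst
    simp only [mul_zero, sub_zero, Real.exp_zero, mul_one] at hcst
    have hEpos : (0:ℝ) < Real.exp (α * t - β * d i * u t) := Real.exp_pos _
    have : x t i = x 0 i / Real.exp (α * t - β * d i * u t) := by
      field_simp at hcst ⊢
      linarith [hcst]
    rw [this, div_eq_mul_inv, ← Real.exp_neg, neg_sub]
  have hxpos : ∀ (t : ℝ), 0 ≤ t → ∀ i, 0 < x t i := by
    intro t ht i
    rw [hxf i t ht]
    exact mul_pos (hx0 i) (Real.exp_pos _)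
  -- largest d
  set i0 : Fin n := ⟨0, hn⟩ with hi0def
  set d1 : ℝ := d i0 with hd1def
  have hd1 : ∀ i, d i ≤ d1 := fun i => hd i0 i (Fin.le_def.mpr (Nat.zero_le _))
  have hd1pos : 0 < d1 := hdpos i0
  set W : ℝ → ℝ := fun t => ∑ j, d j * x t j with hWdef
  have hWle : ∀ t : ℝ, 0 ≤ t → W t ≤ d1 * S t := by
    intro t ht
    rw [hWdef, hSdef]
    simp only
    rw [Finset.mul_sum]
    exact Finset.sum_le_sum (fun j _ =>
      mul_le_mul_of_nonneg_right (hd1 j) (le_of_lt (hxpos t ht j)))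
  have hSd2 : ∀ t : ℝ, 0 ≤ t → HasDerivAt S (-α * S t + β * (W t / S t)) t := by
    intro t ht
    have h2 := hSder t ht
    have heq : (∑ j, (-α + β * d j / S t) * x t j) = -α * S t + β * (W t / S t) := by
      have hne : S t ≠ 0 := (hSpos t ht).ne'
      calc ∑ j, (-α + β * d j / S t) * x t j
          = ∑ j, ((-α) * x t j + (β / S t) * (d j * x t j)) :=
            Finset.sum_congr rfl (fun j _ => by field_simp)
        _ = (-α) * ∑ j, x t j + (β / S t) * ∑ j, d j * x t j := by
            rw [Finset.sum_add_distrib, Finset.mul_sum, Finset.mul_sum]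
        _ = -α * S t + β * (W t / S t) := by
            simp only [hSdef, hWdef] at hne ⊢
            field_simp
    rwa [heq] at h2
  -- upper bound on S
  set M : ℝ := β * d1 / α + S 0 with hMdef
  have hMpos : 0 < M := by positivity
  have hSM : ∀ t : ℝ, 0 ≤ t → S t ≤ M := by
    intro t ht
    have h1 := ode_upper (S := S) (S' := fun s => -α * S s + β * (W s / S s))
      (C := β * d1) hα ht (fun s hs => hSd2 s hs.1)
      (fun s hs => by
        have h3 : W s / S s ≤ d1 := (div_le_iff₀ (hSpos s hs.1)).mpr
          (by linarith [hWle s hs.1])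
        nlinarith)
    have h4 : Real.exp (-α * (t - 0)) ≤ 1 := Real.exp_le_one_iff.mpr (by nlinarith)
    have h5 : (0:ℝ) < Real.exp (-α * (t - 0)) := Real.exp_pos _
    have h6 : 0 < β * d1 / α := by positivity
    rw [hMdef]
    nlinarith
  -- u tends to infinity
  have huM : ∀ t : ℝ, 0 ≤ t → t / M ≤ u t := by
    intro t ht
    have h1 : ∫ τ in (0:ℝ)..t, (1/M : ℝ) ≤ ∫ τ in (0:ℝ)..t, 1 / S (max τ 0) := by
      apply intervalIntegral.integral_mono_on ht
        (intervalIntegrable_const) (hinvcont.intervalIntegrable 0 t)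
      intro s hs
      have : S (max s 0) ≤ M := hSM (max s 0) (le_max_right s 0)
      exact one_div_le_one_div_of_le (hStpos s) this
    rw [intervalIntegral.integral_const] at h1
    simp only [smul_eq_mul, sub_zero] at h1
    calc t / M = t * (1/M) := by ring
      _ ≤ u t := h1
  have huinf : Tendsto u atTop atTop := by
    apply tendsto_atTop_mono' atTop (eventually_atTop.2 ⟨0, fun t ht => huM t ht⟩)
    exact Tendsto.atTop_div_const hMpos tendsto_id
  -- limit of W/S
  set c : Fin n → ℝ := fun i => if d i = d1 then x 0 i else 0 with hcdef
  set A : ℝ := ∑ i, c i with hAdef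
  have hApos : 0 < A := by
    apply Finset.sum_pos' (fun i _ => by rw [hcdef]; dsimp; split <;> [exact le_of_lt (hx0 i); exact le_refl 0])
    refine ⟨i0, Finset.mem_univ i0, ?_⟩
    rw [hcdef]
    simp [hd1def, hx0 i0]
  have hr : ∀ i, Tendsto (fun t => x 0 i * Real.exp (β * (d i - d1) * u t)) atTop (nhds (c i)) := by
    intro i
    by_cases h : d i = d1
    · simp only [h, sub_self, mul_zero, zero_mul, Real.exp_zero, mul_one]
      have : c i = x 0 i := by rw [hcdef]; simp [h]
      rw [this]
      exact tendsto_const_nhds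
    · have hlt : d i < d1 := lt_of_le_of_ne (hd1 i) h
      have hneg : β * (d i - d1) < 0 := by nlinarith
      have h1 : Tendsto (fun v : ℝ => β * (d i - d1) * v) atTop atBot :=
        tendsto_id.const_mul_atTop_of_neg hneg
      have h2 : Tendsto (fun t => Real.exp (β * (d i - d1) * u t)) atTop (nhds 0) :=
        Real.tendsto_exp_atBot.comp (h1.comp huinf)
      have h3 := h2.const_mul (x 0 i)
      have : c i = 0 := by rw [hcdef]; simp [h]
      rw [this]
      simpa using h3
  have hnum : Tendsto (fun t => ∑ i, d i * (x 0 i * Real.exp (β * (d i - d1) * u t)))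
      atTop (nhds (d1 * A)) := by
    have h1 := tendsto_finset_sum Finset.univ (fun i (_ : i ∈ Finset.univ) => (hr i).const_mul (d i))
    have h2 : ∑ i, d i * c i = d1 * A := by
      rw [hAdef, Finset.mul_sum]
      apply Finset.sum_congr rfl
      intro i _
      rw [hcdef]
      dsimp
      split
      · rename_i hh; rw [hh]
      · simp
    rwa [h2] at h1
  have hden : Tendsto (fun t => ∑ i, x 0 i * Real.exp (β * (d i - d1) * u t))
      atTop (nhds A) := by
    have h1 := tendsto_finset_sum Finset.univ (fun i (_ : i ∈ Finset.univ) => hr i)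
    rwa [← hAdef] at h1
  have hratio : ∀ t : ℝ, 0 ≤ t → W t / S t =
      (∑ i, d i * (x 0 i * Real.exp (β * (d i - d1) * u t))) /
      (∑ i, x 0 i * Real.exp (β * (d i - d1) * u t)) := by
    intro t ht
    have hxsplit : ∀ i : Fin n, x t i =
        (x 0 i * Real.exp (β * (d i - d1) * u t)) * Real.exp (β * d1 * u t - α * t) := by
      intro i
      have he : Real.exp (β * d i * u t - α * t) =
          Real.exp (β * (d i - d1) * u t) * Real.exp (β * d1 * u t - α * t) := by
        rw [← Real.exp_add]; congr 1; ring
      rw [hxf i t ht, he]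
      ring
    have hW : W t = (∑ i, d i * (x 0 i * Real.exp (β * (d i - d1) * u t))) *
        Real.exp (β * d1 * u t - α * t) := by
      rw [hWdef]
      dsimp
      rw [Finset.sum_mul]
      apply Finset.sum_congr rfl
      intro i _
      rw [hxsplit i]
      ring
    have hSt : S t = (∑ i, x 0 i * Real.exp (β * (d i - d1) * u t)) *
        Real.exp (β * d1 * u t - α * t) := by
      rw [hSdef]
      dsimp
      rw [Finset.sum_mul]
      exact Finset.sum_congr rfl (fun i _ => hxsplit i)
    rw [hW, hSt, mul_div_mul_right _ _ (Real.exp_ne_zero _)]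
  have hDlim : Tendsto (fun t => W t / S t) atTop (nhds d1) := by
    have h1 := hnum.div hden hApos.ne'
    have h2 : d1 * A / A = d1 := mul_div_cancel_right₀ d1 hApos.ne'
    rw [h2] at h1
    apply h1.congr'
    filter_upwards [eventually_ge_atTop (0:ℝ)] with t ht
    exact (hratio t ht).symm
  -- final convergence
  set L : ℝ := β * d1 / α with hLdef
  have hLpos : 0 < L := by rw [hLdef]; positivity
  have hfinal : Tendsto S atTop (nhds L) := by
    rw [Metric.tendsto_atTop]
    intro ε hε
    set ε' : ℝ := α * ε / (2 * β) with hε'def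
    have hε'pos : 0 < ε' := by rw [hε'def]; positivity
    obtain ⟨T₀, hT₀⟩ := (Metric.tendsto_atTop.mp hDlim) ε' hε'pos
    set T : ℝ := max T₀ 0 with hTdef
    have hT0 : (0:ℝ) ≤ T := le_max_right T₀ 0
    have hDT : ∀ s, T ≤ s → |W s / S s - d1| < ε' := by
      intro s hs
      have := hT₀ s (le_trans (le_max_left T₀ 0) hs)
      rwa [Real.dist_eq] at this
    set K : ℝ := M + L + ε/2 + 1 with hKdef
    have hexp0 : Tendsto (fun t => K * Real.exp (-α * (t - T))) atTop (nhds 0) := by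
      have h1 : Tendsto (fun t : ℝ => -α * (t - T)) atTop atBot := by
        have h2 := (tendsto_atTop_add_const_right atTop (-T) tendsto_id).const_mul_atTop_of_neg
          (by linarith : -α < 0)
        simpa [sub_eq_add_neg] using h2
      have h2 := Real.tendsto_exp_atBot.comp h1
      simpa using h2.const_mul K
    obtain ⟨T₁, hT₁⟩ := eventually_atTop.mp
      (hexp0.eventually_lt_const (show (0:ℝ) < ε/2 by linarith))
    refine ⟨max T T₁, fun t ht => ?_⟩
    have htT : T ≤ t := le_trans (le_max_left _ _) ht
    have ht1 : T₁ ≤ t := le_trans (le_max_right _ _) ht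
    have hsm : K * Real.exp (-α * (t - T)) < ε/2 := hT₁ t ht1
    have hepos : (0:ℝ) < Real.exp (-α * (t - T)) := Real.exp_pos _
    have hup := ode_upper (S := S) (S' := fun s => -α * S s + β * (W s / S s))
      (C := β * d1 + β * ε') hα htT (fun s hs => hSd2 s (le_trans hT0 hs.1))
      (fun s hs => by
        have h3 := abs_lt.mp (hDT s hs.1)
        have h4 : W s / S s ≤ d1 + ε' := by linarith [h3.2]
        have h5 := mul_le_mul_of_nonneg_left h4 hβ.le
        linarith)
    have hlo := ode_lower (S := S) (S' := fun s => -α * S s + β * (W s / S s))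
      (C := β * d1 - β * ε') hα htT (fun s hs => hSd2 s (le_trans hT0 hs.1))
      (fun s hs => by
        have h3 := abs_lt.mp (hDT s hs.1)
        have h4 : d1 - ε' ≤ W s / S s := by linarith [h3.1]
        have h5 := mul_le_mul_of_nonneg_left h4 hβ.le
        linarith)
    have hC1 : (β * d1 + β * ε') / α = L + ε/2 := by
      rw [hLdef, hε'def]; field_simp
    have hC2 : (β * d1 - β * ε') / α = L - ε/2 := by
      rw [hLdef, hε'def]; field_simp
    have hST1 : S T ≤ M := hSM T hT0
    have hST2 : 0 < S T := hSpos T hT0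
    rw [hC1] at hup
    rw [hC2] at hlo
    have hb1 : (S T - (L + ε/2)) * Real.exp (-α * (t - T)) ≤ K * Real.exp (-α * (t - T)) := by
      apply mul_le_mul_of_nonneg_right _ hepos.le
      rw [hKdef]; linarith
    have hb2 : -(K * Real.exp (-α * (t - T))) ≤ (S T - (L - ε/2)) * Real.exp (-α * (t - T)) := by
      have h5 : -K ≤ S T - (L - ε/2) := by rw [hKdef]; linarith
      have h6 := mul_le_mul_of_nonneg_right h5 hepos.le
      simpa [neg_mul] using h6
    rw [Real.dist_eq, abs_lt]
    constructor
    · linarith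
    · linarith
  exact ⟨L, hLpos, hfinal⟩
end

section
/- For any solution x of the EigenAnt dynamics with positive initial conditions, every component corresponding to a strictly suboptimal path vanishes asymptotically: for every index i with d_i < d_1, one has x_i(t) → 0 as t → +∞. -/
open Filter MeasureTheory Set Real

theorem stmt11
    (n : ℕ) (hn : 0 < n) (α β : ℝ) (hα : 0 < α) (hβ : 0 < β)
    (d : Fin n → ℝ) (hd : ∀ i j : Fin n, i ≤ j → d j ≤ d i) (hdpos : ∀ i, 0 < d i)
    (x : ℝ → Fin n → ℝ)
    (hS : ∀ t : ℝ, 0 ≤ t → (∑ j, x t j) ≠ 0)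
    (hode : ∀ (i : Fin n) (t : ℝ), 0 ≤ t →
      HasDerivAt (fun s => x s i) ((-α + β * d i / (∑ j, x t j)) * x t i) t)
    (hx0 : ∀ i, 0 < x 0 i)
    :
    ∀ i : Fin n, d i < d ⟨0, hn⟩ → Tendsto (fun t => x t i) atTop (nhds 0) := by
  intro i hi
  set i1 : Fin n := ⟨0, hn⟩ with hi1def
  haveI : Nonempty (Fin n) := ⟨i1⟩
  have hd1 : ∀ j, d j ≤ d i1 := fun j => hd i1 j (by simp [hi1def, Fin.le_def])
  set S : ℝ → ℝ := fun t => ∑ j, x t j with hSdef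
  -- continuity
  have hxc : ∀ j, ContinuousOn (fun t => x t j) (Ici 0) := fun j t ht =>
    (hode j t ht).continuousAt.continuousWithinAt
  have hScont : ContinuousOn S (Ici 0) := by
    apply continuousOn_finset_sum
    intro j _
    exact hxc j
  have hS0 : 0 < S 0 := Finset.sum_pos (fun j _ => hx0 j) Finset.univ_nonempty
  -- S positive on [0, ∞)
  have hSpos : ∀ t : ℝ, 0 ≤ t → 0 < S t := by
    intro t ht
    by_contra h
    have hlt : S t < 0 := lt_of_le_of_ne (not_lt.1 h) (hS t ht)
    have hsub : Icc (S t) (S 0) ⊆ S '' Icc 0 t :=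
      intermediate_value_Icc' ht (hScont.mono (fun s hs => hs.1))
    obtain ⟨s, hs, hs0⟩ := hsub ⟨hlt.le, hS0.le⟩
    exact hS s hs.1 hs0
  -- extended positive continuous version of S
  set Sm : ℝ → ℝ := fun s => S (max s 0) with hSmdef
  have hSmc : Continuous Sm :=
    hScont.comp_continuous (continuous_id.max continuous_const) (fun s => mem_Ici.2 (le_max_right _ _))
  have hSmpos : ∀ s, 0 < Sm s := fun s => hSpos _ (le_max_right _ _)
  have hSmeq : ∀ t : ℝ, 0 ≤ t → Sm t = S t := fun t ht => by
    simp [hSmdef, max_eq_left ht]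
  -- coefficient functions
  set c : Fin n → ℝ → ℝ := fun j s => -α + β * d j / Sm s with hcdef
  have hcc : ∀ j, Continuous (c j) :=
    fun j => continuous_const.add (continuous_const.div hSmc (fun s => (hSmpos s).ne'))
  have hceq : ∀ (j : Fin n) (t : ℝ), 0 ≤ t → c j t = -α + β * d j / S t := fun j t ht => by
    simp [hcdef, hSmeq t ht]
  -- antiderivatives
  set F : Fin n → ℝ → ℝ := fun j t => ∫ s in (0:ℝ)..t, c j s with hFdef
  have hFd : ∀ (j : Fin n) (t : ℝ), HasDerivAt (F j) (c j t) t := fun j t =>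
    ((hcc j).integral_hasStrictDerivAt 0 t).hasDerivAt
  have hFcont : ∀ j : Fin n, Continuous (F j) := fun j =>
    continuous_iff_continuousAt.2 fun t => (hFd j t).continuousAt
  -- explicit formula
  have hform : ∀ (j : Fin n) (b : ℝ), 0 ≤ b → x b j = x 0 j * Real.exp (F j b) := by
    intro j b hb
    set g : ℝ → ℝ := fun t => x t j * Real.exp (-(F j t)) with hgdef
    have hgc : ContinuousOn g (Icc 0 b) :=
      ((hxc j).mono (fun s hs => hs.1)).mul
        ((Real.continuous_exp.comp (hFcont j).neg).continuousOn)
    have hgd : ∀ t ∈ Ico (0:ℝ) b, HasDerivWithinAt g 0 (Ici t) t := by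
      intro t ht
      have hx' := hode j t ht.1
      have hE : HasDerivAt (fun s => Real.exp (-(F j s)))
          (Real.exp (-(F j t)) * -(c j t)) t := ((hFd j t).neg).exp
      have hmul := hx'.mul hE
      have h0 : (-α + β * d j / S t) * x t j * Real.exp (-(F j t)) +
          x t j * (Real.exp (-(F j t)) * -(c j t)) = 0 := by
        rw [hceq j t ht.1]; ring
      rw [h0] at hmul
      exact hmul.hasDerivWithinAt
    have hconst := constant_of_has_deriv_right_zero hgc hgd b ⟨hb, le_refl b⟩
    have hF0 : F j 0 = 0 := intervalIntegral.integral_same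
    rw [hgdef] at hconst
    simp only [hF0, neg_zero, Real.exp_zero, mul_one] at hconst
    have he := Real.exp_ne_zero (F j b)
    rw [Real.exp_neg] at hconst
    field_simp at hconst
    linarith [hconst]
  have hxpos : ∀ (j : Fin n) (t : ℝ), 0 ≤ t → 0 < x t j := by
    intro j t ht
    rw [hform j t ht]
    exact mul_pos (hx0 j) (Real.exp_pos _)
  -- upper bound on S
  set c0 : ℝ := β * d i1 / α with hc0def
  have hc0pos : 0 < c0 := div_pos (mul_pos hβ (hdpos i1)) hα
  set G : ℝ → ℝ := fun t => (S t - c0) * Real.exp (α * t) with hGdef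
  have hG' : ∀ t : ℝ, 0 ≤ t → HasDerivAt G
      ((∑ j, (-α + β * d j / S t) * x t j) * Real.exp (α * t) +
        (S t - c0) * (Real.exp (α * t) * α)) t := by
    intro t ht
    have hSd : HasDerivAt S (∑ j, (-α + β * d j / S t) * x t j) t :=
      HasDerivAt.fun_sum (fun j _ => hode j t ht)
    have hEd : HasDerivAt (fun s => Real.exp (α * s)) (Real.exp (α * t) * α) t := by
      have : HasDerivAt (fun s : ℝ => α * s) α t := by
        simpa using (hasDerivAt_id t).const_mul α
      simpa using this.exp
    exact (hSd.sub_const c0).mul hEd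
  have hsumle : ∀ t : ℝ, 0 ≤ t →
      (∑ j, (-α + β * d j / S t) * x t j) ≤ -α * S t + β * d i1 := by
    intro t ht
    have h1 : (∑ j, (-α + β * d j / S t) * x t j) ≤
        ∑ j, (-α + β * d i1 / S t) * x t j := by
      apply Finset.sum_le_sum
      intro j _
      have hxj := (hxpos j t ht).le
      gcongr <;> first | exact (hSpos t ht).le | exact (hSpos t ht) | exact hd1 j | exact hxj | positivity
    have h2 : (∑ j, (-α + β * d i1 / S t) * x t j) = (-α + β * d i1 / S t) * S t := by
      rw [hSdef, ← Finset.mul_sum]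
    have h3 : (-α + β * d i1 / S t) * S t = -α * S t + β * d i1 := by
      field_simp [(hSpos t ht).ne']
    calc (∑ j, (-α + β * d j / S t) * x t j) ≤ _ := h1
      _ = _ := h2
      _ = _ := h3
  have hGanti : AntitoneOn G (Ici 0) := by
    apply antitoneOn_of_deriv_nonpos (convex_Ici 0)
    · exact ((hScont.sub continuousOn_const).mul
        ((Real.continuous_exp.comp (continuous_const.mul continuous_id)).continuousOn))
    · intro t ht
      rw [interior_Ici] at ht
      exact ((hG' t (le_of_lt ht)).differentiableAt).differentiableWithinAt
    · intro t ht
      rw [interior_Ici] at ht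
      rw [(hG' t (le_of_lt ht)).deriv]
      have hE := Real.exp_pos (α * t)
      have hs := hsumle t (le_of_lt ht)
      have hac0 : α * c0 = β * d i1 := by
        rw [hc0def]; field_simp
      nlinarith [mul_le_mul_of_nonneg_right hs hE.le]
  set M : ℝ := max (S 0) c0 with hMdef
  have hMpos : 0 < M := lt_of_lt_of_le hc0pos (le_max_right _ _)
  have hSM : ∀ t : ℝ, 0 ≤ t → S t ≤ M := by
    intro t ht
    have hGt := hGanti (self_mem_Ici) ht ht
    have hG0 : G 0 = S 0 - c0 := by simp [hGdef]
    rw [hG0] at hGt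
    simp only [hGdef] at hGt
    by_cases hcase : S t ≤ c0
    · exact le_trans hcase (le_max_right _ _)
    · push_neg at hcase
      have hE1 : (1:ℝ) ≤ Real.exp (α * t) := by
        rw [← Real.exp_zero]
        exact Real.exp_le_exp.2 (by positivity)
      have h4 : (0:ℝ) ≤ S t - c0 := by linarith
      have h5 := mul_le_mul_of_nonneg_left hE1 h4
      have : S t - c0 ≤ S 0 - c0 := by nlinarith [h5, hGt]
      have : S t ≤ S 0 := by linarith
      exact le_trans this (le_max_left _ _)
  -- bound on F i1
  set K : ℝ := Real.log (M / x 0 i1) with hKdef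
  have hFK : ∀ t : ℝ, 0 ≤ t → F i1 t ≤ K := by
    intro t ht
    have h1 : x 0 i1 * Real.exp (F i1 t) ≤ M := by
      rw [← hform i1 t ht]
      refine le_trans ?_ (hSM t ht)
      exact Finset.single_le_sum (f := fun j => x t j) (fun j _ => (hxpos j t ht).le)
        (Finset.mem_univ i1)
    have h2 : Real.exp (F i1 t) ≤ M / x 0 i1 := by
      rw [le_div_iff₀ (hx0 i1)]
      linarith [h1]
    exact (Real.le_log_iff_exp_le (div_pos hMpos (hx0 i1))).2 h2
  -- split F into linear part and integral part
  set I : ℝ → ℝ := fun t => ∫ s in (0:ℝ)..t, (Sm s)⁻¹ with hIdef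
  have hFI : ∀ (j : Fin n) (t : ℝ), F j t = -(α * t) + β * d j * I t := by
    intro j t
    have hint : IntervalIntegrable (fun s => (Sm s)⁻¹) volume 0 t :=
      (hSmc.inv₀ (fun s => (hSmpos s).ne')).intervalIntegrable 0 t
    have : F j t = ∫ s in (0:ℝ)..t, (-α + β * d j * (Sm s)⁻¹) := by
      simp only [hFdef, hcdef, div_eq_mul_inv]
    rw [this, intervalIntegral.integral_add (intervalIntegrable_const) (hint.const_mul _),
      intervalIntegral.integral_const, intervalIntegral.integral_const_mul]
    simp only [hIdef, intervalIntegral.integral_const, smul_eq_mul, sub_zero]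
    ring
  have hI0 : ∀ t : ℝ, 0 ≤ t → 0 ≤ I t := by
    intro t ht
    exact intervalIntegral.integral_nonneg ht (fun s _ => (inv_nonneg).2 (hSmpos s).le)
  -- the decay estimate
  set ρ : ℝ := d i / d i1 with hρdef
  have hρ0 : 0 ≤ ρ := div_nonneg (hdpos i).le (hdpos i1).le
  have hρ1 : ρ < 1 := (div_lt_one (hdpos i1)).2 hi
  have hup : ∀ t : ℝ, 0 ≤ t → x t i ≤ x 0 i * Real.exp (-((1 - ρ) * α) * t + ρ * K) := by
    intro t ht
    have hK1 : β * d i1 * I t ≤ α * t + K := by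
      have := hFK t ht
      rw [hFI i1 t] at this
      linarith
    have heq : β * d i * I t = ρ * (β * d i1 * I t) := by
      rw [hρdef, div_mul_eq_mul_div, eq_div_iff (hdpos i1).ne']
      ring
    have h2 : ρ * (β * d i1 * I t) ≤ ρ * (α * t + K) :=
      mul_le_mul_of_nonneg_left hK1 hρ0
    have h3 : F i t ≤ -((1 - ρ) * α) * t + ρ * K := by
      rw [hFI i t]
      nlinarith [heq, h2]
    rw [hform i t ht]
    exact mul_le_mul_of_nonneg_left (Real.exp_le_exp.2 h3) (hx0 i).le
  -- conclusion by squeezing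
  have hlin : Tendsto (fun t : ℝ => -((1 - ρ) * α) * t + ρ * K) atTop atBot := by
    apply tendsto_atBot_add_const_right
    exact (tendsto_const_mul_atBot_of_neg (by nlinarith)).2 tendsto_id
  have hupper : Tendsto (fun t : ℝ => x 0 i * Real.exp (-((1 - ρ) * α) * t + ρ * K))
      atTop (nhds 0) := by
    have := (Real.tendsto_exp_atBot).comp hlin
    have h := this.const_mul (x 0 i)
    simpa using h
  apply tendsto_of_tendsto_of_tendsto_of_le_of_le' tendsto_const_nhds hupper
  · filter_upwards [eventually_ge_atTop (0:ℝ)] with t ht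
    exact (hxpos i t ht).le
  · filter_upwards [eventually_ge_atTop (0:ℝ)] with t ht
    exact hup t ht
end

section
/- For any solution x of the EigenAnt dynamics with positive initial conditions, the total pheromone concentrates on the shortest paths: lim_{t→∞} S(t) = lim_{t→∞} Σ_{j : d_j = d_1} x_j(t) = β d_1 / α, where S(t) := Σ_{j=1}^n x_j(t). -/
open Filter MeasureTheory Set Real

theorem stmt12
    (n : ℕ) (hn : 0 < n) (α β : ℝ) (hα : 0 < α) (hβ : 0 < β)
    (d : Fin n → ℝ) (hd : ∀ i j : Fin n, i ≤ j → d j ≤ d i) (hdpos : ∀ i, 0 < d i)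
    (x : ℝ → Fin n → ℝ)
    (hS : ∀ t : ℝ, 0 ≤ t → (∑ j, x t j) ≠ 0)
    (hode : ∀ (i : Fin n) (t : ℝ), 0 ≤ t →
      HasDerivAt (fun s => x s i) ((-α + β * d i / (∑ j, x t j)) * x t i) t)
    (hx0 : ∀ i, 0 < x 0 i)
    :
    Tendsto (fun t => ∑ j, x t j) atTop (nhds (β * d ⟨0, hn⟩ / α)) ∧
    Tendsto (fun t => ∑ j ∈ Finset.univ.filter (fun j => d j = d ⟨0, hn⟩), x t j)
      atTop (nhds (β * d ⟨0, hn⟩ / α)) := by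
  have hne : Nonempty (Fin n) := ⟨⟨0, hn⟩⟩
  set i0 : Fin n := ⟨0, hn⟩ with hi0
  have hd1 : ∀ i, d i ≤ d i0 := fun i => hd i0 i (Fin.le_def.2 (Nat.zero_le _))
  set c : ℝ := β * d i0 / α with hc
  have hcpos : 0 < c := by
    have := hdpos i0
    positivity
  set S : ℝ → ℝ := fun t => ∑ j, x t j with hSdef
  have hSderiv0 : ∀ t : ℝ, 0 ≤ t →
      HasDerivAt S (∑ i, (-α + β * d i / S t) * x t i) t := fun t ht =>
    HasDerivAt.fun_sum (fun i _ => hode i t ht)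
  have hScont : ∀ t : ℝ, 0 ≤ t → ContinuousAt S t := fun t ht =>
    (hSderiv0 t ht).continuousAt
  have hSpos : ∀ t : ℝ, 0 ≤ t → 0 < S t := by
    intro t ht
    by_contra h
    push_neg at h
    have h0 : 0 < S 0 := Finset.sum_pos (fun i _ => hx0 i) Finset.univ_nonempty
    have hlt : S t < 0 := lt_of_le_of_ne h (hS t ht)
    have hcontOn : ContinuousOn S (Icc 0 t) := fun s hs => (hScont s hs.1).continuousWithinAt
    obtain ⟨s, hs, hs0⟩ := intermediate_value_Icc' ht hcontOn ⟨hlt.le, h0.le⟩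
    exact hS s hs.1 hs0
  set Sb : ℝ → ℝ := fun t => S (max t 0) with hSbdef
  have hSbcont : Continuous Sb := by
    rw [continuous_iff_continuousAt]
    intro t
    show ContinuousAt (S ∘ fun u => max u 0) t
    exact ContinuousAt.comp (g := S) (f := fun u : ℝ => max u 0)
      (hScont (max t 0) (le_max_right _ _))
      ((continuous_id.max continuous_const).continuousAt)
  have hSbpos : ∀ t, 0 < Sb t := fun t => hSpos _ (le_max_right _ _)
  have hSbeq : ∀ t : ℝ, 0 ≤ t → Sb t = S t := fun t ht => by
    simp only [hSbdef, max_eq_left ht]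
  set I : ℝ → ℝ := fun t => ∫ s in (0:ℝ)..t, (Sb s)⁻¹ with hIdef
  have hIderiv : ∀ t, HasDerivAt I (Sb t)⁻¹ t := fun t =>
    (Continuous.integral_hasStrictDerivAt (hSbcont.inv₀ fun s => (hSbpos s).ne') 0 t).hasDerivAt
  have hI0 : I 0 = 0 := intervalIntegral.integral_same
  -- the exponential representation
  have hGderiv : ∀ (i : Fin n) (s : ℝ),
      HasDerivAt (fun u => -(α*u) + β * d i * I u) (-α + β * d i * (Sb s)⁻¹) s := by
    intro i s
    have h1 : HasDerivAt (fun u : ℝ => -(α*u)) (-α) s := by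
      simpa using ((hasDerivAt_id s).const_mul α).fun_neg
    exact h1.add ((hIderiv s).const_mul (β * d i))
  have hrep : ∀ (i : Fin n) (t : ℝ), 0 ≤ t →
      x t i = x 0 i * exp (-(α*t) + β * d i * I t) := by
    intro i t ht
    have key : ∀ s ∈ Icc (0:ℝ) t,
        (fun u => x u i * exp (-(-(α*u) + β * d i * I u))) s
          = (fun u => x u i * exp (-(-(α*u) + β * d i * I u))) 0 := by
      apply constant_of_has_deriv_right_zero
      · intro s hs
        exact ((hode i s hs.1).continuousAt.mul
          (Real.continuous_exp.continuousAt.comp ((hGderiv i s).continuousAt.neg))).continuousWithinAt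
      · intro s hs
        have hprod := (hode i s hs.1).mul (((hGderiv i s).neg).exp)
        have hz : (-α + β * d i / S s) * x s i * exp (-(-(α*s) + β * d i * I s))
            + x s i * (exp (-(-(α*s) + β * d i * I s)) * -(-α + β * d i * (Sb s)⁻¹)) = 0 := by
          rw [hSbeq s hs.1]
          have hSs := (hSpos s hs.1).ne'
          field_simp
          ring
        replace hprod := hprod.congr_deriv hz
        exact hprod.hasDerivWithinAt
    have h := key t ⟨ht, le_refl t⟩
    simp only at h
    rw [Real.exp_neg, Real.exp_neg, hI0] at h
    have hG0 : -(α*(0:ℝ)) + β * d i * 0 = 0 := by ring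
    rw [hG0, Real.exp_zero, inv_one, mul_one] at h
    have hEpos : (0:ℝ) < exp (-(α*t) + β * d i * I t) := Real.exp_pos _
    field_simp at h
    linarith
  have hxpos : ∀ (i : Fin n) (t : ℝ), 0 ≤ t → 0 < x t i := fun i t ht => by
    rw [hrep i t ht]; exact mul_pos (hx0 i) (exp_pos _)
  have hxleS : ∀ (i : Fin n) (t : ℝ), 0 ≤ t → x t i ≤ S t := fun i t ht =>
    Finset.single_le_sum (f := fun j => x t j) (fun j _ => (hxpos j t ht).le) (Finset.mem_univ i)
  set F : ℝ → ℝ := fun t => ∑ i, d i * x t i with hFdef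
  have hFle : ∀ t : ℝ, 0 ≤ t → F t ≤ d i0 * S t := by
    intro t ht
    calc F t ≤ ∑ i, d i0 * x t i :=
          Finset.sum_le_sum (fun i _ => mul_le_mul_of_nonneg_right (hd1 i) (hxpos i t ht).le)
      _ = d i0 * S t := (Finset.mul_sum _ _ _).symm
  have hlin : ∀ (k u : ℝ), HasDerivAt (fun v : ℝ => k * v) k u := fun k u => by
    simpa using (hasDerivAt_id u).const_mul k
  have hSderiv : ∀ t : ℝ, 0 ≤ t → HasDerivAt S (-(α * S t) + β * F t / S t) t := by
    intro t ht
    have h := hSderiv0 t ht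
    have heq : (∑ i, (-α + β * d i / S t) * x t i) = -(α * S t) + β * F t / S t := by
      have hSt := (hSpos t ht).ne'
      calc (∑ i, (-α + β * d i / S t) * x t i)
          = ∑ i, (-(α * x t i) + (β / S t) * (d i * x t i)) :=
            Finset.sum_congr rfl (fun i _ => by field_simp)
        _ = -(α * ∑ i, x t i) + (β / S t) * ∑ i, d i * x t i := by
            rw [Finset.sum_add_distrib, Finset.sum_neg_distrib, ← Finset.mul_sum,
              ← Finset.mul_sum]
        _ = -(α * S t) + β * F t / S t := by
            rw [div_mul_eq_mul_div]
    rwa [heq] at h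
  have hpsideriv : ∀ (k : ℝ) (u : ℝ), 0 ≤ u → HasDerivAt (fun v => (S v - k) * exp (α * v))
      ((-(α * S u) + β * F u / S u) * exp (α * u) + (S u - k) * (exp (α * u) * α)) u :=
    fun k u hu => ((hSderiv u hu).sub_const k).mul ((hlin α u).exp)
  have hαc : α * c = β * d i0 := by rw [hc]; field_simp
  -- upper bound on S
  have hub : ∀ t : ℝ, 0 ≤ t → S t ≤ c + (S 0 - c) * exp (-(α * t)) := by
    intro t ht
    have hanti : AntitoneOn (fun u => (S u - c) * exp (α * u)) (Ici 0) := by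
      apply antitoneOn_of_deriv_nonpos (convex_Ici 0)
      · intro u hu
        exact (hpsideriv c u hu).continuousAt.continuousWithinAt
      · intro u hu
        rw [interior_Ici] at hu
        exact (hpsideriv c u hu.le).differentiableAt.differentiableWithinAt
      · intro u hu
        rw [interior_Ici] at hu
        rw [(hpsideriv c u hu.le).deriv]
        have hSu := hSpos u hu.le
        have hFu := hFle u hu.le
        have hrw : (-(α * S u) + β * F u / S u) * exp (α * u) + (S u - c) * (exp (α * u) * α)
            = (β * F u / S u - α * c) * exp (α * u) := by ring
        rw [hrw]
        apply mul_nonpos_of_nonpos_of_nonneg _ (exp_pos _).le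
        rw [sub_nonpos, hαc, div_le_iff₀ hSu]
        nlinarith
    have h1 := hanti (self_mem_Ici) (mem_Ici.2 ht) ht
    simp only [mul_zero, exp_zero, mul_one] at h1
    have hE := exp_pos (α * t)
    rw [Real.exp_neg]
    have h2 := mul_le_mul_of_nonneg_right h1 (inv_nonneg.2 hE.le)
    rw [mul_assoc, mul_inv_cancel₀ hE.ne', mul_one] at h2
    linarith
  set M : ℝ := max (S 0) c with hM
  have hMpos : 0 < M := lt_of_lt_of_le hcpos (le_max_right _ _)
  have hSM : ∀ t : ℝ, 0 ≤ t → S t ≤ M := by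
    intro t ht
    have h := hub t ht
    have hE1 : exp (-(α * t)) ≤ 1 := exp_le_one_iff.2 (by nlinarith)
    have hE0 := exp_pos (-(α * t))
    rcases le_total (S 0) c with h0 | h0
    · have : (S 0 - c) * exp (-(α * t)) ≤ 0 := mul_nonpos_of_nonpos_of_nonneg (by linarith) hE0.le
      have := le_max_right (S 0) c
      linarith
    · have : (S 0 - c) * exp (-(α * t)) ≤ S 0 - c := by nlinarith
      have := le_max_left (S 0) c
      linarith
  have hIlb : ∀ t : ℝ, 0 ≤ t → t / M ≤ I t := by
    intro t ht
    have hint : IntervalIntegrable (fun s => (Sb s)⁻¹) volume 0 t :=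
      (hSbcont.inv₀ fun s => (hSbpos s).ne').intervalIntegrable 0 t
    have hmono := intervalIntegral.integral_mono_on ht intervalIntegrable_const hint
      (fun s hs => by
        have h1 : Sb s ≤ M := by rw [hSbeq s hs.1]; exact hSM s hs.1
        exact inv_anti₀ (hSbpos s) h1)
    simpa [intervalIntegral.integral_const, smul_eq_mul, div_eq_mul_inv] using hmono
  have hItop : Tendsto I atTop atTop := by
    apply tendsto_atTop_mono' atTop (f₁ := fun t => t / M)
    · filter_upwards [eventually_ge_atTop (0:ℝ)] with t ht using hIlb t ht
    · exact Tendsto.atTop_div_const hMpos tendsto_id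
  set r : Fin n → ℝ → ℝ := fun i t => (x 0 i / x 0 i0) * exp (β * (d i - d i0) * I t) with hrdef
  have hrpos : ∀ i t, 0 < r i t := fun i t =>
    mul_pos (div_pos (hx0 i) (hx0 i0)) (exp_pos _)
  have hsplit : ∀ (i : Fin n) (t : ℝ), 0 ≤ t → x t i = r i t * x t i0 := by
    intro i t ht
    rw [hrep i t ht, hrep i0 t ht]
    have hkey : (-(α*t) + β * d i * I t) = (β * (d i - d i0) * I t) + (-(α*t) + β * d i0 * I t) := by
      ring
    rw [hkey, Real.exp_add, hrdef]
    have := (hx0 i0).ne'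
    field_simp
  have hrtend : ∀ i : Fin n, d i ≠ d i0 → Tendsto (r i) atTop (nhds 0) := by
    intro i hi
    have hneg : β * (d i - d i0) < 0 :=
      mul_neg_of_pos_of_neg hβ (sub_neg.2 (lt_of_le_of_ne (hd1 i) hi))
    have h1 : Tendsto (fun t => β * (d i - d i0) * I t) atTop atBot :=
      Tendsto.const_mul_atTop_of_neg hneg hItop
    have h2 : Tendsto (fun t => exp (β * (d i - d i0) * I t)) atTop (nhds 0) :=
      Real.tendsto_exp_atBot.comp h1
    have h3 := h2.const_mul (x 0 i / x 0 i0)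
    simpa [hrdef] using h3
  have hxbound : ∀ (i : Fin n) (t : ℝ), 0 ≤ t → x t i ≤ r i t * M := by
    intro i t ht
    rw [hsplit i t ht]
    exact mul_le_mul_of_nonneg_left (le_trans (hxleS i0 t ht) (hSM t ht)) (hrpos i t).le
  have hxtail : ∀ i : Fin n, d i ≠ d i0 → Tendsto (fun t => x t i) atTop (nhds 0) := by
    intro i hi
    apply tendsto_of_tendsto_of_tendsto_of_le_of_le' (g := fun _ : ℝ => (0:ℝ))
      (h := fun t => r i t * M)
    · exact tendsto_const_nhds
    · simpa using (hrtend i hi).mul_const M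
    · filter_upwards [eventually_ge_atTop (0:ℝ)] with t ht using (hxpos i t ht).le
    · filter_upwards [eventually_ge_atTop (0:ℝ)] with t ht using hxbound i t ht
  have hm : Tendsto (fun t => d i0 - F t / S t) atTop (nhds 0) := by
    apply tendsto_of_tendsto_of_tendsto_of_le_of_le' (g := fun _ : ℝ => (0:ℝ))
      (h := fun t => ∑ i, (d i0 - d i) * r i t)
    · exact tendsto_const_nhds
    · have hterm : ∀ i : Fin n, Tendsto (fun t => (d i0 - d i) * r i t) atTop (nhds 0) := by
        intro i
        by_cases hi : d i = d i0
        · simp only [hi, sub_self, zero_mul]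
          exact tendsto_const_nhds
        · simpa using ((hrtend i hi).const_mul (d i0 - d i))
      have := tendsto_finset_sum (Finset.univ : Finset (Fin n)) (fun i _ => hterm i)
      simpa using this
    · filter_upwards [eventually_ge_atTop (0:ℝ)] with t ht
      have hSt := hSpos t ht
      have hF := hFle t ht
      rw [sub_nonneg, div_le_iff₀ hSt]
      linarith
    · filter_upwards [eventually_ge_atTop (0:ℝ)] with t ht
      have hSt := hSpos t ht
      have hterm : ∀ i : Fin n, (d i0 - d i) * x t i ≤ ((d i0 - d i) * r i t) * S t := by
        intro i
        have h1 : x t i ≤ r i t * S t := by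
          rw [hsplit i t ht]
          exact mul_le_mul_of_nonneg_left (hxleS i0 t ht) (hrpos i t).le
        calc (d i0 - d i) * x t i ≤ (d i0 - d i) * (r i t * S t) :=
              mul_le_mul_of_nonneg_left h1 (sub_nonneg.2 (hd1 i))
          _ = ((d i0 - d i) * r i t) * S t := by ring
      have hsum : ∑ i, (d i0 - d i) * x t i ≤ (∑ i, (d i0 - d i) * r i t) * S t := by
        rw [Finset.sum_mul]
        exact Finset.sum_le_sum fun i _ => hterm i
      have hexp : d i0 * S t - F t = ∑ i, (d i0 - d i) * x t i := by
        simp only [hSdef, hFdef, Finset.mul_sum, sub_mul, Finset.sum_sub_distrib]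
      have heq2 : d i0 - F t / S t = (d i0 * S t - F t) / S t := by
        field_simp
      rw [heq2, div_le_iff₀ hSt, hexp]
      exact hsum
  have hStend : Tendsto S atTop (nhds c) := by
    rw [Metric.tendsto_nhds]
    intro ε hε
    have hup : ∀ᶠ t in atTop, S t - c < ε := by
      have hat : Tendsto (fun t : ℝ => α * t) atTop atTop :=
        Tendsto.const_mul_atTop hα tendsto_id
      have hexp0 : Tendsto (fun t : ℝ => exp (-(α * t))) atTop (nhds 0) :=
        Real.tendsto_exp_neg_atTop_nhds_zero.comp hat
      have h1 : Tendsto (fun t => (S 0 - c) * exp (-(α * t))) atTop (nhds 0) := by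
        simpa using hexp0.const_mul (S 0 - c)
      filter_upwards [h1.eventually_lt_const hε, eventually_ge_atTop (0:ℝ)] with t h2 ht
      have := hub t ht
      linarith
    have hlow : ∀ᶠ t in atTop, c - ε < S t := by
      set δ : ℝ := α * ε / (2*β) with hδ
      have hδpos : 0 < δ := by positivity
      have hev : ∀ᶠ t in atTop, (0 ≤ t ∧ d i0 - F t / S t < δ) :=
        (eventually_ge_atTop 0).and (hm.eventually_lt_const hδpos)
      obtain ⟨T, hT⟩ := eventually_atTop.1 hev
      have hT0 : 0 ≤ T := (hT T le_rfl).1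
      set c₂ : ℝ := c - ε/2 with hc₂
      have hψmono : MonotoneOn (fun u => (S u - c₂) * exp (α * u)) (Ici T) := by
        apply monotoneOn_of_deriv_nonneg (convex_Ici T)
        · intro u hu
          exact (hpsideriv c₂ u (le_trans hT0 hu)).continuousAt.continuousWithinAt
        · intro u hu
          rw [interior_Ici] at hu
          exact (hpsideriv c₂ u (le_trans hT0 hu.le)).differentiableAt.differentiableWithinAt
        · intro u hu
          rw [interior_Ici] at hu
          have huT : T ≤ u := hu.le
          have hu0 : 0 ≤ u := le_trans hT0 huT
          rw [(hpsideriv c₂ u hu0).deriv]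
          have hSu := hSpos u hu0
          have hmδ := (hT u huT).2
          have hrw : (-(α * S u) + β * F u / S u) * exp (α * u) + (S u - c₂) * (exp (α * u) * α)
              = (β * (F u / S u) - α * c₂) * exp (α * u) := by
            rw [hc₂, mul_div_assoc]
            ring
          rw [hrw]
          apply mul_nonneg _ (exp_pos _).le
          have hβδ : β * δ = α * ε / 2 := by
            rw [hδ]
            field_simp
          have h5 : β * (d i0 - F u / S u) < β * δ := (mul_lt_mul_iff_right₀ hβ).2 hmδ
          rw [hc₂]
          nlinarith [hαc]
      have h3 : Tendsto (fun t => (S T - c₂) * exp (α * T) * exp (-(α * t))) atTop (nhds 0) := by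
        have hat : Tendsto (fun t : ℝ => α * t) atTop atTop :=
          Tendsto.const_mul_atTop hα tendsto_id
        have hexp0 : Tendsto (fun t : ℝ => exp (-(α * t))) atTop (nhds 0) :=
          Real.tendsto_exp_neg_atTop_nhds_zero.comp hat
        simpa using hexp0.const_mul ((S T - c₂) * exp (α * T))
      filter_upwards [eventually_ge_atTop T, h3.eventually_const_lt (by linarith : -(ε/2) < (0:ℝ))]
        with t ht1 ht2
      have h4 := hψmono (self_mem_Ici) (mem_Ici.2 ht1) ht1
      have hE := exp_pos (α * t)
      have h5 : (S T - c₂) * exp (α * T) * (exp (α * t))⁻¹ ≤ S t - c₂ := by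
        rw [← div_eq_mul_inv, div_le_iff₀ hE]
        exact h4
      rw [Real.exp_neg] at ht2
      have hceq : c₂ = c - ε / 2 := hc₂
      linarith
    filter_upwards [hup, hlow] with t h1 h2
    rw [Real.dist_eq, abs_lt]
    constructor <;> linarith
  constructor
  · exact hStend
  · have htail : Tendsto (fun t => ∑ j ∈ Finset.univ.filter (fun j => ¬ d j = d i0), x t j)
        atTop (nhds 0) := by
      have h := tendsto_finset_sum (Finset.univ.filter fun j => ¬ d j = d i0)
        (fun i hi => hxtail i (by simpa using (Finset.mem_filter.1 hi).2))
      simpa using h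
    have heqf : (fun t => ∑ j ∈ Finset.univ.filter (fun j => d j = d i0), x t j)
        = fun t => S t - ∑ j ∈ Finset.univ.filter (fun j => ¬ d j = d i0), x t j := by
      funext t
      have h := Finset.sum_filter_add_sum_filter_not Finset.univ (fun j => d j = d i0) (x t)
      simp only [hSdef]
      linarith
    rw [heqf]
    have h := hStend.sub htail
    rw [sub_zero] at h
    exact h
end

section
/- For any solution x of the EigenAnt dynamics with positive initial conditions, every component corresponding to a shortest path converges to a positive limit proportional to its initial value: for every index i with d_i = d_1, one has x_i(t) → x_i(0)/(α σ_1) as t → +∞, where σ_1 := (1/(β d_1)) Σ_{j : d_j = d_1} x_j(0). Consequently, for any two indices i, i′ with d_i = d_{i′} = d_1, the ratio of the limits of x_i and x_{i′} equals x_i(0)/x_{i′}(0). -/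
open Filter MeasureTheory Set Real intervalIntegral

lemma ftcCont {f : ℝ → ℝ} (hf : Continuous f) (a t : ℝ) :
    HasDerivAt (fun u => ∫ s in a..u, f s) (f t) t :=
  intervalIntegral.integral_hasDerivAt_right (hf.intervalIntegrable a t)
    (hf.stronglyMeasurableAtFilter _ _) hf.continuousAt

lemma intExpMul (α T t : ℝ) (hα : α ≠ 0) :
    (∫ s in T..t, Real.exp (α * s)) = (Real.exp (α * t) - Real.exp (α * T)) / α := by
  rw [intervalIntegral.integral_comp_mul_left (fun x => Real.exp x) hα]
  rw [integral_exp]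
  rw [smul_eq_mul]; ring




lemma expNegTend {α : ℝ} (hα : 0 < α) :
    Tendsto (fun t => Real.exp (-(α*t))) atTop (nhds 0) :=
  Real.tendsto_exp_atBot.comp (tendsto_neg_atTop_atBot.comp (tendsto_id.const_mul_atTop hα))

lemma avgKey {α L : ℝ} (hα : 0 < α) {r : ℝ → ℝ} (hr : Continuous r)
    (hL : Tendsto r atTop (nhds L)) :
    Tendsto (fun t => Real.exp (-(α*t)) * ∫ s in (0:ℝ)..t, Real.exp (α*s) * (r s - L))
      atTop (nhds 0) := by
  have hcont : Continuous (fun s => Real.exp (α*s) * (r s - L)) := by fun_prop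
  rw [NormedAddCommGroup.tendsto_nhds_zero]
  intro ε hε
  obtain ⟨T₀, hT₀⟩ := (Metric.tendsto_atTop.mp hL) (ε*α/4) (by positivity)
  set T : ℝ := max T₀ 0 with hTdef
  have hT : ∀ s, T ≤ s → |r s - L| ≤ ε*α/4 := fun s hs =>
    le_of_lt (by simpa [Real.dist_eq] using hT₀ s (le_trans (le_max_left _ _) hs))
  set C : ℝ := |∫ s in (0:ℝ)..T, Real.exp (α*s) * (r s - L)| with hCdef
  have h2 : Tendsto (fun t => C * Real.exp (-(α*t))) atTop (nhds 0) := by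
    simpa using (expNegTend hα).const_mul C
  have h3 : ∀ᶠ t in atTop, C * Real.exp (-(α*t)) < ε/2 :=
    (tendsto_order.mp h2).2 _ (by positivity)
  filter_upwards [h3, eventually_ge_atTop T] with t h3t hTt
  have hsplit : (∫ s in (0:ℝ)..t, Real.exp (α*s) * (r s - L))
      = (∫ s in (0:ℝ)..T, Real.exp (α*s) * (r s - L))
        + ∫ s in T..t, Real.exp (α*s) * (r s - L) :=
    (intervalIntegral.integral_add_adjacent_intervals (hcont.intervalIntegrable _ _)
      (hcont.intervalIntegrable _ _)).symm
  have hI2 : ‖∫ s in T..t, Real.exp (α*s) * (r s - L)‖ ≤ (ε*α/4) * ((Real.exp (α*t))/α) := by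
    have hb : ∀ s ∈ Set.uIoc T t, ‖Real.exp (α*s) * (r s - L)‖ ≤ Real.exp (α*s) * (ε*α/4) := by
      intro s hs
      rw [Set.uIoc_of_le hTt] at hs
      have := hT s (le_of_lt hs.1)
      rw [norm_mul, Real.norm_eq_abs, Real.norm_eq_abs, abs_of_pos (Real.exp_pos _)]
      exact mul_le_mul_of_nonneg_left this (Real.exp_pos _).le
    have hnn : (0:ℝ) ≤ ∫ s in T..t, Real.exp (α*s) * (ε*α/4) :=
      intervalIntegral.integral_nonneg hTt (fun u _ => by positivity)
    calc ‖∫ s in T..t, Real.exp (α*s) * (r s - L)‖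
        ≤ |∫ s in T..t, Real.exp (α*s) * (ε*α/4)| := by
          apply intervalIntegral.norm_integral_le_abs_of_norm_le _
            ((by fun_prop : Continuous fun s => Real.exp (α*s) * (ε*α/4)).intervalIntegrable _ _)
          rw [MeasureTheory.ae_restrict_iff' measurableSet_uIoc]
          exact Filter.Eventually.of_forall hb
      _ = (ε*α/4) * ((Real.exp (α*t) - Real.exp (α*T))/α) := by
          rw [abs_of_nonneg hnn, intervalIntegral.integral_mul_const,
            intExpMul α T t (ne_of_gt hα)]; ring
      _ ≤ (ε*α/4) * ((Real.exp (α*t))/α) := by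
          gcongr
          linarith [(Real.exp_pos (α*T)).le]
  have hEt : (0:ℝ) < Real.exp (-(α*t)) := Real.exp_pos _
  have key : ‖Real.exp (-(α*t)) * ∫ s in (0:ℝ)..t, Real.exp (α*s) * (r s - L)‖
      ≤ C * Real.exp (-(α*t)) + ε/4 := by
    rw [hsplit, norm_mul, Real.norm_eq_abs, abs_of_pos hEt]
    have habs : |(∫ s in (0:ℝ)..T, Real.exp (α*s) * (r s - L))
        + ∫ s in T..t, Real.exp (α*s) * (r s - L)| ≤ C + (ε*α/4) * ((Real.exp (α*t))/α) :=
      (abs_add_le _ _).trans (add_le_add le_rfl hI2)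
    calc Real.exp (-(α*t)) * ‖_ + _‖ ≤ Real.exp (-(α*t)) * (C + (ε*α/4) * ((Real.exp (α*t))/α)) :=
          mul_le_mul_of_nonneg_left habs hEt.le
      _ = C * Real.exp (-(α*t)) + (ε/4) * (Real.exp (-(α*t)) * Real.exp (α*t)) := by
          field_simp
      _ = C * Real.exp (-(α*t)) + ε/4 := by rw [← Real.exp_add]; simp
  calc ‖_‖ ≤ C * Real.exp (-(α*t)) + ε/4 := key
    _ < ε/2 + ε/4 := by linarith
    _ < ε := by linarith

lemma avg {α L c : ℝ} (hα : 0 < α) {r : ℝ → ℝ} (hr : Continuous r)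
    (hL : Tendsto r atTop (nhds L)) :
    Tendsto (fun t => Real.exp (-(α*t)) * (c + ∫ s in (0:ℝ)..t, Real.exp (α*s) * r s))
      atTop (nhds (L/α)) := by
  have split : ∀ t, (∫ s in (0:ℝ)..t, Real.exp (α*s) * r s)
      = (∫ s in (0:ℝ)..t, Real.exp (α*s) * (r s - L)) + L * ((Real.exp (α*t) - 1)/α) := by
    intro t
    have h1 : (∫ s in (0:ℝ)..t, Real.exp (α*s) * (r s - L))
        + (∫ s in (0:ℝ)..t, L * Real.exp (α*s)) = ∫ s in (0:ℝ)..t, Real.exp (α*s) * r s := by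
      rw [← intervalIntegral.integral_add
        ((by fun_prop : Continuous fun s => Real.exp (α*s) * (r s - L)).intervalIntegrable _ _)
        ((by fun_prop : Continuous fun s => L * Real.exp (α*s)).intervalIntegrable _ _)]
      apply intervalIntegral.integral_congr; intro s _; ring
    have h2 : (∫ s in (0:ℝ)..t, L * Real.exp (α*s)) = L * ((Real.exp (α*t) - 1)/α) := by
      rw [intervalIntegral.integral_const_mul, intExpMul α 0 t hα.ne']
      simp [Real.exp_zero]
    linarith
  have heq : ∀ t, Real.exp (-(α*t)) * (c + ∫ s in (0:ℝ)..t, Real.exp (α*s) * r s)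
      = Real.exp (-(α*t)) * c
        + Real.exp (-(α*t)) * (∫ s in (0:ℝ)..t, Real.exp (α*s) * (r s - L))
        + (L/α - (L/α) * Real.exp (-(α*t))) := by
    intro t; rw [split t]
    have h1 : Real.exp (-(α*t)) * Real.exp (α*t) = 1 := by rw [← Real.exp_add]; simp
    linear_combination (L/α) * h1
  have main := (((expNegTend hα).mul_const c).add (avgKey hα hr hL)).add
    ((tendsto_const_nhds (x := L/α)).sub ((expNegTend hα).const_mul (L/α)))
  refine Tendsto.congr (fun t => (heq t).symm) ?_
  simpa using main

set_option maxHeartbeats 2000000 in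
theorem stmt13
    (n : ℕ) (hn : 0 < n) (α β : ℝ) (hα : 0 < α) (hβ : 0 < β)
    (d : Fin n → ℝ) (hd : ∀ i j : Fin n, i ≤ j → d j ≤ d i) (hdpos : ∀ i, 0 < d i)
    (x : ℝ → Fin n → ℝ)
    (hS : ∀ t : ℝ, 0 ≤ t → (∑ j, x t j) ≠ 0)
    (hode : ∀ (i : Fin n) (t : ℝ), 0 ≤ t →
      HasDerivAt (fun s => x s i) ((-α + β * d i / (∑ j, x t j)) * x t i) t)
    (hx0 : ∀ i, 0 < x 0 i)
    (σ1 : ℝ)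
    (hσ1 : σ1 = (1 / (β * d ⟨0, hn⟩)) * ∑ j ∈ Finset.univ.filter (fun j => d j = d ⟨0, hn⟩), x 0 j) :
    (∀ i : Fin n, d i = d ⟨0, hn⟩ →
      Tendsto (fun t => x t i) atTop (nhds (x 0 i / (α * σ1)))) ∧
    (∀ i i' : Fin n, d i = d ⟨0, hn⟩ → d i' = d ⟨0, hn⟩ →
      ∃ Li Li' : ℝ, Tendsto (fun t => x t i) atTop (nhds Li) ∧
        Tendsto (fun t => x t i') atTop (nhds Li') ∧
        Li / Li' = x 0 i / x 0 i') := by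
  have : Nonempty (Fin n) := ⟨⟨0, hn⟩⟩
  set i₀ : Fin n := ⟨0, hn⟩ with hi₀
  set S : ℝ → ℝ := fun t => ∑ j, x t j with hSdef
  -- continuity facts
  have hxcont : ∀ (i : Fin n) (t : ℝ), 0 ≤ t → ContinuousAt (fun s => x s i) t :=
    fun i t ht => (hode i t ht).continuousAt
  have hScontAt : ∀ t : ℝ, 0 ≤ t → ContinuousAt S t := by
    intro t ht
    exact tendsto_finset_sum _ (fun j _ => hxcont j t ht)
  have hGcont : Continuous (fun s => S (max s 0)) := by
    rw [continuous_iff_continuousAt]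
    intro s
    exact ContinuousAt.comp (f := fun u : ℝ => max u 0) (hScontAt _ (le_max_right s 0))
      ((continuous_id.max continuous_const).continuousAt)
  have hGne : ∀ s : ℝ, S (max s 0) ≠ 0 := fun s => hS _ (le_max_right _ _)
  set g : ℝ → ℝ := fun s => (S (max s 0))⁻¹ with hgdef
  have hgcont : Continuous g := hGcont.inv₀ hGne
  set φ : ℝ → ℝ := fun t => ∫ s in (0:ℝ)..t, g s with hφdef
  have hφ : ∀ t, HasDerivAt φ (g t) t := fun t => ftcCont hgcont 0 t
  have hφ0 : φ 0 = 0 := intervalIntegral.integral_same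
  have hgS : ∀ t : ℝ, 0 ≤ t → g t = (S t)⁻¹ := by
    intro t ht; simp only [hgdef, max_eq_left ht]
  have hφcont : Continuous φ := by
    rw [continuous_iff_continuousAt]; exact fun t => (hφ t).continuousAt
  -- closed form for x
  have hform : ∀ (i : Fin n) (t : ℝ), 0 ≤ t →
      x t i = x 0 i * Real.exp (-(α*t) + β * d i * φ t) := by
    intro i t ht
    set h : ℝ → ℝ := fun u => x u i * Real.exp (α*u - β * d i * φ u) with hhdef
    have hD : ∀ u : ℝ, 0 ≤ u → HasDerivAt h 0 u := by
      intro u hu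
      have e1 := hode i u hu
      have inner : HasDerivAt (fun s => α*s - β * d i * φ s) (α - β * d i * g u) u := by
        exact (((hasDerivAt_id u).const_mul α).sub ((hφ u).const_mul (β * d i))).congr_deriv (by ring)
      have e2 := inner.exp
      have e3 := e1.mul e2
      have hc : (-α + β * d i / S u) * x u i * Real.exp (α*u - β * d i * φ u)
          + x u i * (Real.exp (α*u - β * d i * φ u) * (α - β * d i * g u)) = 0 := by
        rw [hgS u hu, div_eq_mul_inv]; ring
      exact e3.congr_deriv hc
    have hcon : ∀ u ∈ Set.Icc (0:ℝ) t, h u = h 0 := by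
      apply constant_of_has_deriv_right_zero
      · exact fun u hu => ((hD u hu.1).continuousAt).continuousWithinAt
      · exact fun u hu => ((hD u hu.1).hasDerivWithinAt)
    have h1 : x t i * Real.exp (α*t - β * d i * φ t) = x 0 i := by
      have := hcon t ⟨ht, le_rfl⟩
      simpa [hhdef, hφ0] using this
    calc x t i = x t i * Real.exp ((α*t - β * d i * φ t) + (-(α*t) + β * d i * φ t)) := by
          norm_num
      _ = (x t i * Real.exp (α*t - β * d i * φ t)) * Real.exp (-(α*t) + β * d i * φ t) := by
          rw [Real.exp_add]; ring
      _ = x 0 i * Real.exp (-(α*t) + β * d i * φ t) := by rw [h1]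
  have hxpos : ∀ (i : Fin n) (t : ℝ), 0 ≤ t → 0 < x t i := by
    intro i t ht; rw [hform i t ht]; exact mul_pos (hx0 i) (Real.exp_pos _)
  have hSpos : ∀ t : ℝ, 0 ≤ t → 0 < S t := by
    intro t ht
    exact Finset.sum_pos (fun j _ => hxpos j t ht) Finset.univ_nonempty
  have hgpos : ∀ s : ℝ, 0 < g s := by
    intro s
    exact inv_pos.mpr (hSpos _ (le_max_right _ _))
  have hφmono : StrictMono φ := by
    apply strictMono_of_deriv_pos
    intro t; rw [(hφ t).deriv]; exact hgpos t
  have hφnonneg : ∀ t : ℝ, 0 ≤ t → 0 ≤ φ t := by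
    intro t ht
    rcases eq_or_lt_of_le ht with h | h
    · rw [← h, hφ0]
    · rw [← hφ0]; exact (hφmono h).le
  -- φ tends to infinity
  have hφtop : Tendsto φ atTop atTop := by
    apply tendsto_atTop_atTop_of_monotone hφmono.monotone
    by_contra hb
    push_neg at hb
    obtain ⟨M, hM⟩ := hb
    set C : ℝ := ∑ j, x 0 j * Real.exp (β * d j * M) with hCdef
    have hφM : ∀ t, φ t ≤ M := fun t => (hM t).le
    have hMnn : 0 ≤ M := le_trans (hφnonneg 0 le_rfl) (hφM 0)
    have hCpos : 0 < C :=
      Finset.sum_pos (fun j _ => mul_pos (hx0 j) (Real.exp_pos _)) Finset.univ_nonempty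
    have hSle : ∀ s : ℝ, 0 ≤ s → S s ≤ Real.exp (-(α*s)) * C := by
      intro s hs
      rw [hSdef]
      simp only
      rw [Finset.mul_sum]
      apply Finset.sum_le_sum
      intro j _
      rw [hform j s hs]
      rw [Real.exp_add]
      have : Real.exp (β * d j * φ s) ≤ Real.exp (β * d j * M) := by
        apply Real.exp_le_exp.mpr
        have : 0 < β * d j := mul_pos hβ (hdpos j)
        nlinarith [hφM s]
      calc x 0 j * (Real.exp (-(α*s)) * Real.exp (β * d j * φ s))
          ≤ x 0 j * (Real.exp (-(α*s)) * Real.exp (β * d j * M)) := by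
            apply mul_le_mul_of_nonneg_left _ (hx0 j).le
            exact mul_le_mul_of_nonneg_left this (Real.exp_pos _).le
        _ = Real.exp (-(α*s)) * (x 0 j * Real.exp (β * d j * M)) := by ring
    have hgge : ∀ s : ℝ, 0 ≤ s → Real.exp (α*s) / C ≤ g s := by
      intro s hs
      rw [hgS s hs]
      have h1 : S s ≤ Real.exp (-(α*s)) * C := hSle s hs
      have h2 : (Real.exp (-(α*s)) * C)⁻¹ ≤ (S s)⁻¹ :=
        inv_anti₀ (hSpos s hs) h1
      calc Real.exp (α*s) / C = (Real.exp (-(α*s)) * C)⁻¹ := by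
            rw [mul_inv, ← Real.exp_neg]; ring_nf
        _ ≤ (S s)⁻¹ := h2
    have hφge : ∀ t : ℝ, 0 ≤ t → (Real.exp (α*t) - 1) / (α*C) ≤ φ t := by
      intro t ht
      have hint : (∫ s in (0:ℝ)..t, Real.exp (α*s) / C) ≤ ∫ s in (0:ℝ)..t, g s := by
        apply intervalIntegral.integral_mono_on ht
          ((by fun_prop : Continuous fun s => Real.exp (α*s) / C).intervalIntegrable _ _)
          (hgcont.intervalIntegrable _ _)
        intro s hs; exact hgge s hs.1
      have heval : (∫ s in (0:ℝ)..t, Real.exp (α*s) / C) = (Real.exp (α*t) - 1) / (α*C) := by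
        rw [intervalIntegral.integral_div, intExpMul α 0 t hα.ne']
        rw [mul_zero, Real.exp_zero]
        field_simp
      rw [← heval]; exact hint
    have hEtop : Tendsto (fun t => (Real.exp (α*t) - 1) / (α*C)) atTop atTop := by
      apply Tendsto.atTop_div_const (by positivity)
      apply tendsto_atTop_add_const_right atTop (-1)
        (Real.tendsto_exp_atTop.comp (tendsto_id.const_mul_atTop hα)) |>.congr
      intro t; simp only [Function.comp, id_eq]; ring
    obtain ⟨t, ht1, ht2⟩ := ((hEtop.eventually_gt_atTop M).and (eventually_ge_atTop (0:ℝ))).exists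
    exact absurd (lt_of_lt_of_le ht1 (hφge t ht2)) (not_lt.mpr (hφM t))
  -- the weighted sum Q and its limit
  set Q : ℝ → ℝ := fun t => ∑ j, x 0 j * Real.exp (-(β * (d i₀ - d j)) * φ t) with hQdef
  have hQpos : ∀ t, 0 < Q t := fun t =>
    Finset.sum_pos (fun j _ => mul_pos (hx0 j) (Real.exp_pos _)) Finset.univ_nonempty
  have hQcont : Continuous Q :=
    continuous_finset_sum _ (fun j _ =>
      continuous_const.mul (Real.continuous_exp.comp (continuous_const.mul hφcont)))
  have hSQ : ∀ t : ℝ, 0 ≤ t → S t = Real.exp (-(α*t) + β * d i₀ * φ t) * Q t := by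
    intro t ht
    rw [hQdef]
    simp only
    rw [Finset.mul_sum]
    apply Finset.sum_congr rfl
    intro j _
    have hexp : -(α*t) + β * d j * φ t
        = (-(α*t) + β * d i₀ * φ t) + (-(β * (d i₀ - d j)) * φ t) := by ring
    rw [hform j t ht, hexp, Real.exp_add]; ring
  set A : ℝ := ∑ j ∈ Finset.univ.filter (fun j => d j = d i₀), x 0 j with hAdef
  have hApos : 0 < A :=
    Finset.sum_pos (fun j _ => hx0 j) ⟨i₀, by simp⟩
  have hQlim : Tendsto Q atTop (nhds A) := by
    have hA' : A = ∑ j, (if d j = d i₀ then x 0 j else 0) := Finset.sum_filter _ _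
    rw [hA']
    apply tendsto_finset_sum
    intro j _
    by_cases hj : d j = d i₀
    · rw [if_pos hj]
      have hfun : (fun t => x 0 j * Real.exp (-(β * (d i₀ - d j)) * φ t)) = fun _ => x 0 j := by
        funext t; rw [hj]; simp
      rw [hfun]; exact tendsto_const_nhds
    · rw [if_neg hj]
      have hle : i₀ ≤ j := by simp [hi₀, Fin.le_def]
      have hdj : d j < d i₀ := lt_of_le_of_ne (hd i₀ j hle) hj
      have hc : (0:ℝ) < β * (d i₀ - d j) := by nlinarith
      have h1 : Tendsto (fun t => -(β * (d i₀ - d j)) * φ t) atTop atBot := by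
        refine (tendsto_neg_atTop_atBot.comp (hφtop.const_mul_atTop hc)).congr (fun t => ?_)
        simp only [Function.comp, id_eq]; ring
      have h2 : Tendsto (fun t => Real.exp (-(β * (d i₀ - d j)) * φ t)) atTop (nhds 0) :=
        Real.tendsto_exp_atBot.comp h1
      simpa using h2.const_mul (x 0 j)
  -- the forcing term r
  set r : ℝ → ℝ := fun t => β * d i₀ / Q t with hrdef
  have hrcont : Continuous r := continuous_const.div hQcont (fun t => (hQpos t).ne')
  have hrlim : Tendsto r atTop (nhds (β * d i₀ / A)) :=
    tendsto_const_nhds.div hQlim hApos.ne'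
  -- integral equation for exp (β d₁ φ)
  have hIcont : Continuous (fun s => Real.exp (α*s) * r s) := by fun_prop
  have hW : ∀ t : ℝ, 0 ≤ t →
      Real.exp (β * d i₀ * φ t) = 1 + ∫ s in (0:ℝ)..t, Real.exp (α*s) * r s := by
    intro t ht
    set D : ℝ → ℝ :=
      fun u => Real.exp (β * d i₀ * φ u) - ∫ s in (0:ℝ)..u, Real.exp (α*s) * r s with hDdef
    have hDderiv : ∀ u : ℝ, 0 ≤ u → HasDerivAt D 0 u := by
      intro u hu
      have e1 : HasDerivAt (fun s => Real.exp (β * d i₀ * φ s))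
          (Real.exp (β * d i₀ * φ u) * (β * d i₀ * g u)) u := ((hφ u).const_mul (β * d i₀)).exp
      have e2 : HasDerivAt (fun v => ∫ s in (0:ℝ)..v, Real.exp (α*s) * r s)
          (Real.exp (α*u) * r u) u := ftcCont hIcont 0 u
      have e3 := e1.sub e2
      have hE : Real.exp (-(α*u) + β * d i₀ * φ u) * Real.exp (α*u)
          = Real.exp (β * d i₀ * φ u) := by rw [← Real.exp_add]; congr 1; ring
      have hzero : Real.exp (β * d i₀ * φ u) * (β * d i₀ * g u) - Real.exp (α*u) * r u = 0 := by
        rw [hgS u hu, hSQ u hu, hrdef, ← hE]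
        have h1 : Real.exp (-(α*u) + β * d i₀ * φ u) ≠ 0 := Real.exp_ne_zero _
        have h2 : Q u ≠ 0 := (hQpos u).ne'
        field_simp
        ring
      rw [hzero] at e3
      exact e3
    have hcon : ∀ u ∈ Set.Icc (0:ℝ) t, D u = D 0 := by
      apply constant_of_has_deriv_right_zero
      · exact fun u hu => ((hDderiv u hu.1).continuousAt).continuousWithinAt
      · exact fun u hu => ((hDderiv u hu.1).hasDerivWithinAt)
    have hD0 : D 0 = 1 := by simp [hDdef, hφ0]
    have := hcon t ⟨ht, le_rfl⟩
    rw [hD0, hDdef] at this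
    simp only at this
    linarith
  -- the limit of x for top indices
  have hpart1 : ∀ i : Fin n, d i = d i₀ →
      Tendsto (fun t => x t i) atTop (nhds (x 0 i / (α * σ1))) := by
    intro i hi
    have hwlim := avg (c := 1) hα hrcont hrlim
    have hlim := hwlim.const_mul (x 0 i)
    have hee : (fun t => x t i) =ᶠ[atTop]
        (fun t => x 0 i * (Real.exp (-(α*t)) * (1 + ∫ s in (0:ℝ)..t, Real.exp (α*s) * r s))) := by
      filter_upwards [eventually_ge_atTop (0:ℝ)] with t ht
      rw [hform i t ht, hi, Real.exp_add, hW t ht]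
    have hval : x 0 i / (α * σ1) = x 0 i * (β * d i₀ / A / α) := by
      rw [hσ1]
      have hb : β * d i₀ ≠ 0 := (mul_pos hβ (hdpos i₀)).ne'
      field_simp
    rw [hval]
    exact Tendsto.congr' hee.symm hlim
  refine ⟨hpart1, ?_⟩
  intro i i' hi hi'
  refine ⟨_, _, hpart1 i hi, hpart1 i' hi', ?_⟩
  have hσpos : 0 < σ1 := by
    rw [hσ1]
    have : 0 < β * d i₀ := mul_pos hβ (hdpos i₀)
    positivity
  have h1 : α * σ1 ≠ 0 := (mul_pos hα hσpos).ne'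
  have h2 : x 0 i' ≠ 0 := (hx0 i').ne'
  field_simp
end

section
/- Let c_1, …, c_n > 0 and d_1 ≥ ⋯ ≥ d_n > 0 with at least one index i such that d_i < d_1, and β > 0. Define F(u) := Σ_{i=1}^n (c_i/(β d_i)) e^{β d_i u}, σ_1 := (1/(β d_1)) Σ_{j : d_j = d_1} c_j, d′_2 := max{ d_j : d_j < d_1 }, and σ_2 := (1/(β d′_2)) Σ_{j : d_j = d′_2} c_j. Then the second-order asymptotic expansion of the inverse F^{−1} holds: ( y − σ_1 e^{β d_1 F^{−1}(y)} ) / ( σ_2 (y/σ_1)^{d′_2/d_1} ) → 1 as y → +∞. In particular F^{−1}(y) − (1/(β d_1)) log(y/σ_1) → 0 as y → +∞. -/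
open Filter MeasureTheory Set Real

theorem stmt14
    (n : ℕ) (hn : 0 < n) (β : ℝ) (hβ : 0 < β)
    (c d : Fin n → ℝ) (hc : ∀ i, 0 < c i)
    (hd : ∀ i j : Fin n, i ≤ j → d j ≤ d i) (hdpos : ∀ i, 0 < d i)
    (hsub : ∃ i, d i < d ⟨0, hn⟩)
    (F : ℝ → ℝ)
    (hF : ∀ u, F u = ∑ i, c i / (β * d i) * Real.exp (β * d i * u))
    (σ1 σ2 d2 : ℝ)
    (hσ1 : σ1 = (1 / (β * d ⟨0, hn⟩)) * ∑ j ∈ Finset.univ.filter (fun j => d j = d ⟨0, hn⟩), c j)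
    (hd2mem : ∃ j, d j = d2) (hd2lt : d2 < d ⟨0, hn⟩)
    (hd2max : ∀ j, d j < d ⟨0, hn⟩ → d j ≤ d2)
    (hσ2 : σ2 = (1 / (β * d2)) * ∑ j ∈ Finset.univ.filter (fun j => d j = d2), c j)
    (Finv : ℝ → ℝ)
    (hFinv : ∀ y : ℝ, F 0 ≤ y → 0 ≤ Finv y ∧ F (Finv y) = y) :
    Tendsto (fun y => (y - σ1 * Real.exp (β * d ⟨0, hn⟩ * Finv y)) /
        (σ2 * (y / σ1) ^ (d2 / d ⟨0, hn⟩))) atTop (nhds 1) ∧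
    Tendsto (fun y => Finv y - (1 / (β * d ⟨0, hn⟩)) * Real.log (y / σ1)) atTop (nhds 0) := by
  set i0 : Fin n := ⟨0, hn⟩ with hi0
  set d1 := d i0 with hd1
  have hd1pos : 0 < d1 := hdpos i0
  have hβd1 : 0 < β * d1 := mul_pos hβ hd1pos
  have hd2pos : 0 < d2 := by obtain ⟨j, hj⟩ := hd2mem; exact hj ▸ hdpos j
  have hβd2 : 0 < β * d2 := mul_pos hβ hd2pos
  have hdle : ∀ i, d i ≤ d1 := fun i => hd i0 i (Fin.mk_le_of_le_val (Nat.zero_le _))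
  -- positivity of σ1, σ2
  have hσ1pos : 0 < σ1 := by
    rw [hσ1]
    apply mul_pos (by positivity)
    apply Finset.sum_pos (fun j _ => hc j)
    exact ⟨i0, Finset.mem_filter.2 ⟨Finset.mem_univ _, rfl⟩⟩
  have hσ2pos : 0 < σ2 := by
    obtain ⟨j, hj⟩ := hd2mem
    rw [hσ2]
    apply mul_pos (by positivity)
    apply Finset.sum_pos (fun j _ => hc j)
    exact ⟨j, Finset.mem_filter.2 ⟨Finset.mem_univ _, hj⟩⟩
  -- strict monotonicity of F
  have hFmono : StrictMono F := by
    intro u v huv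
    rw [hF, hF]
    apply Finset.sum_lt_sum_of_nonempty ⟨i0, Finset.mem_univ _⟩
    intro i _
    have hβdi : 0 < β * d i := mul_pos hβ (hdpos i)
    exact mul_lt_mul_of_pos_left
      (Real.exp_lt_exp.2 (mul_lt_mul_of_pos_left huv hβdi)) (div_pos (hc i) hβdi)
  -- Finv tends to infinity
  have hFinvTop : Tendsto Finv atTop atTop := by
    rw [tendsto_atTop]
    intro M
    filter_upwards [eventually_ge_atTop (F 0), eventually_ge_atTop (F M)] with y h0 hM
    have heq := (hFinv y h0).2
    by_contra h
    push_neg at h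
    have h2 := hFmono h
    rw [heq] at h2
    exact absurd hM (not_le.2 h2)
  -- key limit lemma
  have key : ∀ (S : Finset (Fin n)) (a : ℝ), (∀ i ∈ S, d i ≤ a) →
      Tendsto (fun u => (∑ i ∈ S, c i / (β * d i) * Real.exp (β * d i * u)) /
        Real.exp (β * a * u)) atTop
        (nhds (∑ i ∈ S.filter (fun i => d i = a), c i / (β * d i))) := by
    intro S a ha
    have heq : ∀ u : ℝ, (∑ i ∈ S, c i / (β * d i) * Real.exp (β * d i * u)) /
        Real.exp (β * a * u)
        = ∑ i ∈ S, c i / (β * d i) * Real.exp (β * (d i - a) * u) := by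
      intro u
      rw [Finset.sum_div]
      refine Finset.sum_congr rfl fun i _ => ?_
      rw [mul_div_assoc, ← Real.exp_sub]
      ring_nf
    have hsum : (∑ i ∈ S.filter (fun i => d i = a), c i / (β * d i))
        = ∑ i ∈ S, if d i = a then c i / (β * d i) else 0 := by
      rw [Finset.sum_filter]
    rw [hsum]
    refine Tendsto.congr (fun u => (heq u).symm) (tendsto_finset_sum _ fun i _ => ?_)
    by_cases hi : d i = a
    · simp only [hi, sub_self, mul_zero, zero_mul, Real.exp_zero, mul_one, if_true]
      exact tendsto_const_nhds
    · have hlt : d i < a := lt_of_le_of_ne (ha i ‹i ∈ S›) hi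
      have hk : β * (d i - a) < 0 := mul_neg_of_pos_of_neg hβ (by linarith)
      have h0 : Tendsto (fun u : ℝ => Real.exp (β * (d i - a) * u)) atTop (nhds 0) :=
        Real.tendsto_exp_atBot.comp ((tendsto_const_mul_atBot_of_neg hk).2 tendsto_id)
      simpa [hi] using (h0.const_mul (c i / (β * d i)))
  -- Limit L1 : F u / e^{βd1 u} → σ1
  have hσ1' : σ1 = ∑ i ∈ Finset.univ.filter (fun i => d i = d1), c i / (β * d i) := by
    rw [hσ1, Finset.mul_sum]
    refine Finset.sum_congr rfl fun i hi => ?_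
    rw [(Finset.mem_filter.1 hi).2, one_div, inv_mul_eq_div]
  have L1 : Tendsto (fun u => F u / Real.exp (β * d1 * u)) atTop (nhds σ1) := by
    have := key Finset.univ d1 (fun i _ => hdle i)
    rw [← hσ1'] at this
    exact this.congr fun u => by rw [hF]
  -- decomposition of F
  have hsplit : ∀ u, F u - σ1 * Real.exp (β * d1 * u)
      = ∑ i ∈ Finset.univ.filter (fun i => ¬ d i = d1),
          c i / (β * d i) * Real.exp (β * d i * u) := by
    intro u
    rw [hF, ← Finset.sum_filter_add_sum_filter_not Finset.univ (fun i => d i = d1)]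
    have : ∑ i ∈ Finset.univ.filter (fun i => d i = d1),
        c i / (β * d i) * Real.exp (β * d i * u) = σ1 * Real.exp (β * d1 * u) := by
      rw [hσ1', Finset.sum_mul]
      refine Finset.sum_congr rfl fun i hi => ?_
      rw [(Finset.mem_filter.1 hi).2]
    rw [this]; ring
  -- Limit L2
  have L2 : Tendsto (fun u => (F u - σ1 * Real.exp (β * d1 * u)) /
      Real.exp (β * d2 * u)) atTop (nhds σ2) := by
    have hle2 : ∀ i ∈ Finset.univ.filter (fun i => ¬ d i = d1), d i ≤ d2 := by
      intro i hi
      exact hd2max i (lt_of_le_of_ne (hdle i) (Finset.mem_filter.1 hi).2)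
    have := key _ d2 hle2
    have hfeq : (Finset.univ.filter (fun i => ¬ d i = d1)).filter (fun i => d i = d2)
        = Finset.univ.filter (fun i => d i = d2) := by
      ext i
      constructor
      · intro hi
        exact Finset.mem_filter.2 ⟨Finset.mem_univ _, (Finset.mem_filter.1 hi).2⟩
      · intro hi
        have h2 := (Finset.mem_filter.1 hi).2
        refine Finset.mem_filter.2 ⟨Finset.mem_filter.2 ⟨Finset.mem_univ _, ?_⟩, h2⟩
        rw [h2]; exact ne_of_lt hd2lt
    have hσ2' : σ2 = ∑ i ∈ Finset.univ.filter (fun i => d i = d2), c i / (β * d i) := by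
      rw [hσ2, Finset.mul_sum]
      refine Finset.sum_congr rfl fun i hi => ?_
      rw [(Finset.mem_filter.1 hi).2, one_div, inv_mul_eq_div]
    rw [hfeq, ← hσ2'] at this
    exact this.congr fun u => by rw [hsplit u]
  -- compose with Finv
  have hA : Tendsto (fun y => (y - σ1 * Real.exp (β * d1 * Finv y)) /
      Real.exp (β * d2 * Finv y)) atTop (nhds σ2) := by
    refine Tendsto.congr' ?_ ((L2.comp hFinvTop))
    filter_upwards [eventually_ge_atTop (F 0)] with y hy
    simp only [Function.comp, (hFinv y hy).2]
  have hB : Tendsto (fun y => (y / σ1) / Real.exp (β * d1 * Finv y)) atTop (nhds 1) := by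
    have : Tendsto (fun y => (F (Finv y) / Real.exp (β * d1 * Finv y)) / σ1) atTop
        (nhds (σ1 / σ1)) := (L1.comp hFinvTop).div_const σ1
    rw [div_self (ne_of_gt hσ1pos)] at this
    refine Tendsto.congr' ?_ this
    filter_upwards [eventually_ge_atTop (F 0)] with y hy
    rw [(hFinv y hy).2]; ring
  have hBpos : ∀ᶠ y in atTop, 0 < (y / σ1) / Real.exp (β * d1 * Finv y) :=
    hB.eventually (eventually_gt_nhds one_pos)
  -- Part 1
  have part1 : Tendsto (fun y => (y - σ1 * Real.exp (β * d1 * Finv y)) /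
      (σ2 * (y / σ1) ^ (d2 / d1))) atTop (nhds 1) := by
    have hBr : Tendsto (fun y => ((y / σ1) / Real.exp (β * d1 * Finv y)) ^ (d2 / d1))
        atTop (nhds 1) := by
      have := hB.rpow_const (p := d2 / d1) (Or.inl one_ne_zero)
      rwa [Real.one_rpow] at this
    have hmain : Tendsto (fun y => ((y - σ1 * Real.exp (β * d1 * Finv y)) /
        Real.exp (β * d2 * Finv y)) /
        (σ2 * ((y / σ1) / Real.exp (β * d1 * Finv y)) ^ (d2 / d1))) atTop
        (nhds (σ2 / (σ2 * 1))) :=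
      hA.div (hBr.const_mul σ2) (by simp [ne_of_gt hσ2pos])
    rw [mul_one, div_self (ne_of_gt hσ2pos)] at hmain
    refine Tendsto.congr' ?_ hmain
    filter_upwards [hBpos] with y hy
    have hexp1 : (0:ℝ) < Real.exp (β * d1 * Finv y) := Real.exp_pos _
    have hyσ : 0 < y / σ1 := by
      have := mul_pos hy hexp1
      rwa [div_mul_cancel₀ _ (ne_of_gt hexp1)] at this
    have hrw : (y / σ1) ^ (d2 / d1)
        = ((y / σ1) / Real.exp (β * d1 * Finv y)) ^ (d2 / d1) *
          Real.exp (β * d2 * Finv y) := by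
      have h1 : (Real.exp (β * d1 * Finv y)) ^ (d2 / d1) = Real.exp (β * d2 * Finv y) := by
        rw [← Real.exp_one_rpow (β * d1 * Finv y),
          ← Real.rpow_mul (le_of_lt (Real.exp_pos 1)), Real.exp_one_rpow]
        congr 1
        field_simp
      calc (y / σ1) ^ (d2 / d1)
          = (((y / σ1) / Real.exp (β * d1 * Finv y)) * Real.exp (β * d1 * Finv y)) ^ (d2 / d1) := by
            rw [div_mul_cancel₀ _ (ne_of_gt hexp1)]
        _ = ((y / σ1) / Real.exp (β * d1 * Finv y)) ^ (d2 / d1) *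
            (Real.exp (β * d1 * Finv y)) ^ (d2 / d1) :=
            Real.mul_rpow (le_of_lt hy) (le_of_lt hexp1)
        _ = _ := by rw [h1]
    rw [hrw]
    field_simp
  refine ⟨part1, ?_⟩
  -- Part 2
  have hlogB : Tendsto (fun y => Real.log ((y / σ1) / Real.exp (β * d1 * Finv y)))
      atTop (nhds 0) := by
    have := (Real.continuousAt_log one_ne_zero).tendsto.comp hB
    rwa [Real.log_one] at this
  have h2 : Tendsto (fun y => -(1 / (β * d1)) *
      Real.log ((y / σ1) / Real.exp (β * d1 * Finv y))) atTop (nhds 0) := by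
    have := hlogB.const_mul (-(1 / (β * d1)))
    rwa [mul_zero] at this
  refine Tendsto.congr' ?_ h2
  filter_upwards [hBpos, eventually_ge_atTop (F 0)] with y hy hy0
  have hexp1 : (0:ℝ) < Real.exp (β * d1 * Finv y) := Real.exp_pos _
  rw [Real.log_div (by
        intro h
        rw [h] at hy
        simp [lt_irrefl] at hy
      ) (ne_of_gt hexp1), Real.log_exp]
  field_simp
  ring
end

section
/- Let x be a solution of the EigenAnt dynamics with positive initial conditions, and assume at least one index i has d_i < d_1. Define σ_1 := (1/(β d_1)) Σ_{j : d_j = d_1} x_j(0), d′_2 := max{ d_j : d_j < d_1 }, σ_2 := (1/(β d′_2)) Σ_{j : d_j = d′_2} x_j(0), and F(u) := Σ_{i=1}^n (x_i(0)/(β d_i)) e^{β d_i u}. Then the quantity I(t) := ∫₀^t ds/S(s) = F^{−1}(F(0) + (e^{αt}−1)/α) satisfies ( F(0) + (e^{αt}−1)/α − σ_1 e^{β d_1 I(t)} ) / ( σ_2 ( e^{αt}/(α σ_1) )^{d′_2/d_1} ) → 1 as t → +∞. -/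
open Filter MeasureTheory Set Real

theorem aux_sum_lim {ι : Type*} (s : Finset ι) (c : ι → ℝ)
    (e : ι → ℝ) (dm : ℝ)
    (hle : ∀ i ∈ s, e i ≤ dm) (σ : ℝ)
    (hσ : σ = ∑ i ∈ s.filter (fun i => e i = dm), c i) (hσpos : 0 < σ) :
    Tendsto (fun u => (∑ i ∈ s, c i * Real.exp (e i * u)) / (σ * Real.exp (dm * u)))
      atTop (nhds 1) := by
  have key : ∀ u : ℝ, (∑ i ∈ s, c i * Real.exp (e i * u)) / (σ * Real.exp (dm * u))
      = (∑ i ∈ s, c i * Real.exp ((e i - dm) * u)) / σ := by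
    intro u
    rw [div_mul_eq_div_div_swap, Finset.sum_div]
    congr 1
    refine Finset.sum_congr rfl (fun i _ => ?_)
    rw [mul_div_assoc, ← Real.exp_sub, ← sub_mul]
  have hsum : Tendsto (fun u => ∑ i ∈ s, c i * Real.exp ((e i - dm) * u)) atTop
      (nhds (∑ i ∈ s, if e i = dm then c i else 0)) := by
    apply tendsto_finset_sum
    intro i hi
    by_cases h : e i = dm
    · simp only [h, sub_self, zero_mul, Real.exp_zero, mul_one, if_pos]
      exact tendsto_const_nhds
    · simp only [if_neg h]
      have hneg : e i - dm < 0 := sub_neg.2 (lt_of_le_of_ne (hle i hi) h)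
      have h0 : Tendsto (fun u : ℝ => Real.exp ((e i - dm) * u)) atTop (nhds 0) :=
        Real.tendsto_exp_atBot.comp ((tendsto_const_mul_atBot_of_neg hneg).2 tendsto_id)
      simpa using h0.const_mul (c i)
  have hsum' : (∑ i ∈ s, if e i = dm then c i else 0) = σ := by
    rw [hσ, Finset.sum_filter]
  rw [hsum'] at hsum
  have := hsum.div_const σ
  rw [div_self hσpos.ne'] at this
  exact this.congr (fun u => (key u).symm)

theorem aux_R_lim
    (n : ℕ) (hn : 0 < n) (α β : ℝ) (hα : 0 < α) (hβ : 0 < β)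
    (d : Fin n → ℝ) (hd1max : ∀ i, d i ≤ d ⟨0, hn⟩) (hdpos : ∀ i, 0 < d i)
    (x0 : Fin n → ℝ) (hx0 : ∀ i, 0 < x0 i)
    (F : ℝ → ℝ)
    (hF : ∀ u, F u = ∑ i, x0 i / (β * d i) * Real.exp (β * d i * u))
    (σ1 σ2 d2 : ℝ)
    (hσ1 : σ1 = (1 / (β * d ⟨0, hn⟩)) * ∑ j ∈ Finset.univ.filter (fun j => d j = d ⟨0, hn⟩), x0 j)
    (hd2mem : ∃ j, d j = d2) (hd2lt : d2 < d ⟨0, hn⟩)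
    (hd2max : ∀ j, d j < d ⟨0, hn⟩ → d j ≤ d2)
    (hσ2 : σ2 = (1 / (β * d2)) * ∑ j ∈ Finset.univ.filter (fun j => d j = d2), x0 j) :
    Tendsto (fun u =>
        (F u - σ1 * Real.exp (β * d ⟨0, hn⟩ * u)) /
        (σ2 * ((α * (F u - F 0) + 1) / (α * σ1)) ^ (d2 / d ⟨0, hn⟩))) atTop (nhds 1) := by
  set d1 : ℝ := d ⟨0, hn⟩ with hd1def
  have hd1pos : 0 < d1 := hdpos _
  have hd2pos : 0 < d2 := by obtain ⟨j, hj⟩ := hd2mem; exact hj ▸ hdpos j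
  set c : Fin n → ℝ := fun i => x0 i / (β * d i) with hcdef
  have hc : ∀ i, 0 < c i := fun i => div_pos (hx0 i) (by have := hdpos i; positivity)
  have hσ1' : σ1 = ∑ j ∈ Finset.univ.filter (fun j => d j = d1), c j := by
    rw [hσ1, Finset.mul_sum]
    refine Finset.sum_congr rfl (fun j hj => ?_)
    rw [Finset.mem_filter] at hj
    rw [hcdef]
    simp only [hj.2]
    ring
  have hσ2' : σ2 = ∑ j ∈ Finset.univ.filter (fun j => d j = d2), c j := by
    rw [hσ2, Finset.mul_sum]
    refine Finset.sum_congr rfl (fun j hj => ?_)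
    rw [Finset.mem_filter] at hj
    rw [hcdef]
    simp only [hj.2]
    ring
  have hσ1pos : 0 < σ1 := by
    rw [hσ1']
    apply Finset.sum_pos (fun i _ => hc i)
    exact ⟨⟨0, hn⟩, by simp [hd1def]⟩
  have hσ2pos : 0 < σ2 := by
    rw [hσ2']
    apply Finset.sum_pos (fun i _ => hc i)
    obtain ⟨j, hj⟩ := hd2mem
    exact ⟨j, by simp [hj]⟩
  set Bc : Finset (Fin n) := Finset.univ.filter (fun i => ¬ d i = d1) with hBcdef
  have hnum : ∀ u : ℝ, F u - σ1 * Real.exp (β * d1 * u)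
      = ∑ i ∈ Bc, c i * Real.exp (β * d i * u) := by
    intro u
    have h1 : F u = (∑ i ∈ Finset.univ.filter (fun i => d i = d1), c i * Real.exp (β * d i * u))
        + ∑ i ∈ Bc, c i * Real.exp (β * d i * u) := by
      rw [hF u, ← Finset.sum_filter_add_sum_filter_not Finset.univ (fun i => d i = d1)]
    have h2 : σ1 * Real.exp (β * d1 * u)
        = ∑ i ∈ Finset.univ.filter (fun i => d i = d1), c i * Real.exp (β * d i * u) := by
      rw [hσ1', Finset.sum_mul]
      refine Finset.sum_congr rfl (fun j hj => ?_)
      rw [Finset.mem_filter] at hj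
      rw [hj.2]
    rw [h1, h2]; ring
  have hBcle : ∀ i ∈ Bc, d i ≤ d2 := by
    intro i hi
    rw [hBcdef, Finset.mem_filter] at hi
    exact hd2max i (lt_of_le_of_ne (hd1max i) hi.2)
  have L1 : Tendsto (fun u => (∑ i ∈ Bc, c i * Real.exp (β * d i * u)) /
      (σ2 * Real.exp ((β * d2) * u))) atTop (nhds 1) := by
    apply aux_sum_lim Bc c (fun i => β * d i) (β * d2)
      (fun i hi => mul_le_mul_of_nonneg_left (hBcle i hi) hβ.le) σ2 _ hσ2pos
    rw [hσ2']
    have : Bc.filter (fun i => β * d i = β * d2) = Finset.univ.filter (fun j => d j = d2) := by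
      ext i
      simp only [hBcdef, Finset.mem_filter, Finset.filter_filter, Finset.mem_univ, true_and,
        mul_right_inj' hβ.ne']
      constructor
      · rintro ⟨-, h⟩; exact h
      · intro h; exact ⟨by rw [h]; exact hd2lt.ne, h⟩
    rw [this]
  have hFc : ∀ u : ℝ, F u = ∑ i, c i * Real.exp (β * d i * u) := by
    intro u; simp only [hcdef]; exact hF u
  set V : ℝ → ℝ := fun u => (α * (F u - F 0) + 1) / (α * σ1 * Real.exp ((β * d1) * u))
    with hVdef
  have hVsplit : ∀ u : ℝ, V u = (∑ i, c i * Real.exp (β * d i * u)) / (σ1 * Real.exp ((β * d1) * u))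
      + (1 - α * F 0) / (α * σ1) * Real.exp (-(β * d1) * u) := by
    intro u
    simp only [hVdef]
    rw [hFc u, show -(β * d1) * u = -((β * d1) * u) by ring, Real.exp_neg]
    have h1 : Real.exp ((β * d1) * u) ≠ 0 := Real.exp_ne_zero _
    field_simp
    simp only [mul_right_comm β u]
    ring
  have L2 : Tendsto V atTop (nhds 1) := by
    have hA : Tendsto (fun u => (∑ i, c i * Real.exp (β * d i * u)) /
        (σ1 * Real.exp ((β * d1) * u))) atTop (nhds 1) := by
      apply aux_sum_lim Finset.univ c (fun i => β * d i) (β * d1)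
        (fun i _ => mul_le_mul_of_nonneg_left (hd1max i) hβ.le) σ1 _ hσ1pos
      rw [hσ1']
      have : (Finset.univ.filter (fun i : Fin n => β * d i = β * d1))
          = Finset.univ.filter (fun j => d j = d1) := by
        ext i
        simp only [Finset.mem_filter, Finset.mem_univ, true_and, mul_right_inj' hβ.ne']
      rw [this]
    have hB : Tendsto (fun u => (1 - α * F 0) / (α * σ1) * Real.exp (-(β * d1) * u))
        atTop (nhds 0) := by
      have hneg : -(β * d1) < 0 := neg_neg_iff_pos.2 (by positivity)
      have h0 : Tendsto (fun u : ℝ => Real.exp (-(β * d1) * u)) atTop (nhds 0) :=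
        Real.tendsto_exp_atBot.comp ((tendsto_const_mul_atBot_of_neg hneg).2 tendsto_id)
      simpa using h0.const_mul ((1 - α * F 0) / (α * σ1))
    have := hA.add hB
    rw [add_zero] at this
    exact this.congr (fun u => (hVsplit u).symm)
  have hVpos : ∀ᶠ u in atTop, 0 < V u := L2.eventually (eventually_gt_nhds one_pos)
  set p : ℝ := d2 / d1 with hpdef
  have hppos : 0 < p := div_pos hd2pos hd1pos
  have hVp : Tendsto (fun u => (V u ^ p)⁻¹) atTop (nhds 1) := by
    have h1 : Tendsto (fun u => V u ^ p) atTop (nhds ((1:ℝ) ^ p)) :=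
      L2.rpow_const (Or.inr hppos.le)
    rw [Real.one_rpow] at h1
    simpa using h1.inv₀ one_ne_zero
  have hmain := L1.mul hVp
  rw [mul_one] at hmain
  apply hmain.congr'
  filter_upwards [hVpos] with u hVu
  have hE1 : (0:ℝ) < Real.exp ((β * d1) * u) := Real.exp_pos _
  have hE2 : (0:ℝ) < Real.exp ((β * d2) * u) := Real.exp_pos _
  have hW : (α * (F u - F 0) + 1) / (α * σ1) = Real.exp ((β * d1) * u) * V u := by
    simp only [hVdef]
    field_simp
  have hWp : ((α * (F u - F 0) + 1) / (α * σ1)) ^ p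
      = Real.exp ((β * d2) * u) * V u ^ p := by
    rw [hW, Real.mul_rpow hE1.le hVu.le]
    congr 1
    rw [← Real.exp_mul]
    congr 1
    rw [hpdef]
    field_simp
  have hVppos : 0 < V u ^ p := Real.rpow_pos_of_pos hVu p
  show (∑ i ∈ Bc, c i * Real.exp (β * d i * u)) / (σ2 * Real.exp ((β * d2) * u)) * (V u ^ p)⁻¹
      = _
  rw [hWp, ← hnum u, ← div_eq_mul_inv, div_div, mul_assoc σ2]

theorem stmt15
    (n : ℕ) (hn : 0 < n) (α β : ℝ) (hα : 0 < α) (hβ : 0 < β)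
    (d : Fin n → ℝ) (hd : ∀ i j : Fin n, i ≤ j → d j ≤ d i) (hdpos : ∀ i, 0 < d i)
    (x : ℝ → Fin n → ℝ)
    (hS : ∀ t : ℝ, 0 ≤ t → (∑ j, x t j) ≠ 0)
    (hode : ∀ (i : Fin n) (t : ℝ), 0 ≤ t →
      HasDerivAt (fun s => x s i) ((-α + β * d i / (∑ j, x t j)) * x t i) t)
    (hx0 : ∀ i, 0 < x 0 i)
    (hsub : ∃ i, d i < d ⟨0, hn⟩)
    (F : ℝ → ℝ)
    (hF : ∀ u, F u = ∑ i, x 0 i / (β * d i) * Real.exp (β * d i * u))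
    (σ1 σ2 d2 : ℝ)
    (hσ1 : σ1 = (1 / (β * d ⟨0, hn⟩)) * ∑ j ∈ Finset.univ.filter (fun j => d j = d ⟨0, hn⟩), x 0 j)
    (hd2mem : ∃ j, d j = d2) (hd2lt : d2 < d ⟨0, hn⟩)
    (hd2max : ∀ j, d j < d ⟨0, hn⟩ → d j ≤ d2)
    (hσ2 : σ2 = (1 / (β * d2)) * ∑ j ∈ Finset.univ.filter (fun j => d j = d2), x 0 j) :
    Tendsto (fun t =>
        (F 0 + (Real.exp (α * t) - 1) / α -
          σ1 * Real.exp (β * d ⟨0, hn⟩ * (∫ s in (0:ℝ)..t, (∑ j, x s j)⁻¹))) /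
        (σ2 * (Real.exp (α * t) / (α * σ1)) ^ (d2 / d ⟨0, hn⟩))) atTop (nhds 1) := by
  haveI : Nonempty (Fin n) := ⟨⟨0, hn⟩⟩
  have hd1max : ∀ i, d i ≤ d ⟨0, hn⟩ := fun i => hd ⟨0, hn⟩ i (by simp [Fin.le_def])
  -- continuity and positivity of S
  have hScw : ∀ t : ℝ, 0 ≤ t → ContinuousAt (fun t => ∑ j, x t j) t := by
    intro t ht
    exact tendsto_finset_sum _ (fun i _ => (hode i t ht).continuousAt)
  have hScont : ContinuousOn (fun t => ∑ j, x t j) (Ici 0) :=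
    fun t ht => (hScw t ht).continuousWithinAt
  have hS0 : 0 < ∑ j, x 0 j := Finset.sum_pos (fun i _ => hx0 i) Finset.univ_nonempty
  have hSpos : ∀ t : ℝ, 0 ≤ t → 0 < ∑ j, x t j := by
    intro t ht
    by_contra h
    push_neg at h
    have hlt : (∑ j, x t j) < 0 := lt_of_le_of_ne h (hS t ht)
    have : (0:ℝ) ∈ (fun t => ∑ j, x t j) '' Icc 0 t := by
      apply intermediate_value_Icc' ht (hScont.mono Icc_subset_Ici_self)
      exact ⟨hlt.le, hS0.le⟩
    obtain ⟨s, hs, hs0⟩ := this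
    exact hS s hs.1 hs0
  -- g and J
  set g : ℝ → ℝ := fun s => (∑ j, x (max s 0) j)⁻¹ with hgdef
  have hgcont : Continuous g := by
    have h1 : Continuous fun s : ℝ => ∑ j, x (max s 0) j := by
      have : ContinuousOn (fun s : ℝ => ∑ j, x (max s 0) j) univ := by
        apply hScont.comp (continuous_id.max continuous_const).continuousOn
        intro s _; exact le_max_right s 0
      exact continuousOn_univ.1 this
    exact h1.inv₀ (fun s => (hSpos _ (le_max_right s 0)).ne')
  have hgval : ∀ t : ℝ, 0 ≤ t → g t = (∑ j, x t j)⁻¹ := by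
    intro t ht; simp [hgdef, max_eq_left ht]
  set J : ℝ → ℝ := fun t => ∫ s in (0:ℝ)..t, g s with hJdef
  have hJd : ∀ t : ℝ, HasDerivAt J (g t) t := fun t =>
    (hgcont.integral_hasStrictDerivAt 0 t).hasDerivAt
  have hJcont : Continuous J := continuous_iff_continuousAt.2 fun t => (hJd t).continuousAt
  have hJ0 : J 0 = 0 := intervalIntegral.integral_same
  have hJeq : ∀ t : ℝ, 0 ≤ t → (∫ s in (0:ℝ)..t, (∑ j, x s j)⁻¹) = J t := by
    intro t ht
    apply intervalIntegral.integral_congr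
    intro s hs
    rw [uIcc_of_le ht] at hs
    rw [hgval s hs.1]
  -- solution formula
  have hxi : ∀ (i : Fin n) (t : ℝ), 0 ≤ t →
      x t i = x 0 i * Real.exp (β * d i * J t - α * t) := by
    intro i b hb
    set h : ℝ → ℝ := fun t => x t i * Real.exp (α * t - β * d i * J t) with hhdef
    have hderiv : ∀ t : ℝ, 0 ≤ t → HasDerivAt h 0 t := by
      intro t ht
      have hE : HasDerivAt (fun s => Real.exp (α * s - β * d i * J s))
          (Real.exp (α * t - β * d i * J t) * (α - β * d i * g t)) t := by
        simpa using (((hasDerivAt_id t).const_mul α).sub ((hJd t).const_mul (β * d i))).exp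
      have := (hode i t ht).mul hE
      convert this using 1
      · exact rfl
      · exact rfl
      · exact rfl
      rw [hgval t ht]
      have hSne : (∑ j, x t j) ≠ 0 := (hSpos t ht).ne'
      field_simp
      ring
    have hcont : ContinuousOn h (Icc 0 b) := by
      intro t ht
      exact ((hderiv t ht.1).continuousAt).continuousWithinAt
    have hconst := constant_of_has_deriv_right_zero hcont
      (fun t ht => (hderiv t ht.1).hasDerivWithinAt) b (right_mem_Icc.2 hb)
    have h0 : h 0 = x 0 i := by simp [hhdef, hJ0]
    rw [h0] at hconst
    have hEne : Real.exp (α * b - β * d i * J b) ≠ 0 := Real.exp_ne_zero _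
    have : x b i = x 0 i / Real.exp (α * b - β * d i * J b) := by
      field_simp [← hconst, hhdef]
      exact hconst
    rw [this, div_eq_mul_inv, ← Real.exp_neg]
    ring_nf
  -- the conservation law
  have hFJ : ∀ t : ℝ, 0 ≤ t → F (J t) = F 0 + (Real.exp (α * t) - 1) / α := by
    have hFe : F = fun u => ∑ i, x 0 i / (β * d i) * Real.exp (β * d i * u) := funext hF
    set G : ℝ → ℝ :=
      fun t => (∑ i, x 0 i / (β * d i) * Real.exp (β * d i * J t)) - (Real.exp (α * t) - 1) / α
      with hGdef
    have hGd : ∀ t : ℝ, 0 ≤ t → HasDerivAt G 0 t := by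
      intro t ht
      have hsum : HasDerivAt (fun s => ∑ i, x 0 i / (β * d i) * Real.exp (β * d i * J s))
          (∑ i, x 0 i / (β * d i) * (Real.exp (β * d i * J t) * (β * d i * g t))) t := by
        apply HasDerivAt.fun_sum
        intro i _
        exact (((hJd t).const_mul (β * d i)).exp).const_mul _
      have hexp : HasDerivAt (fun s => (Real.exp (α * s) - 1) / α)
          (Real.exp (α * t)) t := by
        have h1 : HasDerivAt (fun s => Real.exp (α * s)) (Real.exp (α * t) * α) t := by
          simpa [mul_comm] using ((hasDerivAt_id t).const_mul α).exp
        have h2 := (h1.sub_const 1).div_const α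
        convert h2 using 1
        · exact rfl
        · exact rfl
        field_simp
      have := hsum.sub hexp
      convert this using 1
      · exact rfl
      · exact rfl
      · exact rfl
      have hterm : ∀ i : Fin n, x 0 i / (β * d i) * (Real.exp (β * d i * J t) * (β * d i * g t))
          = x t i * (Real.exp (α * t) * (∑ j, x t j)⁻¹) := by
        intro i
        rw [hgval t ht, hxi i t ht, Real.exp_sub]
        have hdi := hdpos i
        have h1 : β * d i ≠ 0 := by positivity
        have h2 : (∑ j, x t j) ≠ 0 := (hSpos t ht).ne'
        field_simp
      rw [Finset.sum_congr rfl (fun i _ => hterm i), ← Finset.sum_mul]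
      have h2 : (∑ j, x t j) ≠ 0 := (hSpos t ht).ne'
      field_simp
      ring
    intro b hb
    have hcont : ContinuousOn G (Icc 0 b) := by
      apply Continuous.continuousOn
      apply Continuous.sub
      · apply continuous_finset_sum
        intro i _
        exact continuous_const.mul (Real.continuous_exp.comp (continuous_const.mul hJcont))
      · exact ((Real.continuous_exp.comp (continuous_const.mul continuous_id)).sub
          continuous_const).div_const α
    have hconst := constant_of_has_deriv_right_zero hcont
      (fun t ht => (hGd t ht.1).hasDerivWithinAt) b (right_mem_Icc.2 hb)
    have hG0 : G 0 = F 0 := by simp [hGdef, hJ0, hFe]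
    rw [hG0] at hconst
    have : F (J b) = (∑ i, x 0 i / (β * d i) * Real.exp (β * d i * J b)) := by rw [hFe]
    rw [this]
    simp only [hGdef] at hconst
    linarith [hconst]
  -- J tends to infinity
  have hJtop : Tendsto J atTop atTop := by
    have hFmono : StrictMono F := by
      intro u v huv
      rw [hF u, hF v]
      apply Finset.sum_lt_sum_of_nonempty Finset.univ_nonempty
      intro i _
      have hdi := hdpos i
      have hxi0 := hx0 i
      have hci : 0 < x 0 i / (β * d i) := by positivity
      apply mul_lt_mul_of_pos_left _ hci
      exact Real.exp_lt_exp.2 (by nlinarith [mul_pos (mul_pos hβ hdi) (sub_pos.2 huv)])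
    rw [tendsto_atTop]
    intro M
    have htop : Tendsto (fun t : ℝ => F 0 + (Real.exp (α * t) - 1) / α) atTop atTop := by
      apply tendsto_atTop_add_const_left
      apply Tendsto.atTop_div_const hα
      apply tendsto_atTop_add_const_right
      exact Real.tendsto_exp_atTop.comp ((tendsto_const_mul_atTop_of_pos hα).2 tendsto_id)
    filter_upwards [htop.eventually_gt_atTop (F M), eventually_ge_atTop (0:ℝ)] with t h1 h2
    have : F M < F (J t) := by rw [hFJ t h2]; exact h1
    exact (hFmono.lt_iff_lt.1 this).le
  -- conclude
  have hR := aux_R_lim n hn α β hα hβ d hd1max hdpos (x 0) hx0 F hF σ1 σ2 d2 hσ1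
    hd2mem hd2lt hd2max hσ2
  have hcomp := hR.comp hJtop
  apply hcomp.congr'
  filter_upwards [eventually_ge_atTop (0:ℝ)] with t ht
  simp only [Function.comp_apply]
  rw [hJeq t ht, ← hFJ t ht]
  have hE : Real.exp (α * t) = α * (F (J t) - F 0) + 1 := by
    rw [hFJ t ht]
    field_simp
    ring
  rw [hE]
end

section
/- Let x be a solution of the EigenAnt dynamics with positive initial conditions, and let i be an index with d_i < d_1. Define σ_1 := (1/(β d_1)) Σ_{j : d_j = d_1} x_j(0). Then x_i(t) decays exponentially with rate α(1 − d_i/d_1) and explicit prefactor: x_i(t) · e^{α(1 − d_i/d_1) t} → x_i(0) · (α σ_1)^{−d_i/d_1} as t → +∞. -/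
open Filter MeasureTheory Set Real

theorem stmt16
    (n : ℕ) (hn : 0 < n) (α β : ℝ) (hα : 0 < α) (hβ : 0 < β)
    (d : Fin n → ℝ) (hd : ∀ i j : Fin n, i ≤ j → d j ≤ d i) (hdpos : ∀ i, 0 < d i)
    (x : ℝ → Fin n → ℝ)
    (hS : ∀ t : ℝ, 0 ≤ t → (∑ j, x t j) ≠ 0)
    (hode : ∀ (i : Fin n) (t : ℝ), 0 ≤ t →
      HasDerivAt (fun s => x s i) ((-α + β * d i / (∑ j, x t j)) * x t i) t)
    (hx0 : ∀ i, 0 < x 0 i)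
    (i : Fin n) (hi : d i < d ⟨0, hn⟩)
    (σ1 : ℝ)
    (hσ1 : σ1 = (1 / (β * d ⟨0, hn⟩)) * ∑ j ∈ Finset.univ.filter (fun j => d j = d ⟨0, hn⟩), x 0 j) :
    Tendsto (fun t => x t i * Real.exp (α * (1 - d i / d ⟨0, hn⟩) * t)) atTop
      (nhds (x 0 i * (α * σ1) ^ (-(d i / d ⟨0, hn⟩)))) := by
  set d1 : ℝ := d ⟨0, hn⟩ with hd1def
  have hd1pos : 0 < d1 := hdpos _
  have hdle : ∀ j, d j ≤ d1 := fun j => hd ⟨0, hn⟩ j (by simp [Fin.le_def])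
  set S : ℝ → ℝ := fun t => ∑ j, x t j with hSdef
  have hodeS : ∀ t : ℝ, 0 ≤ t → HasDerivAt S (∑ j, (-α + β * d j / S t) * x t j) t := by
    intro t ht
    exact HasDerivAt.fun_sum (fun j _ => hode j t ht)
  have hScont : ContinuousOn S (Ici 0) := fun t ht =>
    ((hodeS t ht).continuousAt).continuousWithinAt
  have hSpos : ∀ t : ℝ, 0 ≤ t → 0 < S t := by
    intro t ht
    by_contra h
    push_neg at h
    have hne : S t ≠ 0 := hS t ht
    have hlt : S t < 0 := lt_of_le_of_ne h hne
    have h0 : (0:ℝ) ∈ Icc (S t) (S 0) := by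
      constructor
      · exact hlt.le
      · exact (Finset.sum_pos (fun j _ => hx0 j) (Finset.univ_nonempty_iff.2 ⟨⟨0, hn⟩⟩)).le
    have := intermediate_value_Icc' ht (hScont.mono (fun s hs => hs.1)) h0
    obtain ⟨s, hs, hs0⟩ := this
    exact hS s hs.1 hs0

  set u : ℝ → ℝ := fun t => ∫ s in (0:ℝ)..t, (S s)⁻¹ with hudef
  have hinvcont : ContinuousOn (fun s => (S s)⁻¹) (Ici 0) :=
    hScont.inv₀ (fun s hs => (hSpos s hs).ne')
  have hIciSub : ∀ t : ℝ, 0 ≤ t → Icc (0:ℝ) t ⊆ Ici 0 := fun t ht s hs => hs.1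
  have hint : ∀ t : ℝ, 0 ≤ t → IntervalIntegrable (fun s => (S s)⁻¹) volume 0 t := by
    intro t ht
    apply ContinuousOn.intervalIntegrable
    rw [uIcc_of_le ht]
    exact hinvcont.mono (hIciSub t ht)
  have hu : ∀ t : ℝ, 0 ≤ t → HasDerivWithinAt u (S t)⁻¹ (Ici t) t := by
    intro t ht
    refine intervalIntegral.integral_hasDerivWithinAt_right (hint t ht) ?_ ?_
    · exact (hinvcont.stronglyMeasurableAtFilter_nhdsWithin measurableSet_Ici t).filter_mono
        (nhdsWithin_mono t (fun s hs => le_trans ht hs.le))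
    · exact (hinvcont t ht).mono (fun s hs => le_trans ht hs.le)
  have hucont : ∀ T : ℝ, 0 ≤ T → ContinuousOn u (Icc 0 T) := by
    intro T hT
    have := intervalIntegral.continuousOn_primitive_interval
      (f := fun s => (S s)⁻¹) (a := (0:ℝ)) (b := T) (μ := volume) ?_
    · rwa [uIcc_of_le hT] at this
    · rw [uIcc_of_le hT]
      exact (hinvcont.mono (hIciSub T hT)).integrableOn_compact isCompact_Icc
  have hu0 : u 0 = 0 := intervalIntegral.integral_same

  have hxclosed : ∀ (j : Fin n) (t : ℝ), 0 ≤ t →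
      x t j = x 0 j * Real.exp (β * d j * u t - α * t) := by
    intro j T hT
    have hcont : ContinuousOn (fun s => x s j * Real.exp (α * s - β * d j * u s)) (Icc 0 T) := by
      apply ContinuousOn.mul
      · exact fun s hs => ((hode j s hs.1).continuousAt).continuousWithinAt
      · apply Real.continuous_exp.comp_continuousOn
        exact (continuousOn_const.mul continuousOn_id).sub
          (continuousOn_const.mul (hucont T hT))
    have hderiv : ∀ s ∈ Ico (0:ℝ) T,
        HasDerivWithinAt (fun r => x r j * Real.exp (α * r - β * d j * u r)) 0 (Ici s) s := by
      intro s hs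
      have hs0 : (0:ℝ) ≤ s := hs.1
      have hx' : HasDerivWithinAt (fun r => x r j) ((-α + β * d j / S s) * x s j) (Ici s) s :=
        (hode j s hs0).hasDerivWithinAt
      have h1 : HasDerivWithinAt (fun r => α * r) α (Ici s) s := by
        simpa using ((hasDerivAt_id s).const_mul α).hasDerivWithinAt
      have h2 : HasDerivWithinAt (fun r => β * d j * u r) (β * d j * (S s)⁻¹) (Ici s) s :=
        (hu s hs0).const_mul (β * d j)
      have hexp := (h1.sub h2).exp
      have h0 : (-α + β * d j / S s) * x s j * Real.exp (α * s - β * d j * u s)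
          + x s j * (Real.exp (α * s - β * d j * u s) * (α - β * d j * (S s)⁻¹)) = 0 := by
        rw [div_eq_mul_inv]; ring
      have := hx'.mul hexp
      replace this := this.congr_deriv h0
      exact this
    have key := constant_of_has_deriv_right_zero hcont hderiv T ⟨hT, le_rfl⟩
    rw [hu0] at key
    simp only [mul_zero, sub_zero, Real.exp_zero, mul_one] at key
    rw [← key, mul_assoc, ← Real.exp_add]
    have : α * T - β * d j * u T + (β * d j * u T - α * T) = 0 := by ring
    rw [this, Real.exp_zero, mul_one]

  set K : ℝ := (∑ j, x 0 j / (β * d j)) - 1/α with hKdef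
  have hbd : ∀ j : Fin n, β * d j ≠ 0 := fun j => (mul_pos hβ (hdpos j)).ne'
  have hGconst : ∀ t : ℝ, 0 ≤ t →
      (∑ j, x 0 j / (β * d j) * Real.exp (β * d j * u t)) = K + Real.exp (α * t) / α := by
    intro T hT
    have hcont : ContinuousOn
        (fun r => (∑ j, x 0 j / (β * d j) * Real.exp (β * d j * u r)) - Real.exp (α * r) / α)
        (Icc 0 T) := by
      apply ContinuousOn.sub
      · apply continuousOn_finset_sum
        intro j _
        exact continuousOn_const.mul (Real.continuous_exp.comp_continuousOn
          (continuousOn_const.mul (hucont T hT)))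
      · exact ((Real.continuous_exp.comp (continuous_const.mul continuous_id)).continuousOn).div_const α
    have hderiv : ∀ s ∈ Ico (0:ℝ) T, HasDerivWithinAt
        (fun r => (∑ j, x 0 j / (β * d j) * Real.exp (β * d j * u r)) - Real.exp (α * r) / α)
        0 (Ici s) s := by
      intro s hs
      have hs0 : (0:ℝ) ≤ s := hs.1
      have h1 : HasDerivWithinAt (fun r => α * r) α (Ici s) s := by
        simpa using ((hasDerivAt_id s).const_mul α).hasDerivWithinAt
      have hsum : HasDerivWithinAt
          (fun r => ∑ j, x 0 j / (β * d j) * Real.exp (β * d j * u r))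
          (∑ j, x 0 j / (β * d j) * (Real.exp (β * d j * u s) * (β * d j * (S s)⁻¹)))
          (Ici s) s := by
        apply HasDerivWithinAt.fun_sum
        intro j _
        exact (((hu s hs0).const_mul (β * d j)).exp).const_mul _
      have hexp : HasDerivWithinAt (fun r => Real.exp (α * r) / α)
          (Real.exp (α * s) * α / α) (Ici s) s := (h1.exp).div_const α
      have htot := hsum.sub hexp
      have hzero : (∑ j, x 0 j / (β * d j) * (Real.exp (β * d j * u s) * (β * d j * (S s)⁻¹)))
          - Real.exp (α * s) * α / α = 0 := by
        have hterm : ∀ j : Fin n, x 0 j / (β * d j) * (Real.exp (β * d j * u s) * (β * d j * (S s)⁻¹))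
            = x s j * Real.exp (α * s) * (S s)⁻¹ := by
          intro j
          have h2 : x s j * Real.exp (α * s) = x 0 j * Real.exp (β * d j * u s) := by
            rw [hxclosed j s hs0, mul_assoc, ← Real.exp_add]
            congr 1
            ring
          calc x 0 j / (β * d j) * (Real.exp (β * d j * u s) * (β * d j * (S s)⁻¹))
              = x 0 j * Real.exp (β * d j * u s) * (S s)⁻¹ * ((β * d j) / (β * d j)) := by ring
            _ = x 0 j * Real.exp (β * d j * u s) * (S s)⁻¹ := by rw [div_self (hbd j), mul_one]
            _ = x s j * Real.exp (α * s) * (S s)⁻¹ := by rw [h2]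
        rw [Finset.sum_congr rfl (fun j _ => hterm j), ← Finset.sum_mul, ← Finset.sum_mul]
        have hSs : (∑ j, x s j) = S s := rfl
        rw [hSs]
        field_simp [(hSpos s hs0).ne']
        ring
      rw [hzero] at htot
      exact htot
    have key := constant_of_has_deriv_right_zero hcont hderiv T ⟨hT, le_rfl⟩
    simp only [hu0, mul_zero, Real.exp_zero, mul_one] at key
    rw [hKdef]
    linarith [key]

  set w : ℝ → ℝ := fun t => Real.exp (β * d1 * u t - α * t) with hwdef
  have hwpos : ∀ t, 0 < w t := fun t => Real.exp_pos _
  have hγnn : ∀ j : Fin n, 0 ≤ d j / d1 := fun j => div_nonneg (hdpos j).le hd1pos.le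
  have hterm2 : ∀ (j : Fin n) (t : ℝ),
      Real.exp (β * d j * u t) * Real.exp (-(α * t)) =
        Real.exp (-(α * (1 - d j / d1) * t)) * (w t) ^ (d j / d1) := by
    intro j t
    rw [Real.rpow_def_of_pos (hwpos t), Real.log_exp, ← Real.exp_add, ← Real.exp_add]
    congr 1
    field_simp
    ring
  have hkey2 : ∀ t : ℝ, 0 ≤ t →
      (∑ j, x 0 j / (β * d j) * (Real.exp (-(α * (1 - d j / d1) * t)) * (w t) ^ (d j / d1)))
        = K * Real.exp (-(α * t)) + 1/α := by
    intro t ht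
    calc ∑ j, x 0 j / (β * d j) * (Real.exp (-(α * (1 - d j / d1) * t)) * w t ^ (d j / d1))
        = ∑ j, x 0 j / (β * d j) * Real.exp (β * d j * u t) * Real.exp (-(α * t)) := by
          refine Finset.sum_congr rfl fun j _ => ?_
          rw [← hterm2 j t]
          ring
      _ = (∑ j, x 0 j / (β * d j) * Real.exp (β * d j * u t)) * Real.exp (-(α * t)) := by
          rw [Finset.sum_mul]
      _ = (K + Real.exp (α * t) / α) * Real.exp (-(α * t)) := by rw [hGconst t ht]
      _ = K * Real.exp (-(α * t)) + 1/α := by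
          rw [add_mul]
          congr 1
          rw [div_mul_eq_mul_div, ← Real.exp_add]
          norm_num
  have hσpos : 0 < σ1 := by
    rw [hσ1]
    apply mul_pos
    · positivity
    · exact Finset.sum_pos (fun j _ => hx0 j) ⟨⟨0, hn⟩, by simp [hd1def]⟩
  set R : ℝ → ℝ := fun t => ∑ j ∈ Finset.univ.filter (fun j => ¬ d j = d1),
      x 0 j / (β * d j) * (Real.exp (-(α * (1 - d j / d1) * t)) * (w t) ^ (d j / d1)) with hRdef
  have hsplit : ∀ t : ℝ, 0 ≤ t → σ1 * w t + R t = K * Real.exp (-(α * t)) + 1/α := by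
    intro t ht
    rw [← hkey2 t ht,
      ← Finset.sum_filter_add_sum_filter_not Finset.univ (fun j => d j = d1)]
    congr 1
    have : ∀ j ∈ Finset.univ.filter (fun j => d j = d1),
        x 0 j / (β * d j) * (Real.exp (-(α * (1 - d j / d1) * t)) * (w t) ^ (d j / d1))
          = x 0 j * (1 / (β * d1)) * w t := by
      intro j hj
      have hjd : d j = d1 := (Finset.mem_filter.1 hj).2
      rw [hjd, div_self hd1pos.ne', Real.rpow_one]
      simp only [sub_self, mul_zero, zero_mul, neg_zero, Real.exp_zero, one_mul]
      ring
    rw [Finset.sum_congr rfl this, ← Finset.sum_mul, ← Finset.sum_mul, hσ1]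
    ring
  have hRnn : ∀ t : ℝ, 0 ≤ R t := by
    intro t
    apply Finset.sum_nonneg
    intro j _
    have h1 := hx0 j
    have h2 := hwpos t
    have h3 := mul_pos hβ (hdpos j)
    positivity
  set M : ℝ := (|K| + 1/α) / σ1 with hMdef
  have hwle : ∀ t : ℝ, 0 ≤ t → w t ≤ M := by
    intro t ht
    have h1 : σ1 * w t ≤ |K| + 1/α := by
      have h2 := hsplit t ht
      have h3 : K * Real.exp (-(α * t)) ≤ |K| := by
        calc K * Real.exp (-(α * t)) ≤ |K| * Real.exp (-(α * t)) :=
              mul_le_mul_of_nonneg_right (le_abs_self K) (Real.exp_pos _).le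
          _ ≤ |K| * 1 := mul_le_mul_of_nonneg_left
              (Real.exp_le_one_iff.2 (by nlinarith)) (abs_nonneg K)
          _ = |K| := mul_one _
      have h4 := hRnn t
      clear_value K R w
      linarith
    rw [hMdef, le_div_iff₀ hσpos]
    linarith [h1, mul_comm σ1 (w t)]
  have hexp0 : ∀ c : ℝ, 0 < c → Tendsto (fun t => Real.exp (-(c * t))) atTop (nhds 0) := by
    intro c hc
    have : Tendsto (fun t : ℝ => c * t) atTop atTop :=
      Tendsto.const_mul_atTop hc tendsto_id
    exact Real.tendsto_exp_neg_atTop_nhds_zero.comp this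
  have hterm0 : ∀ j ∈ Finset.univ.filter (fun j => ¬ d j = d1),
      Tendsto (fun t => x 0 j / (β * d j) *
        (Real.exp (-(α * (1 - d j / d1) * t)) * (w t) ^ (d j / d1))) atTop (nhds 0) := by
    intro j hj
    have hjd : d j < d1 := lt_of_le_of_ne (hdle j) (Finset.mem_filter.1 hj).2
    have hγlt : d j / d1 < 1 := (div_lt_one hd1pos).2 hjd
    have hc : 0 < α * (1 - d j / d1) := mul_pos hα (by linarith)
    have hub : Tendsto (fun t => x 0 j / (β * d j) *
        (Real.exp (-(α * (1 - d j / d1) * t)) * M ^ (d j / d1))) atTop (nhds 0) := by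
      have h2 : Tendsto (fun t => Real.exp (-(α * (1 - d j / d1) * t))) atTop (nhds 0) :=
        hexp0 _ hc
      have := (h2.mul_const (M ^ (d j / d1))).const_mul (x 0 j / (β * d j))
      simpa using this
    apply tendsto_of_tendsto_of_tendsto_of_le_of_le' tendsto_const_nhds hub
    · filter_upwards with t
      exact mul_nonneg (le_of_lt (div_pos (hx0 j) (mul_pos hβ (hdpos j))))
        (mul_nonneg (Real.exp_pos _).le (Real.rpow_pos_of_pos (hwpos t) _).le)
    · filter_upwards [eventually_ge_atTop (0:ℝ)] with t ht
      apply mul_le_mul_of_nonneg_left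
      · apply mul_le_mul_of_nonneg_left
        · exact Real.rpow_le_rpow (hwpos t).le (hwle t ht) (hγnn j)
        · exact (Real.exp_pos _).le
      · exact le_of_lt (div_pos (hx0 j) (mul_pos hβ (hdpos j)))
  have hR0 : Tendsto R atTop (nhds 0) := by
    have h := tendsto_finset_sum (Finset.univ.filter (fun j => ¬ d j = d1)) hterm0
    simpa using h
  have hwtend : Tendsto w atTop (nhds (1 / α / σ1)) := by
    have hσw : Tendsto (fun t => σ1 * w t) atTop (nhds (1/α)) := by
      have hrhs : Tendsto (fun t => K * Real.exp (-(α * t)) + 1/α - R t) atTop (nhds (1/α)) := by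
        have h1 : Tendsto (fun t => K * Real.exp (-(α * t))) atTop (nhds 0) :=
          by simpa using (hexp0 α hα).const_mul K
        have := (h1.add_const (1/α)).sub hR0
        simpa using this
      refine hrhs.congr' ?_
      filter_upwards [eventually_ge_atTop (0:ℝ)] with t ht
      have := hsplit t ht
      linarith
    have := hσw.const_mul σ1⁻¹
    simp only [← mul_assoc, inv_mul_cancel₀ hσpos.ne', one_mul] at this
    convert this using 2
    rw [div_eq_mul_inv, mul_comm]
  have heq : (fun t => x 0 i * (w t) ^ (d i / d1)) =ᶠ[atTop]
      (fun t => x t i * Real.exp (α * (1 - d i / d1) * t)) := by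
    filter_upwards [eventually_ge_atTop (0:ℝ)] with t ht
    symm
    rw [hxclosed i t ht, Real.rpow_def_of_pos (hwpos t), Real.log_exp,
      mul_assoc, ← Real.exp_add]
    congr 2
    field_simp
    ring
  have hlim : Tendsto (fun t => x 0 i * (w t) ^ (d i / d1)) atTop
      (nhds (x 0 i * (1 / α / σ1) ^ (d i / d1))) :=
    (hwtend.rpow_const (Or.inr (hγnn i))).const_mul (x 0 i)
  have hval : (1 / α / σ1 : ℝ) ^ (d i / d1) = (α * σ1) ^ (-(d i / d1)) := by
    have h1 : (1 / α / σ1 : ℝ) = (α * σ1)⁻¹ := by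
      field_simp
    have h0 : (0:ℝ) ≤ α * σ1 := (mul_pos hα hσpos).le
    rw [h1, Real.inv_rpow h0, ← Real.rpow_neg h0]
  rw [← hval]
  exact hlim.congr' heq
end

section
/- Let x be a solution of the EigenAnt dynamics with positive initial conditions, assume at least one index j has d_j < d_1, and let i be an index with d_i = d_1. Define σ_1 := (1/(β d_1)) Σ_{j : d_j = d_1} x_j(0), d′_2 := max{ d_j : d_j < d_1 }, and σ_2 := (1/(β d′_2)) Σ_{j : d_j = d′_2} x_j(0). Then ( x_i(t) − x_i(0)/(α σ_1) ) · e^{α(1 − d′_2/d_1) t} → − x_i(0) (σ_2/σ_1) (α σ_1)^{−d′_2/d_1} as t → +∞. -/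
open Filter MeasureTheory Set Real

set_option maxHeartbeats 1000000 in
theorem stmt17
    (n : ℕ) (hn : 0 < n) (α β : ℝ) (hα : 0 < α) (hβ : 0 < β)
    (d : Fin n → ℝ) (hd : ∀ i j : Fin n, i ≤ j → d j ≤ d i) (hdpos : ∀ i, 0 < d i)
    (x : ℝ → Fin n → ℝ)
    (hS : ∀ t : ℝ, 0 ≤ t → (∑ j, x t j) ≠ 0)
    (hode : ∀ (i : Fin n) (t : ℝ), 0 ≤ t →
      HasDerivAt (fun s => x s i) ((-α + β * d i / (∑ j, x t j)) * x t i) t)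
    (hx0 : ∀ i, 0 < x 0 i)
    (hsub : ∃ j, d j < d ⟨0, hn⟩)
    (i : Fin n) (hi : d i = d ⟨0, hn⟩)
    (σ1 σ2 d2 : ℝ)
    (hσ1 : σ1 = (1 / (β * d ⟨0, hn⟩)) * ∑ j ∈ Finset.univ.filter (fun j => d j = d ⟨0, hn⟩), x 0 j)
    (hd2mem : ∃ j, d j = d2) (hd2lt : d2 < d ⟨0, hn⟩)
    (hd2max : ∀ j, d j < d ⟨0, hn⟩ → d j ≤ d2)
    (hσ2 : σ2 = (1 / (β * d2)) * ∑ j ∈ Finset.univ.filter (fun j => d j = d2), x 0 j) :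
    Tendsto (fun t => (x t i - x 0 i / (α * σ1)) * Real.exp (α * (1 - d2 / d ⟨0, hn⟩) * t))
      atTop (nhds (-(x 0 i) * (σ2 / σ1) * (α * σ1) ^ (-(d2 / d ⟨0, hn⟩)))) := by
  have hne : Nonempty (Fin n) := ⟨⟨0, hn⟩⟩
  set d1 : ℝ := d ⟨0, hn⟩ with hd1def
  have hd1pos : 0 < d1 := hdpos _
  have hd2pos : 0 < d2 := by obtain ⟨j, hj⟩ := hd2mem; exact hj ▸ hdpos j
  have hd1top : ∀ j, d j ≤ d1 := fun j => hd ⟨0, hn⟩ j (by simp [Fin.le_def])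
  -- a helper: decaying exponentials
  have hexp0 : ∀ c : ℝ, 0 < c → Tendsto (fun t : ℝ => Real.exp (-(c * t))) atTop (nhds 0) := by
    intro c hc
    exact Real.tendsto_exp_atBot.comp
      (tendsto_neg_atTop_atBot.comp (Tendsto.const_mul_atTop hc tendsto_id))
  set S : ℝ → ℝ := fun t => ∑ j, x t j with hSdef
  have hSderiv : ∀ t : ℝ, 0 ≤ t →
      HasDerivAt S (∑ j, (-α + β * d j / S t) * x t j) t := by
    intro t ht
    exact HasDerivAt.fun_sum fun j _ => hode j t ht
  have hScont : ∀ t : ℝ, 0 ≤ t → ContinuousAt S t := fun t ht => (hSderiv t ht).continuousAt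
  have hS0 : 0 < S 0 := Finset.sum_pos (fun j _ => hx0 j) Finset.univ_nonempty
  have hSpos : ∀ t : ℝ, 0 ≤ t → 0 < S t := by
    intro t ht
    rcases lt_or_ge 0 (S t) with h | h
    · exact h
    · exfalso
      have hlt : S t < 0 := lt_of_le_of_ne h (hS t ht)
      have hcont : ContinuousOn S (Icc 0 t) := fun s hs => (hScont s hs.1).continuousWithinAt
      have h0 : (0 : ℝ) ∈ Icc (S t) (S 0) := ⟨le_of_lt hlt, le_of_lt hS0⟩
      obtain ⟨c, hc, hc0⟩ := intermediate_value_Icc' ht hcont h0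
      exact hS c hc.1 hc0
  set St : ℝ → ℝ := fun t => S (max t 0) with hStdef
  have hStpos : ∀ t, 0 < St t := fun t => hSpos _ (le_max_right _ _)
  have hStS : ∀ t : ℝ, 0 ≤ t → St t = S t := fun t ht => by
    simp only [hStdef, max_eq_left ht]
  have hStcont : Continuous St := by
    have h1 : ContinuousOn S (Ici 0) := fun s hs => (hScont s hs).continuousWithinAt
    exact h1.comp_continuous (continuous_id.max continuous_const) fun s => le_max_right s 0
  have hinv : Continuous fun s => (St s)⁻¹ := hStcont.inv₀ fun s => (hStpos s).ne'
  set w : ℝ → ℝ := fun t => β * ∫ s in (0:ℝ)..t, (St s)⁻¹ with hwdef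
  have hwderiv : ∀ t, HasDerivAt w (β * (St t)⁻¹) t := by
    intro t
    exact (intervalIntegral.integral_hasDerivAt_right (hinv.intervalIntegrable _ _)
      (hinv.stronglyMeasurableAtFilter _ _) hinv.continuousAt).const_mul β
  have hw0 : w 0 = 0 := by simp [hwdef]
  have hwnn : ∀ t : ℝ, 0 ≤ t → 0 ≤ w t := by
    intro t ht
    have : 0 ≤ ∫ s in (0:ℝ)..t, (St s)⁻¹ :=
      intervalIntegral.integral_nonneg ht fun u _ => le_of_lt (inv_pos.2 (hStpos u))
    positivity
  -- closed form for solutions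
  have hxeq : ∀ (j : Fin n) (t : ℝ), 0 ≤ t →
      x t j = x 0 j * Real.exp (d j * w t - α * t) := by
    intro j t ht
    have hφ' : ∀ s : ℝ, 0 ≤ s →
        HasDerivAt (fun u => x u j * Real.exp (α * u - d j * w u)) 0 s := by
      intro s hs
      have h1 : HasDerivAt (fun u : ℝ => α * u - d j * w u) (α - d j * (β * (St s)⁻¹)) s := by
        simpa using ((hasDerivAt_id s).const_mul α).fun_sub ((hwderiv s).const_mul (d j))
      have h2 : HasDerivAt (fun u : ℝ => Real.exp (α * u - d j * w u))
          (Real.exp (α * s - d j * w s) * (α - d j * (β * (St s)⁻¹))) s := h1.exp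
      have h3 := (hode j s hs).fun_mul h2
      refine h3.congr_deriv ?_
      rw [hStS s hs]
      have hSne : S s ≠ 0 := (hSpos s hs).ne'
      simp only [hSdef] at hSne ⊢
      field_simp
      ring
    have hconst : x t j * Real.exp (α * t - d j * w t) = x 0 j * Real.exp (α * 0 - d j * w 0) :=
      constant_of_has_deriv_right_zero
        (f := fun u => x u j * Real.exp (α * u - d j * w u))
        (fun s hs => ((hφ' s hs.1).continuousAt).continuousWithinAt)
        (fun s hs => (hφ' s hs.1).hasDerivWithinAt) t ⟨ht, le_rfl⟩
    rw [hw0] at hconst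
    norm_num at hconst
    have haux : Real.exp (α * t - d j * w t) * Real.exp (d j * w t - α * t) = 1 := by
      rw [← Real.exp_add, show α * t - d j * w t + (d j * w t - α * t) = 0 by ring, Real.exp_zero]
    calc x t j = x t j * (Real.exp (α * t - d j * w t) * Real.exp (d j * w t - α * t)) := by
          rw [haux, mul_one]
      _ = x t j * Real.exp (α * t - d j * w t) * Real.exp (d j * w t - α * t) := by ring
      _ = x 0 j * Real.exp (d j * w t - α * t) := by rw [hconst]
  -- conservation law
  set Cc : ℝ := (∑ j, x 0 j / (β * d j)) - 1 / α with hCcdef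
  have hg' : ∀ s : ℝ, 0 ≤ s → HasDerivAt
      (fun u => (∑ j, x 0 j / (β * d j) * Real.exp (d j * w u)) - Real.exp (α * u) / α) 0 s := by
    intro s hs
    have hsum : HasDerivAt (fun u => ∑ j, x 0 j / (β * d j) * Real.exp (d j * w u))
        (∑ j, x 0 j / (β * d j) * (Real.exp (d j * w s) * (d j * (β * (St s)⁻¹)))) s := by
      refine HasDerivAt.fun_sum fun j _ => ?_
      exact (((hwderiv s).const_mul (d j)).exp).const_mul (x 0 j / (β * d j))
    have hexp : HasDerivAt (fun u => Real.exp (α * u) / α) (Real.exp (α * s) * α / α) s := by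
      have h1 : HasDerivAt (fun u : ℝ => α * u) α s := by
        simpa using (hasDerivAt_id s).const_mul α
      exact (h1.exp).div_const α
    have h3 := hsum.fun_sub hexp
    refine h3.congr_deriv ?_
    have hSne : (S s) ≠ 0 := (hSpos s hs).ne'
    have hterm : ∀ j : Fin n, x 0 j / (β * d j) * (Real.exp (d j * w s) * (d j * (β * (St s)⁻¹)))
        = x s j * Real.exp (α * s) * (S s)⁻¹ := by
      intro j
      rw [hStS s hs, hxeq j s hs, Real.exp_sub]
      have hdj := (hdpos j).ne'
      have hexpne : Real.exp (α * s) ≠ 0 := Real.exp_ne_zero _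
      field_simp
    have hsum2 : (∑ j, x 0 j / (β * d j) * (Real.exp (d j * w s) * (d j * (β * (St s)⁻¹))))
        = Real.exp (α * s) := by
      calc (∑ j, x 0 j / (β * d j) * (Real.exp (d j * w s) * (d j * (β * (St s)⁻¹))))
          = ∑ j, x s j * (Real.exp (α * s) * (S s)⁻¹) := by
            refine Finset.sum_congr rfl fun j _ => ?_
            rw [hterm j]; ring
        _ = (∑ j, x s j) * (Real.exp (α * s) * (S s)⁻¹) := by rw [← Finset.sum_mul]
        _ = S s * (Real.exp (α * s) * (S s)⁻¹) := rfl
        _ = Real.exp (α * s) := by field_simp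
    rw [hsum2]
    field_simp
    ring
  have hG : ∀ t : ℝ, 0 ≤ t →
      (∑ j, x 0 j / (β * d j) * Real.exp (d j * w t)) = Cc + Real.exp (α * t) / α := by
    intro t ht
    have hconst : (∑ j, x 0 j / (β * d j) * Real.exp (d j * w t)) - Real.exp (α * t) / α
        = (∑ j, x 0 j / (β * d j) * Real.exp (d j * w 0)) - Real.exp (α * 0) / α :=
      constant_of_has_deriv_right_zero
        (f := fun u => (∑ j, x 0 j / (β * d j) * Real.exp (d j * w u)) - Real.exp (α * u) / α)
        (fun s hs => ((hg' s hs.1).continuousAt).continuousWithinAt)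
        (fun s hs => (hg' s hs.1).hasDerivWithinAt) t ⟨ht, le_rfl⟩
    rw [hw0] at hconst
    norm_num at hconst
    rw [hCcdef]
    linarith [hconst, one_div α]
  set A : Finset (Fin n) := Finset.univ.filter (fun j => d j = d1) with hAdef
  set R : ℝ → ℝ := fun t => ∑ j ∈ Aᶜ, x 0 j / (β * d j) * Real.exp (d j * w t) with hRdef
  have hσ1pos : 0 < σ1 := by
    rw [hσ1]
    have hmem : i ∈ A := by simp [hAdef, Finset.mem_filter, hi]
    have hsum : 0 < ∑ j ∈ A, x 0 j := Finset.sum_pos (fun j _ => hx0 j) ⟨i, hmem⟩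
    positivity
  have hσ2pos : 0 < σ2 := by
    obtain ⟨j, hj⟩ := hd2mem
    rw [hσ2]
    have hmem : j ∈ Finset.univ.filter (fun k => d k = d2) := by
      simp [Finset.mem_filter, hj]
    have hsum : 0 < ∑ k ∈ Finset.univ.filter (fun k => d k = d2), x 0 k :=
      Finset.sum_pos (fun k _ => hx0 k) ⟨j, hmem⟩
    positivity
  have hsplit : ∀ t : ℝ, 0 ≤ t →
      σ1 * Real.exp (d1 * w t) + R t = Cc + Real.exp (α * t) / α := by
    intro t ht
    have h1 := hG t ht
    rw [← Finset.sum_add_sum_compl A (fun j => x 0 j / (β * d j) * Real.exp (d j * w t))] at h1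
    have h2 : ∑ j ∈ A, x 0 j / (β * d j) * Real.exp (d j * w t) = σ1 * Real.exp (d1 * w t) := by
      calc ∑ j ∈ A, x 0 j / (β * d j) * Real.exp (d j * w t)
          = ∑ j ∈ A, x 0 j * (1 / (β * d1) * Real.exp (d1 * w t)) := by
            refine Finset.sum_congr rfl fun j hj => ?_
            have hjd : d j = d1 := by simpa [hAdef, Finset.mem_filter] using hj
            rw [hjd]; ring
        _ = σ1 * Real.exp (d1 * w t) := by
            rw [← Finset.sum_mul, hσ1]; ring
    rw [h2] at h1
    exact h1
  set r : ℝ := d2 / d1 with hrdef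
  have hrpos : 0 < r := div_pos hd2pos hd1pos
  have hrlt : r < 1 := (div_lt_one hd1pos).2 hd2lt
  have hRnn : ∀ t : ℝ, 0 ≤ t → 0 ≤ R t := by
    intro t ht
    refine Finset.sum_nonneg fun j _ => ?_
    have := hx0 j; have := hdpos j; positivity
  have hPpos : ∀ t : ℝ, 0 ≤ t → 0 < Cc + Real.exp (α * t) / α := by
    intro t ht
    rw [← hsplit t ht]
    have h1 : 0 < σ1 * Real.exp (d1 * w t) := by positivity
    linarith [hRnn t ht]
  have hdAc : ∀ j, j ∈ Aᶜ → d j ≤ d2 := by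
    intro j hj
    have : d j ≠ d1 := by simpa [hAdef, Finset.mem_filter] using hj
    exact hd2max j (lt_of_le_of_ne (hd1top j) this)
  -- w tends to infinity
  have hwtop : Tendsto w atTop atTop := by
    rw [tendsto_atTop]
    intro M
    have hexp : Tendsto (fun t : ℝ => Cc + Real.exp (α * t) / α) atTop atTop := by
      refine tendsto_atTop_add_const_left _ Cc ?_
      refine Tendsto.atTop_div_const hα ?_
      exact Real.tendsto_exp_atTop.comp (Tendsto.const_mul_atTop hα tendsto_id)
    have hGM := hexp.eventually_gt_atTop (∑ j, x 0 j / (β * d j) * Real.exp (d j * M))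
    filter_upwards [hGM, eventually_ge_atTop (0 : ℝ)] with t h1 h2
    by_contra hlt
    push_neg at hlt
    have hmono : (∑ j, x 0 j / (β * d j) * Real.exp (d j * w t))
        ≤ ∑ j, x 0 j / (β * d j) * Real.exp (d j * M) := by
      refine Finset.sum_le_sum fun j _ => ?_
      have h5 : d j * w t ≤ d j * M := mul_le_mul_of_nonneg_left hlt.le (hdpos j).le
      have h3 := hx0 j; have h4 := hdpos j
      have h6 : (0 : ℝ) ≤ x 0 j / (β * d j) := by positivity
      exact mul_le_mul_of_nonneg_left (Real.exp_le_exp.2 h5) h6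
    rw [hG t h2] at hmono
    exact absurd hmono (not_le.2 h1)
  -- R t * exp (-(α t)) → 0
  have hR0 : Tendsto (fun t => R t * Real.exp (-(α * t))) atTop (nhds 0) := by
    set K : ℝ := ∑ j ∈ Aᶜ, x 0 j / (β * d j) with hKdef
    have hKnn : 0 ≤ K :=
      Finset.sum_nonneg fun j _ => by have := hx0 j; have := hdpos j; positivity
    have hbound : ∀ t : ℝ, 0 ≤ t → R t * Real.exp (-(α * t))
        ≤ K * (((Cc + Real.exp (α * t) / α) / σ1) ^ r * Real.exp (-(α * t))) := by
      intro t ht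
      have hexpd1 : Real.exp (d1 * w t) ≤ (Cc + Real.exp (α * t) / α) / σ1 := by
        rw [le_div_iff₀ hσ1pos]
        have := hsplit t ht
        have := hRnn t ht
        linarith
      have hRle : R t ≤ K * ((Cc + Real.exp (α * t) / α) / σ1) ^ r := by
        rw [hKdef, Finset.sum_mul]
        refine Finset.sum_le_sum fun j hj => ?_
        have h1 : Real.exp (d j * w t) ≤ Real.exp (d2 * w t) :=
          Real.exp_le_exp.2 (mul_le_mul_of_nonneg_right (hdAc j hj) (hwnn t ht))
        have h2 : Real.exp (d2 * w t) = Real.exp (d1 * w t) ^ r := by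
          rw [← Real.exp_mul]
          congr 1
          rw [hrdef]
          field_simp
        have h3 : Real.exp (d1 * w t) ^ r ≤ ((Cc + Real.exp (α * t) / α) / σ1) ^ r :=
          Real.rpow_le_rpow (Real.exp_nonneg _) hexpd1 hrpos.le
        have hc : 0 ≤ x 0 j / (β * d j) := by
          have := hx0 j; have := hdpos j; positivity
        exact mul_le_mul_of_nonneg_left (h1.trans (h2 ▸ h3)) hc
      calc R t * Real.exp (-(α * t))
          ≤ (K * ((Cc + Real.exp (α * t) / α) / σ1) ^ r) * Real.exp (-(α * t)) :=
            mul_le_mul_of_nonneg_right hRle (Real.exp_nonneg _)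
        _ = K * (((Cc + Real.exp (α * t) / α) / σ1) ^ r * Real.exp (-(α * t))) := by ring
    have hQ0 : Tendsto (fun t => (Cc + Real.exp (α * t) / α) / σ1 * Real.exp (-(α / r * t)))
        atTop (nhds 0) := by
      have h1 : Tendsto (fun t : ℝ => Cc / σ1 * Real.exp (-(α / r * t))) atTop (nhds 0) := by
        have := (hexp0 (α / r) (by positivity)).const_mul (Cc / σ1)
        simpa using this
      have h2 : Tendsto (fun t : ℝ => Real.exp ((α - α / r) * t) / (α * σ1)) atTop (nhds 0) := by
        have hneg : 0 < α / r - α := by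
          have : α < α / r := by
            rw [lt_div_iff₀ hrpos]
            nlinarith
          linarith
        have := (hexp0 (α / r - α) hneg).div_const (α * σ1)
        have heq : (fun t : ℝ => Real.exp (-((α / r - α) * t)) / (α * σ1))
            = fun t : ℝ => Real.exp ((α - α / r) * t) / (α * σ1) := by
          funext t; congr 1; congr 1; ring
        rw [heq] at this
        simpa using this
      have heq2 : ∀ t : ℝ, (Cc + Real.exp (α * t) / α) / σ1 * Real.exp (-(α / r * t))
          = Cc / σ1 * Real.exp (-(α / r * t)) + Real.exp ((α - α / r) * t) / (α * σ1) := by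
        intro t
        rw [show (α - α / r) * t = α * t + -(α / r * t) by ring, Real.exp_add]
        field_simp
      have := h1.add h2
      rw [show (0 : ℝ) + 0 = 0 by ring] at this
      exact this.congr fun t => (heq2 t).symm
    have hQr : Tendsto (fun t => ((Cc + Real.exp (α * t) / α) / σ1 * Real.exp (-(α / r * t))) ^ r)
        atTop (nhds 0) := by
      have := hQ0.rpow_const (p := r) (Or.inr hrpos.le)
      rwa [Real.zero_rpow hrpos.ne'] at this
    have hQlim : Tendsto (fun t => ((Cc + Real.exp (α * t) / α) / σ1) ^ r * Real.exp (-(α * t)))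
        atTop (nhds 0) := by
      refine hQr.congr' ?_
      filter_upwards [eventually_ge_atTop (0 : ℝ)] with t ht
      have hP : 0 ≤ (Cc + Real.exp (α * t) / α) / σ1 := (div_pos (hPpos t ht) hσ1pos).le
      rw [Real.mul_rpow hP (Real.exp_nonneg _), ← Real.exp_mul,
        show -(α / r * t) * r = -(α * t) by field_simp]
    have hKQ : Tendsto (fun t => K * (((Cc + Real.exp (α * t) / α) / σ1) ^ r
        * Real.exp (-(α * t)))) atTop (nhds 0) := by
      have := hQlim.const_mul K
      simpa using this
    refine squeeze_zero' ?_ ?_ hKQ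
    · filter_upwards [eventually_ge_atTop (0 : ℝ)] with t ht
      have := hRnn t ht
      positivity
    · filter_upwards [eventually_ge_atTop (0 : ℝ)] with t ht
      exact hbound t ht
  -- main limit for exp (d1 w t) exp (-α t)
  set E : ℝ → ℝ := fun t => Real.exp (d1 * w t) * Real.exp (-(α * t)) with hEdef
  have hE0 : Tendsto E atTop (nhds (1 / (α * σ1))) := by
    have hlim : Tendsto (fun t => (Cc * Real.exp (-(α * t)) + 1 / α - R t * Real.exp (-(α * t))) / σ1)
        atTop (nhds ((Cc * 0 + 1 / α - 0) / σ1)) := by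
      refine Tendsto.div_const ?_ σ1
      exact (((hexp0 α hα).const_mul Cc).add tendsto_const_nhds).sub hR0
    have hval : (Cc * 0 + 1 / α - 0) / σ1 = 1 / (α * σ1) := by
      rw [mul_zero]; field_simp; ring
    rw [hval] at hlim
    refine hlim.congr' ?_
    filter_upwards [eventually_ge_atTop (0 : ℝ)] with t ht
    have h1 := hsplit t ht
    have h2 : Real.exp (d1 * w t) = (Cc + Real.exp (α * t) / α - R t) / σ1 := by
      rw [eq_div_iff hσ1pos.ne']
      linarith
    show (Cc * Real.exp (-(α * t)) + 1 / α - R t * Real.exp (-(α * t))) / σ1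
        = Real.exp (d1 * w t) * Real.exp (-(α * t))
    rw [h2, Real.exp_neg]
    have hexpne : Real.exp (α * t) ≠ 0 := Real.exp_ne_zero _
    field_simp
  have hEr : Tendsto (fun t => Real.exp (d2 * w t) * Real.exp (-(α * r * t))) atTop
      (nhds ((α * σ1) ^ (-r))) := by
    have heq : ∀ t : ℝ, Real.exp (d2 * w t) * Real.exp (-(α * r * t)) = E t ^ r := by
      intro t
      have h1 : d2 * w t = d1 * w t * r := by
        rw [hrdef]; field_simp
      have h2 : -(α * r * t) = -(α * t) * r := by ring
      rw [hEdef]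
      show Real.exp (d2 * w t) * Real.exp (-(α * r * t))
          = (Real.exp (d1 * w t) * Real.exp (-(α * t))) ^ r
      rw [Real.mul_rpow (Real.exp_nonneg _) (Real.exp_nonneg _),
        ← Real.exp_mul, ← Real.exp_mul, ← h1, ← h2]
    have h3 : (1 / (α * σ1)) ^ r = (α * σ1) ^ (-r) := by
      rw [Real.rpow_neg (by positivity), one_div, Real.inv_rpow (by positivity)]
    have h4 := hE0.rpow_const (p := r) (Or.inl (by positivity))
    rw [h3] at h4
    exact h4.congr fun t => (heq t).symm
  -- assemble the final limit
  have hlimsum : Tendsto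
      (fun t => ∑ j ∈ Aᶜ, x 0 j / (β * d j) * (Real.exp (d j * w t) * Real.exp (-(α * r * t))))
      atTop
      (nhds (∑ j ∈ Aᶜ, if d j = d2 then x 0 j / (β * d j) * ((α * σ1) ^ (-r)) else 0)) := by
    refine tendsto_finset_sum _ fun j hj => ?_
    by_cases hcase : d j = d2
    · rw [if_pos hcase]
      have := hEr.const_mul (x 0 j / (β * d j))
      refine this.congr fun t => ?_
      rw [hcase]
    · rw [if_neg hcase]
      have hlt : d j < d2 := lt_of_le_of_ne (hdAc j hj) hcase
      have h1 : Tendsto (fun t => Real.exp ((d j - d2) * w t)) atTop (nhds 0) := by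
        have hneg : 0 < d2 - d j := by linarith
        have h2 : Tendsto (fun u : ℝ => Real.exp ((d j - d2) * u)) atTop (nhds 0) := by
          have := hexp0 (d2 - d j) hneg
          refine this.congr fun u => ?_
          congr 1; ring
        exact h2.comp hwtop
      have h2 := (h1.mul hEr).const_mul (x 0 j / (β * d j))
      rw [show x 0 j / (β * d j) * (0 * (α * σ1) ^ (-r)) = 0 by ring] at h2
      refine h2.congr fun t => ?_
      have e : Real.exp ((d j - d2) * w t) * (Real.exp (d2 * w t) * Real.exp (-(α * r * t)))
          = Real.exp (d j * w t) * Real.exp (-(α * r * t)) := by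
        rw [← mul_assoc, ← Real.exp_add, show (d j - d2) * w t + d2 * w t = d j * w t by ring]
      rw [e]
  have hCclim : Tendsto (fun t => Cc * Real.exp (-(α * r * t))) atTop (nhds 0) := by
    have h := (hexp0 (α * r) (by positivity)).const_mul Cc
    rw [mul_zero] at h
    exact h
  have hval : (∑ j ∈ Aᶜ, if d j = d2 then x 0 j / (β * d j) * ((α * σ1) ^ (-r)) else 0)
      = σ2 * (α * σ1) ^ (-r) := by
    classical
    rw [Finset.sum_ite, Finset.sum_const_zero, add_zero]
    have hsets : Aᶜ.filter (fun j => d j = d2) = Finset.univ.filter (fun j => d j = d2) := by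
      ext j
      constructor
      · intro hj
        exact Finset.mem_filter.2 ⟨Finset.mem_univ j, (Finset.mem_filter.1 hj).2⟩
      · intro hj
        have h2 : d j = d2 := (Finset.mem_filter.1 hj).2
        refine Finset.mem_filter.2 ⟨Finset.mem_compl.2 ?_, h2⟩
        intro hmem
        have h1 : d j = d1 := by
          have := Finset.mem_filter.1 (hAdef ▸ hmem)
          exact this.2
        exact hd2lt.ne (h2.symm.trans h1)
    rw [hsets]
    calc ∑ j ∈ Finset.univ.filter (fun j => d j = d2), x 0 j / (β * d j) * ((α * σ1) ^ (-r))
        = ∑ j ∈ Finset.univ.filter (fun j => d j = d2),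
            x 0 j * ((α * σ1) ^ (-r) * (1 / (β * d2))) := by
          refine Finset.sum_congr rfl fun j hj => ?_
          have : d j = d2 := by simpa using hj
          rw [this]; ring
      _ = σ2 * (α * σ1) ^ (-r) := by
          rw [← Finset.sum_mul, hσ2]; ring
  have hfinal : Tendsto (fun t => (x 0 i / σ1) * (Cc * Real.exp (-(α * r * t)) -
      ∑ j ∈ Aᶜ, x 0 j / (β * d j) * (Real.exp (d j * w t) * Real.exp (-(α * r * t)))))
      atTop (nhds ((x 0 i / σ1) * (0 - σ2 * (α * σ1) ^ (-r)))) := by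
    rw [← hval]
    exact (hCclim.sub hlimsum).const_mul _
  have hvfinal : (x 0 i / σ1) * (0 - σ2 * (α * σ1) ^ (-r))
      = -(x 0 i) * (σ2 / σ1) * (α * σ1) ^ (-r) := by
    ring
  rw [hvfinal] at hfinal
  refine hfinal.congr' ?_
  filter_upwards [eventually_ge_atTop (0 : ℝ)] with t ht
  have h1 := hsplit t ht
  have h2 : x t i = x 0 i * Real.exp (d1 * w t - α * t) := by
    rw [hxeq i t ht, hi]
  have hsum : ∑ j ∈ Aᶜ, x 0 j / (β * d j) * (Real.exp (d j * w t) * Real.exp (-(α * r * t)))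
      = R t * Real.exp (-(α * r * t)) := by
    rw [hRdef, Finset.sum_mul]
    exact Finset.sum_congr rfl fun j _ => by ring
  rw [hsum, h2]
  have hCc : Cc = σ1 * Real.exp (d1 * w t) + R t - Real.exp (α * t) / α := by linarith
  rw [hCc]
  have e1 : Real.exp (d1 * w t - α * t) = Real.exp (d1 * w t) * (Real.exp (α * t))⁻¹ := by
    rw [Real.exp_sub, div_eq_mul_inv]
  have e2 : Real.exp (α * (1 - r) * t) = Real.exp (α * t) * (Real.exp (α * r * t))⁻¹ := by
    rw [← Real.exp_neg, ← Real.exp_add]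
    congr 1; ring
  have e3 : Real.exp (-(α * r * t)) = (Real.exp (α * r * t))⁻¹ := Real.exp_neg _
  rw [e1, e2, e3]
  have hq : Real.exp (α * r * t) ≠ 0 := Real.exp_ne_zero _
  have hv : Real.exp (α * t) ≠ 0 := Real.exp_ne_zero _
  field_simp
  ring
end
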